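/- arXiv:2102.06440 — 3 statements merged into one kernel-verified Lean document; each statement's English description precedes it below -/
import Mathlib

section
/- An arrangement (ι,κ) is globally adequate if and only if either (1) every doctor and every hospital has interview capacity exactly one, or (2) every doctor and every hospital has interview capacity at least min{|D|,|H|}. -/
/- Formal model of the two-step interview-then-match process of
Echenique-et-al-style markets: Step 1 computes the interview matching by
hospital-proposing deferred acceptance (with responsive, capacity-constrained
choice functions); Step 2 computes the final one-to-one matching by
doctor-proposing deferred acceptance on preferences restricted to interview
partners. -/

open Finset

section Model

variable {D H : Type*} [Fintype D] [Fintype H] [DecidableEq D] [DecidableEq H]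

/-- The (at most) `n` best elements of `s` according to `rank` (lower rank = better). -/
def topN {α : Type*} [DecidableEq α] (rank : α → ℕ) (n : ℕ) (s : Finset α) : Finset α :=
  s.filter fun x => (s.filter fun y => rank y < rank x).card < n

/-- A market: strict preferences represented by rank functions
(lower rank = more preferred) together with acceptability predicates. -/
structure Market (D H : Type*) where
  rankDH : D → H → ℕ
  accD : D → H → Bool
  rankHD : H → D → ℕ
  accH : H → D → Bool

/-- Strict preferences: rank functions are injective. -/
def Market.Strict (M : Market D H) : Prop :=
  (∀ d, Function.Injective (M.rankDH d)) ∧ (∀ h, Function.Injective (M.rankHD h))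

/-- Hospital `h` proposes to its `ι h` best acceptable doctors that have not rejected it. -/
def hProps (M : Market D H) (ι : H → ℕ) (R : Finset (H × D)) (h : H) : Finset D :=
  topN (M.rankHD h) (ι h) (univ.filter fun d => M.accH h d ∧ (h, d) ∉ R)

/-- Doctor `d` keeps her `κ d` best acceptable proposals. -/
def dKeeps (M : Market D H) (ι : H → ℕ) (κ : D → ℕ) (R : Finset (H × D)) (d : D) :
    Finset H :=
  topN (fun h => M.rankDH d h) (κ d) (univ.filter fun h => M.accD d h ∧ d ∈ hProps M ι R h)

/-- One round of hospital-proposing deferred acceptance: the (cumulative) rejection set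
grows by the proposals not kept. -/
def iStep (M : Market D H) (ι : H → ℕ) (κ : D → ℕ) (R : Finset (H × D)) :
    Finset (H × D) :=
  R ∪ univ.filter fun p : H × D => p.2 ∈ hProps M ι R p.1 ∧ p.1 ∉ dKeeps M ι κ R p.2

/-- Rejection set at the end of hospital-proposing DA (interview step). -/
def iRej (M : Market D H) (ι : H → ℕ) (κ : D → ℕ) : Finset (H × D) :=
  (iStep M ι κ)^[Fintype.card D * Fintype.card H] ∅

/-- The interview matching (the hospital-optimal stable many-to-many matching) computed
by hospital-proposing deferred acceptance: pairs `(h, d)` such that `h` interviews `d`. -/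
def interviews (M : Market D H) (ι : H → ℕ) (κ : D → ℕ) : Finset (H × D) :=
  univ.filter fun p : H × D =>
    p.2 ∈ hProps M ι (iRej M ι κ) p.1 ∧ p.1 ∈ dKeeps M ι κ (iRej M ι κ) p.2

/-- Doctor `d` proposes to her best interview partner that has not rejected her. -/
def dProps (M : Market D H) (V : Finset (H × D)) (S : Finset (D × H)) (d : D) :
    Finset H :=
  topN (M.rankDH d) 1 (univ.filter fun h => (h, d) ∈ V ∧ (d, h) ∉ S)

/-- Hospital `h` keeps its best proposal. -/
def hKeeps (M : Market D H) (V : Finset (H × D)) (S : Finset (D × H)) (h : H) :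
    Finset D :=
  topN (M.rankHD h) 1 (univ.filter fun d => h ∈ dProps M V S d)

/-- One round of doctor-proposing DA on preferences restricted to the interview matching `V`. -/
def mStep (M : Market D H) (V : Finset (H × D)) (S : Finset (D × H)) : Finset (D × H) :=
  S ∪ univ.filter fun p : D × H => p.2 ∈ dProps M V S p.1 ∧ p.1 ∉ hKeeps M V S p.2

/-- Rejection set at the end of the doctor-proposing DA of the matching step. -/
def mRej (M : Market D H) (V : Finset (H × D)) : Finset (D × H) :=
  (mStep M V)^[Fintype.card D * Fintype.card H] ∅

/-- The final matching: doctor-proposing DA on preferences restricted to interviews `V`. -/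
def finalMatch (M : Market D H) (V : Finset (H × D)) : Finset (D × H) :=
  univ.filter fun p : D × H =>
    p.2 ∈ dProps M V (mRej M V) p.1 ∧ p.1 ∈ hKeeps M V (mRej M V) p.2

/-- The `(ι,κ)`-matching: the culmination of the two-step process. -/
def ikMatching (M : Market D H) (ι : H → ℕ) (κ : D → ℕ) : Finset (D × H) :=
  finalMatch M (interviews M ι κ)

/-- `(d, h)` is a blocking pair of `μ` (w.r.t. the true, unrestricted preferences). -/
def Blocks (M : Market D H) (μ : Finset (D × H)) (d : D) (h : H) : Prop :=
  M.accD d h ∧ M.accH h d ∧ (d, h) ∉ μ ∧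
    (∀ h', (d, h') ∈ μ → M.rankDH d h < M.rankDH d h') ∧
    (∀ d', (d', h) ∈ μ → M.rankHD h d < M.rankHD h d')

instance (M : Market D H) (μ : Finset (D × H)) (d : D) (h : H) :
    Decidable (Blocks M μ d h) := by
  unfold Blocks; infer_instance

/-- A matching is stable if it admits no blocking pair. -/
def Stable (M : Market D H) (μ : Finset (D × H)) : Prop := ∀ d h, ¬ Blocks M μ d h

/-- `(ι,κ)` is adequate at `M` if the `(ι,κ)`-matching is stable. -/
def Adequate (M : Market D H) (ι : H → ℕ) (κ : D → ℕ) : Prop :=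
  Stable M (ikMatching M ι κ)

/-- One-to-one matching (as a set of pairs). -/
def IsMatching (μ : Finset (D × H)) : Prop :=
  (∀ d h h', (d, h) ∈ μ → (d, h') ∈ μ → h = h') ∧
    (∀ d d' h, (d, h) ∈ μ → (d', h) ∈ μ → d = d')

/-- Common preferences: all doctors rank the hospitals identically, all hospitals rank
the doctors identically, everyone is mutually acceptable (and preferences are strict). -/
def CommonPrefs (M : Market D H) : Prop :=
  M.Strict ∧ (∀ d d', M.rankDH d = M.rankDH d') ∧ (∀ h h', M.rankHD h = M.rankHD h') ∧
    ∀ d h, M.accD d h ∧ M.accH h d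

/-- Number of hospitals matched under `μ`. -/
def matchedHospitals (μ : Finset (D × H)) : ℕ :=
  (univ.filter fun h : H => ∃ d, (d, h) ∈ μ).card

/-- Number of blocking pairs of `μ`. -/
def blockingCount (M : Market D H) (μ : Finset (D × H)) : ℕ :=
  (univ.filter fun p : D × H => Blocks M μ p.1 p.2).card

end Model

/-- `(ι,κ)` is globally adequate: adequate at every (strict) preference profile. -/
def GloballyAdequate (D H : Type*) [Fintype D] [Fintype H] [DecidableEq D] [DecidableEq H]
    (ι : H → ℕ) (κ : D → ℕ) : Prop :=
  ∀ M : Market D H, M.Strict → Adequate M ι κ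

variable {D H : Type*} [Fintype D] [Fintype H] [DecidableEq D] [DecidableEq H]






namespace topN
variable {α : Type*} [DecidableEq α] {rank : α → ℕ} {n : ℕ} {s : Finset α}

theorem mem_iff {x : α} : x ∈ topN rank n s ↔ x ∈ s ∧ (s.filter fun y => rank y < rank x).card < n := by
  simp [topN]

theorem subset : topN rank n s ⊆ s := filter_subset _ _

theorem eq_self (h : s.card ≤ n) : topN rank n s = s := by
  apply Finset.Subset.antisymm subset
  intro x hx
  rw [mem_iff]
  refine ⟨hx, lt_of_lt_of_le (lt_of_le_of_lt (Finset.card_le_card ?_) (Finset.card_erase_lt_of_mem hx)) h⟩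
  intro z hz
  simp only [mem_filter] at hz
  exact Finset.mem_erase.mpr ⟨fun he => by simp [he] at hz, hz.1⟩

theorem lt_of_not_mem {x y : α} (hx : x ∈ s) (hxn : x ∉ topN rank n s)
    (hy : y ∈ topN rank n s) : rank y < rank x := by
  rw [mem_iff] at hy hxn
  push_neg at hxn
  have hc := hxn hx
  by_contra hle
  push_neg at hle
  have : (s.filter fun z => rank z < rank x) ⊆ (s.filter fun z => rank z < rank y) := by
    intro z hz; simp only [mem_filter] at hz ⊢; exact ⟨hz.1, lt_of_lt_of_le hz.2 hle⟩
  exact absurd (lt_of_le_of_lt (le_trans hc (Finset.card_le_card this)) hy.2) (lt_irrefl _)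

theorem not_mem_of_dominated {x : α} {T : Finset α} (hT : T ⊆ s) (hc : n ≤ T.card)
    (hb : ∀ t ∈ T, rank t < rank x) : x ∉ topN rank n s := by
  rw [mem_iff]
  push_neg
  intro _
  refine le_trans hc (Finset.card_le_card ?_)
  intro t ht; simp only [mem_filter]; exact ⟨hT ht, hb t ht⟩

theorem nonempty (hs : s.Nonempty) (hn : 1 ≤ n) : (topN rank n s).Nonempty := by
  obtain ⟨x, hx, hmin⟩ := s.exists_min_image rank hs
  refine ⟨x, ?_⟩
  rw [mem_iff]
  refine ⟨hx, ?_⟩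
  have : (s.filter fun y => rank y < rank x) = ∅ := by
    rw [filter_eq_empty_iff]
    intro y hy
    exact not_lt.mpr (hmin y hy)
  rw [this]; simp; omega

theorem card_eq (hinj : Set.InjOn rank s) : (topN rank n s).card = min n s.card := by
  classical
  set idx : α → ℕ := fun x => (s.filter fun y => rank y < rank x).card with hidx
  have hinj2 : Set.InjOn idx s := by
    intro a ha b hb hab
    by_contra hne
    rcases lt_or_gt_of_ne (fun h => hne (hinj ha hb h)) with h | h
    · have hsub : insert a (s.filter fun y => rank y < rank a) ⊆ (s.filter fun y => rank y < rank b) := by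
        intro z hz
        rcases Finset.mem_insert.mp hz with rfl | hz
        · simp only [mem_filter]; exact ⟨ha, h⟩
        · simp only [mem_filter] at hz ⊢; exact ⟨hz.1, lt_trans hz.2 h⟩
      have : (s.filter fun y => rank y < rank a).card + 1 ≤ (s.filter fun y => rank y < rank b).card := by
        have := Finset.card_le_card hsub
        rwa [Finset.card_insert_of_notMem (by simp)] at this
      simp only [hidx] at hab; omega
    · have hsub : insert b (s.filter fun y => rank y < rank b) ⊆ (s.filter fun y => rank y < rank a) := by
        intro z hz
        rcases Finset.mem_insert.mp hz with rfl | hz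
        · simp only [mem_filter]; exact ⟨hb, h⟩
        · simp only [mem_filter] at hz ⊢; exact ⟨hz.1, lt_trans hz.2 h⟩
      have : (s.filter fun y => rank y < rank b).card + 1 ≤ (s.filter fun y => rank y < rank a).card := by
        have := Finset.card_le_card hsub
        rwa [Finset.card_insert_of_notMem (by simp)] at this
      simp only [hidx] at hab; omega
  have himage : s.image idx = Finset.range s.card := by
    apply Finset.eq_of_subset_of_card_le
    · intro j hj
      simp only [Finset.mem_image] at hj
      obtain ⟨x, hx, rfl⟩ := hj
      simp only [Finset.mem_range, hidx]
      calc (s.filter fun y => rank y < rank x).card ≤ (s.erase x).card := by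
            apply Finset.card_le_card
            intro z hz
            simp only [mem_filter] at hz
            refine Finset.mem_erase.mpr ⟨?_, hz.1⟩
            intro h; subst h; omega
        _ < s.card := by
            rw [Finset.card_erase_of_mem hx]
            have : 0 < s.card := Finset.card_pos.mpr ⟨x, hx⟩
            omega
    · rw [Finset.card_range, Finset.card_image_of_injOn hinj2]
  have h1 : topN rank n s = s.filter (fun x => idx x < n) := rfl
  have h2 : (topN rank n s).image idx = (s.image idx).filter (fun j => j < n) := by
    rw [h1, Finset.filter_image]
  have h3 : (topN rank n s).card = ((s.image idx).filter (fun j => j < n)).card := by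
    rw [← h2, Finset.card_image_of_injOn (Set.InjOn.mono (by exact_mod_cast subset) hinj2)]
  have h4 : (Finset.range s.card).filter (fun j => j < n) = Finset.range (min n s.card) := by
    ext j
    simp only [Finset.mem_filter, Finset.mem_range, Nat.lt_min]
    tauto
  rw [h3, himage, h4, Finset.card_range]

end topN
open Finset

section Iter
variable {β : Type*} [Fintype β] [DecidableEq β]

theorem iterate_fixed_of_le {f : Finset β → Finset β} (hf : ∀ R, R ⊆ f R)
    {n : ℕ} (hn : Fintype.card β ≤ n) : f ((f^[n]) ∅) = (f^[n]) ∅ := by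
  have key : ∀ j : ℕ, j ≤ ((f^[j]) ∅).card ∨ f ((f^[j]) ∅) = (f^[j]) ∅ := by
    intro j
    induction j with
    | zero => left; simp
    | succ j ih =>
      rcases ih with h | h
      · by_cases hfix : f ((f^[j]) ∅) = (f^[j]) ∅
        · right
          rw [Function.iterate_succ_apply', hfix]
          exact hfix
        · left
          rw [Function.iterate_succ_apply']
          have hss : (f^[j]) ∅ ⊂ f ((f^[j]) ∅) :=
            (Finset.ssubset_iff_subset_ne).mpr ⟨hf _, fun he => hfix he.symm⟩
          have := Finset.card_lt_card hss
          omega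
      · right
        rw [Function.iterate_succ_apply', h]
        exact h
  rcases key n with h | h
  · have h2 : ((f^[n]) ∅).card ≤ Fintype.card β := by
      simpa using Finset.card_le_card ((f^[n]) ∅).subset_univ
    have : (f^[n]) ∅ = Finset.univ := by
      apply Finset.eq_univ_of_card
      have := Finset.card_univ (α := β)
      omega
    rw [this]
    exact Finset.Subset.antisymm (Finset.subset_univ _) (hf _)
  · exact h

theorem iterate_eq_of_fixed {f : Finset β → Finset β} {S : Finset β} {k : ℕ}
    (hk : (f^[k]) ∅ = S) (hfix : f S = S) {n : ℕ} (hn : k ≤ n) : (f^[n]) ∅ = S := by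
  obtain ⟨m, rfl⟩ := Nat.exists_eq_add_of_le hn
  rw [Nat.add_comm, Function.iterate_add_apply, hk]
  induction m with
  | zero => rfl
  | succ m ih => rw [Function.iterate_succ_apply', ih (by omega)]; exact hfix

end Iter
namespace topN
variable {α : Type*} [DecidableEq α] {rank : α → ℕ} {n : ℕ} {s s' : Finset α}

theorem mem_of_subset (hs : s' ⊆ s) {x : α} (hx : x ∈ topN rank n s) (hx' : x ∈ s') :
    x ∈ topN rank n s' := by
  rw [mem_iff] at hx ⊢
  refine ⟨hx', lt_of_le_of_lt (Finset.card_le_card ?_) hx.2⟩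
  intro z hz
  simp only [Finset.mem_filter] at hz ⊢
  exact ⟨hs hz.1, hz.2⟩

theorem card_le (hinj : Set.InjOn rank s) : (topN rank n s).card ≤ n := by
  rw [card_eq hinj]; exact min_le_left _ _

end topN

section Stage1

variable {D H : Type*} [Fintype D] [Fintype H] [DecidableEq D] [DecidableEq H]
variable (M : Market D H) (ι : H → ℕ) (κ : D → ℕ)

/-- The set of hospitals currently proposing to `d` that `d` finds acceptable. -/
def pool (R : Finset (H × D)) (d : D) : Finset H :=
  univ.filter fun h => M.accD d h ∧ d ∈ hProps M ι R h

lemma dKeeps_eq_topN (R : Finset (H × D)) (d : D) :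
    dKeeps M ι κ R d = topN (M.rankDH d) (κ d) (pool M ι R d) := rfl

variable {M ι κ}

lemma subset_iStep (R : Finset (H × D)) : R ⊆ iStep M ι κ R := Finset.subset_union_left

lemma mem_candidates_of_hProps {R : Finset (H × D)} {h : H} {d : D}
    (hd : d ∈ hProps M ι R h) : M.accH h d ∧ (h, d) ∉ R := by
  have := topN.subset hd
  simpa using this

lemma hProps_mono {R R' : Finset (H × D)} (hRR : R ⊆ R') {h : H} {d : D}
    (hd : d ∈ hProps M ι R h) (hnot : (h, d) ∉ R') : d ∈ hProps M ι R' h := by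
  have hc := mem_candidates_of_hProps hd
  refine topN.mem_of_subset ?_ hd (by simp [hc.1, hnot])
  intro d' hd'
  simp only [Finset.mem_filter, Finset.mem_univ, true_and] at hd' ⊢
  exact ⟨hd'.1, fun hmem => hd'.2 (hRR hmem)⟩

lemma mem_pool_of_dKeeps {R : Finset (H × D)} {d : D} {h : H}
    (hd : h ∈ dKeeps M ι κ R d) : M.accD d h ∧ d ∈ hProps M ι R h := by
  rw [dKeeps_eq_topN] at hd
  have := topN.subset hd
  simpa [pool] using this

lemma dKeeps_not_mem_iStep {R : Finset (H × D)} {d : D} {h : H}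
    (hd : h ∈ dKeeps M ι κ R d) : (h, d) ∉ iStep M ι κ R := by
  have hp := mem_pool_of_dKeeps hd
  have hnR := (mem_candidates_of_hProps hp.2).2
  intro hmem
  rcases Finset.mem_union.mp hmem with h1 | h1
  · exact hnR h1
  · simp only [Finset.mem_filter] at h1
    exact h1.2.2 hd

lemma dKeeps_subset_pool_iStep {R : Finset (H × D)} {d : D} :
    dKeeps M ι κ R d ⊆ pool M ι (iStep M ι κ R) d := by
  intro h hd
  have hp := mem_pool_of_dKeeps hd
  have := dKeeps_not_mem_iStep hd
  simp only [pool, Finset.mem_filter, Finset.mem_univ, true_and]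
  exact ⟨hp.1, hProps_mono (subset_iStep R) hp.2 this⟩

/-- The justified-rejection invariant. -/
def Justified (M : Market D H) (ι : H → ℕ) (κ : D → ℕ) (R : Finset (H × D)) : Prop :=
  ∀ h d, (h, d) ∈ R → M.accD d h →
    (dKeeps M ι κ R d).card = κ d ∧
      ∀ h' ∈ dKeeps M ι κ R d, M.rankDH d h' < M.rankDH d h

lemma dominated_dKeeps (hM : M.Strict) {R : Finset (H × D)} {d : D} {T : Finset H} {B : ℕ}
    (hT : T ⊆ pool M ι R d) (hcard : κ d ≤ T.card) (hb : ∀ t ∈ T, M.rankDH d t < B) :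
    (dKeeps M ι κ R d).card = κ d ∧ ∀ h' ∈ dKeeps M ι κ R d, M.rankDH d h' < B := by
  have hinj : Set.InjOn (M.rankDH d) (pool M ι R d) := (hM.1 d).injOn
  constructor
  · rw [dKeeps_eq_topN, topN.card_eq hinj]
    have := Finset.card_le_card hT
    omega
  · intro h' hh'
    by_contra hge
    push_neg at hge
    refine absurd hh' ?_
    rw [dKeeps_eq_topN]
    exact topN.not_mem_of_dominated hT hcard (fun t ht => lt_of_lt_of_le (hb t ht) hge)

lemma justified_iStep (hM : M.Strict) {R : Finset (H × D)} (hJ : Justified M ι κ R) :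
    Justified M ι κ (iStep M ι κ R) := by
  intro h d hmem hacc
  have key : ∃ T, T ⊆ pool M ι R d ∧ κ d ≤ T.card ∧
      (∀ t ∈ T, M.rankDH d t < M.rankDH d h) ∧ T ⊆ dKeeps M ι κ R d := by
    rcases Finset.mem_union.mp hmem with h1 | h1
    · obtain ⟨hc, hb⟩ := hJ h d h1 hacc
      exact ⟨dKeeps M ι κ R d, topN.subset, hc.ge, hb, Finset.Subset.refl _⟩
    · simp only [Finset.mem_filter, Finset.mem_univ, true_and] at h1
      obtain ⟨hprop, hnk⟩ := h1
      have hpool : h ∈ pool M ι R d := by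
        simp [pool, hacc, hprop]
      refine ⟨dKeeps M ι κ R d, topN.subset, ?_, ?_, Finset.Subset.refl _⟩
      · rw [dKeeps_eq_topN] at hnk ⊢
        rw [topN.card_eq ((hM.1 d).injOn)]
        rw [topN.mem_iff] at hnk
        push_neg at hnk
        have h2 := hnk hpool
        have h3 : ((pool M ι R d).filter fun y => M.rankDH d y < M.rankDH d h) ⊆ pool M ι R d :=
          Finset.filter_subset _ _
        have := Finset.card_le_card h3
        omega
      · intro t ht
        rw [dKeeps_eq_topN] at hnk ht
        exact topN.lt_of_not_mem hpool hnk ht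
  obtain ⟨T, hT, hc, hb, hsub⟩ := key
  exact dominated_dKeeps hM (fun t ht => dKeeps_subset_pool_iStep (hsub ht)) hc hb

lemma justified_iRej (hM : M.Strict) : Justified M ι κ (iRej M ι κ) := by
  rw [iRej]
  generalize Fintype.card D * Fintype.card H = n
  induction n with
  | zero => intro h d hmem _; simp at hmem
  | succ n ih =>
    rw [Function.iterate_succ_apply']
    exact justified_iStep hM ih

lemma iRej_fixed : iStep M ι κ (iRej M ι κ) = iRej M ι κ := by
  rw [iRej]
  exact iterate_fixed_of_le (f := iStep M ι κ) subset_iStep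
    (by rw [Fintype.card_prod]; exact le_of_eq (Nat.mul_comm _ _))

lemma mem_interviews_iff {h : H} {d : D} :
    (h, d) ∈ interviews M ι κ ↔ d ∈ hProps M ι (iRej M ι κ) h := by
  constructor
  · intro hm
    simp only [interviews, Finset.mem_filter] at hm
    exact hm.2.1
  · intro hm
    simp only [interviews, Finset.mem_filter, Finset.mem_univ, true_and]
    refine ⟨hm, ?_⟩
    by_contra hnk
    have : (h, d) ∈ iStep M ι κ (iRej M ι κ) := by
      apply Finset.mem_union_right
      simp only [Finset.mem_filter, Finset.mem_univ, true_and]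
      exact ⟨hm, hnk⟩
    rw [iRej_fixed] at this
    exact (mem_candidates_of_hProps hm).2 this

lemma mem_dKeeps_of_interviews {h : H} {d : D} (hm : (h, d) ∈ interviews M ι κ) :
    h ∈ dKeeps M ι κ (iRej M ι κ) d := by
  simp only [interviews, Finset.mem_filter] at hm
  exact hm.2.2

lemma interviews_acc {h : H} {d : D} (hm : (h, d) ∈ interviews M ι κ) :
    M.accD d h ∧ M.accH h d := by
  have h1 := mem_pool_of_dKeeps (mem_dKeeps_of_interviews hm)
  have h2 := mem_candidates_of_hProps (mem_interviews_iff.mp hm)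
  exact ⟨h1.1, h2.1⟩

/-- Many-to-many stability of the interview matching. -/
theorem interviews_stable (hM : M.Strict) {d : D} {h : H}
    (had : M.accD d h) (hah : M.accH h d) (hnot : (h, d) ∉ interviews M ι κ) :
    κ d ≤ (univ.filter fun h' =>
        (h', d) ∈ interviews M ι κ ∧ M.rankDH d h' < M.rankDH d h).card ∨
    ι h ≤ (univ.filter fun d' =>
        (h, d') ∈ interviews M ι κ ∧ M.rankHD h d' < M.rankHD h d).card := by
  set R := iRej M ι κ with hR
  by_cases hrej : (h, d) ∈ R
  · left
    obtain ⟨hc, hb⟩ := justified_iRej hM h d hrej had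
    refine le_trans hc.ge (Finset.card_le_card ?_)
    intro h' hh'
    simp only [Finset.mem_filter, Finset.mem_univ, true_and]
    refine ⟨?_, hb h' hh'⟩
    rw [mem_interviews_iff]
    exact (mem_pool_of_dKeeps hh').2
  · right
    have hcand : d ∈ univ.filter fun d' => M.accH h d' ∧ (h, d') ∉ R := by
      simp [hah, hrej]
    have hnp : d ∉ hProps M ι R h := fun hp => hnot (mem_interviews_iff.mpr hp)
    have hinj : Set.InjOn (M.rankHD h)
        ((univ.filter fun d' => M.accH h d' ∧ (h, d') ∉ R) : Finset D) :=
      (hM.2 h).injOn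
    have hprop_card : ι h ≤ (hProps M ι R h).card := by
      rw [hProps, topN.card_eq hinj]
      rw [hProps, topN.mem_iff] at hnp
      push_neg at hnp
      have h2 := hnp hcand
      have := Finset.card_le_card (Finset.filter_subset
        (fun y => M.rankHD h y < M.rankHD h d)
        (univ.filter fun d' => M.accH h d' ∧ (h, d') ∉ R))
      omega
    refine le_trans hprop_card (Finset.card_le_card ?_)
    intro d' hd'
    simp only [Finset.mem_filter, Finset.mem_univ, true_and]
    refine ⟨mem_interviews_iff.mpr hd', ?_⟩
    exact topN.lt_of_not_mem hcand hnp hd'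

lemma interviews_left_unique {d : D} {h h' : H} (hκ : κ d = 1)
    (h1 : (h, d) ∈ interviews M ι κ) (h2 : (h', d) ∈ interviews M ι κ) (hM : M.Strict) :
    h = h' := by
  have k1 := mem_dKeeps_of_interviews h1
  have k2 := mem_dKeeps_of_interviews h2
  rw [dKeeps_eq_topN] at k1 k2
  have hc : (topN (M.rankDH d) (κ d) (pool M ι (iRej M ι κ) d)).card ≤ 1 := by
    rw [hκ] at *
    exact topN.card_le ((hM.1 d).injOn)
  exact Finset.card_le_one.mp hc h k1 h' k2

lemma interviews_right_unique {h : H} {d d' : D} (hι : ι h = 1)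
    (h1 : (h, d) ∈ interviews M ι κ) (h2 : (h, d') ∈ interviews M ι κ) (hM : M.Strict) :
    d = d' := by
  have k1 := mem_interviews_iff.mp h1
  have k2 := mem_interviews_iff.mp h2
  rw [hProps] at k1 k2
  rw [hι] at k1 k2
  have hc := topN.card_le (rank := M.rankHD h) (n := 1) (s := univ.filter fun d0 => M.accH h d0 ∧ (h, d0) ∉ iRej M ι κ)
    ((hM.2 h).injOn)
  exact Finset.card_le_one.mp hc d k1 d' k2

end Stage1
section Stage2

variable {D H : Type*} [Fintype D] [Fintype H] [DecidableEq D] [DecidableEq H]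

/-- The auxiliary market used to express Step 2 as an instance of Step 1. -/
def M2 (M : Market D H) (V : Finset (H × D)) : Market H D where
  rankDH := M.rankHD
  accD := fun _ _ => true
  rankHD := M.rankDH
  accH := fun d h => decide ((h, d) ∈ V)

variable {M : Market D H} {V : Finset (H × D)}

lemma M2_strict (hM : M.Strict) : (M2 M V).Strict := ⟨hM.2, hM.1⟩

lemma hProps_M2 (S : Finset (D × H)) (d : D) :
    hProps (M2 M V) (fun _ => 1) S d = dProps M V S d := by
  unfold hProps dProps
  congr 1
  apply Finset.filter_congr
  intro h _
  simp [M2]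

lemma dKeeps_M2 (S : Finset (D × H)) (h : H) :
    dKeeps (M2 M V) (fun _ => 1) (fun _ => 1) S h = hKeeps M V S h := by
  unfold dKeeps hKeeps
  congr 1
  apply Finset.filter_congr
  intro d _
  rw [hProps_M2 S d]
  simp [M2]

lemma iStep_M2 (S : Finset (D × H)) :
    iStep (M2 M V) (fun _ => 1) (fun _ => 1) S = mStep M V S := by
  unfold iStep mStep
  congr 1
  apply Finset.filter_congr
  intro p _
  rw [hProps_M2, dKeeps_M2]

lemma iRej_M2 : iRej (M2 M V) (fun _ => 1) (fun _ => 1) = mRej M V := by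
  unfold iRej mRej
  rw [show (iStep (M2 M V) (fun _ => 1) (fun _ => 1)) = mStep M V from funext iStep_M2,
    Nat.mul_comm]

lemma interviews_M2 : interviews (M2 M V) (fun _ => 1) (fun _ => 1) = finalMatch M V := by
  unfold interviews finalMatch
  apply Finset.filter_congr
  intro p _
  rw [hProps_M2, dKeeps_M2, iRej_M2]

lemma finalMatch_mem_V {d : D} {h : H} (hm : (d, h) ∈ finalMatch M V) : (h, d) ∈ V := by
  rw [← interviews_M2] at hm
  have := (interviews_acc hm).2
  simpa [M2] using this

lemma finalMatch_left_unique (hM : M.Strict) {d : D} {h h' : H}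
    (h1 : (d, h) ∈ finalMatch M V) (h2 : (d, h') ∈ finalMatch M V) : h = h' := by
  rw [← interviews_M2] at h1 h2
  exact interviews_right_unique (M := M2 M V) (ι := fun _ => 1) (κ := fun _ => 1) rfl h1 h2 (M2_strict hM)

lemma finalMatch_right_unique (hM : M.Strict) {d d' : D} {h : H}
    (h1 : (d, h) ∈ finalMatch M V) (h2 : (d', h) ∈ finalMatch M V) : d = d' := by
  rw [← interviews_M2] at h1 h2
  exact interviews_left_unique (M := M2 M V) (ι := fun _ => 1) (κ := fun _ => 1) rfl h1 h2 (M2_strict hM)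

/-- Restricted stability of the final matching. -/
theorem finalMatch_stable (hM : M.Strict) {d : D} {h : H} (hV : (h, d) ∈ V)
    (hnot : (d, h) ∉ finalMatch M V) :
    (∃ h', (d, h') ∈ finalMatch M V ∧ M.rankDH d h' < M.rankDH d h) ∨
    (∃ d', (d', h) ∈ finalMatch M V ∧ M.rankHD h d' < M.rankHD h d) := by
  have hs := interviews_stable (M := M2 M V) (ι := fun _ => 1) (κ := fun _ => 1)
    (M2_strict hM) (d := h) (h := d) (by simp [M2]) (by simp [M2, hV])
    (by rwa [interviews_M2])
  rcases hs with h1 | h1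
  · right
    obtain ⟨d', hd'⟩ := Finset.card_pos.mp (lt_of_lt_of_le Nat.zero_lt_one h1)
    simp only [Finset.mem_filter, Finset.mem_univ, true_and] at hd'
    rw [interviews_M2] at hd'
    exact ⟨d', hd'.1, hd'.2⟩
  · left
    obtain ⟨h', hh'⟩ := Finset.card_pos.mp (lt_of_lt_of_le Nat.zero_lt_one h1)
    simp only [Finset.mem_filter, Finset.mem_univ, true_and] at hh'
    rw [interviews_M2] at hh'
    exact ⟨h', hh'.1, hh'.2⟩

end Stage2
section Easy

variable {D H : Type*} [Fintype D] [Fintype H] [DecidableEq D] [DecidableEq H]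
variable {M : Market D H} {ι : H → ℕ} {κ : D → ℕ}

lemma mRej_one (hM : M.Strict) (hκ : ∀ d, κ d = 1) (hι : ∀ h, ι h = 1) :
    mRej M (interviews M ι κ) = ∅ := by
  set V := interviews M ι κ with hV
  have hfix : mStep M V ∅ = ∅ := by
    rw [mStep]
    rw [Finset.union_eq_left.mpr]
    intro p hp
    simp only [Finset.mem_filter, Finset.mem_univ, true_and] at hp
    obtain ⟨hprop, hnk⟩ := hp
    exfalso
    apply hnk
    have hpV : (p.2, p.1) ∈ V := by
      have := topN.subset hprop
      simpa using this
    have hpropers : (univ.filter fun d' => p.2 ∈ dProps M V ∅ d') = {p.1} := by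
      apply Finset.Subset.antisymm
      · intro d' hd'
        simp only [Finset.mem_filter, Finset.mem_univ, true_and] at hd'
        have : (p.2, d') ∈ V := by
          have := topN.subset hd'
          simpa using this
        simp [interviews_right_unique (hι p.2) this hpV hM]
      · intro d' hd'
        simp only [Finset.mem_singleton] at hd'
        subst hd'
        simp only [Finset.mem_filter, Finset.mem_univ, true_and]
        exact hprop
    rw [hKeeps, hpropers]
    rw [topN.eq_self (by simp)]
    simp
  rw [mRej]
  exact iterate_eq_of_fixed (k := 0) rfl hfix (Nat.zero_le _)

lemma final_of_interviews_one (hM : M.Strict) (hκ : ∀ d, κ d = 1) (hι : ∀ h, ι h = 1)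
    {h : H} {d : D} (hm : (h, d) ∈ interviews M ι κ) :
    (d, h) ∈ finalMatch M (interviews M ι κ) := by
  set V := interviews M ι κ with hV
  have hrej := mRej_one hM hκ hι
  have hset : (univ.filter fun h' => (h', d) ∈ V ∧ (d, h') ∉ mRej M V) = {h} := by
    apply Finset.Subset.antisymm
    · intro h' hh'
      simp only [Finset.mem_filter, Finset.mem_univ, true_and] at hh'
      simp [interviews_left_unique (hκ d) hh'.1 hm hM]
    · intro h' hh'
      simp only [Finset.mem_singleton] at hh'
      subst hh'
      simp [hm, hrej]
      rw [hV, hrej]; simp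
  have hdp : h ∈ dProps M V (mRej M V) d := by
    rw [dProps, hset, topN.eq_self (by simp)]
    simp
  have hpropers : (univ.filter fun d' => h ∈ dProps M V (mRej M V) d') = {d} := by
    apply Finset.Subset.antisymm
    · intro d' hd'
      simp only [Finset.mem_filter, Finset.mem_univ, true_and] at hd'
      have h6 := topN.subset hd'
      simp only [Finset.mem_filter, Finset.mem_univ, true_and] at h6
      simp [interviews_right_unique (hι h) h6.1 hm hM]
    · intro d' hd'
      simp only [Finset.mem_singleton] at hd'
      subst hd'
      simp only [Finset.mem_filter, Finset.mem_univ, true_and]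
      exact hdp
  have hk : d ∈ hKeeps M V (mRej M V) h := by
    rw [hKeeps, hpropers, topN.eq_self (by simp)]
    simp
  simp only [finalMatch, Finset.mem_filter, Finset.mem_univ, true_and]
  exact ⟨hdp, hk⟩

theorem adequate_of_one (hM : M.Strict) (hκ : ∀ d, κ d = 1) (hι : ∀ h, ι h = 1) :
    Adequate M ι κ := by
  intro d h hblock
  obtain ⟨had, hah, hnmem, hbd, hbh⟩ := hblock
  by_cases hmem : (h, d) ∈ interviews M ι κ
  · exact hnmem (final_of_interviews_one hM hκ hι hmem)
  · rcases interviews_stable hM had hah hmem with h1 | h1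
    · rw [hκ d] at h1
      obtain ⟨h', hh'⟩ := Finset.card_pos.mp (lt_of_lt_of_le Nat.zero_lt_one h1)
      simp only [Finset.mem_filter, Finset.mem_univ, true_and] at hh'
      have := hbd h' (final_of_interviews_one hM hκ hι hh'.1)
      omega
    · rw [hι h] at h1
      obtain ⟨d', hd'⟩ := Finset.card_pos.mp (lt_of_lt_of_le Nat.zero_lt_one h1)
      simp only [Finset.mem_filter, Finset.mem_univ, true_and] at hd'
      have := hbh d' (final_of_interviews_one hM hκ hι hd'.1)
      omega

theorem adequate_of_min (hM : M.Strict)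
    (hκ : ∀ d, min (Fintype.card D) (Fintype.card H) ≤ κ d)
    (hι : ∀ h, min (Fintype.card D) (Fintype.card H) ≤ ι h) :
    Adequate M ι κ := by
  intro d h hblock
  obtain ⟨had, hah, hnmem, hbd, hbh⟩ := hblock
  set V := interviews M ι κ with hV
  set μ := finalMatch M V with hμ
  by_cases hmem : (h, d) ∈ V
  · rcases finalMatch_stable hM hmem hnmem with ⟨h', hh', hlt⟩ | ⟨d', hd', hlt⟩
    · have := hbd h' hh'; omega
    · have := hbh d' hd'; omega
  · rcases interviews_stable hM had hah hmem with h1 | h1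
    · -- each hospital interviewing d and better than h is matched to a doctor other than d
      set Bd := univ.filter fun h' => (h', d) ∈ V ∧ M.rankDH d h' < M.rankDH d h with hBd
      have hmap : ∀ h' ∈ Bd, ∃ d', (d', h') ∈ μ := by
        intro h' hh'
        simp only [hBd, Finset.mem_filter, Finset.mem_univ, true_and] at hh'
        have hnm : (d, h') ∉ μ := fun hc => by have := hbd h' hc; omega
        rcases finalMatch_stable hM hh'.1 hnm with ⟨h'', hh'', hlt⟩ | ⟨d', hd', _⟩
        · have := hbd h'' hh''; omega
        · exact ⟨d', hd'⟩
      classical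
      set F : H → D := fun h' => if hc : ∃ d', (d', h') ∈ μ then hc.choose else d with hF
      have hFm : ∀ h' ∈ Bd, (F h', h') ∈ μ := by
        intro h' hh'
        have := hmap h' hh'
        simp only [hF, dif_pos this]
        exact this.choose_spec
      have hcard : Bd.card ≤ (univ.erase d).card := by
        apply Finset.card_le_card_of_injOn F
        · intro h' hh'
          refine Finset.mem_erase.mpr ⟨?_, Finset.mem_univ _⟩
          intro he
          have := hFm h' hh'
          rw [he] at this
          simp only [hBd, Finset.mem_coe, Finset.mem_filter, Finset.mem_univ, true_and] at hh'
          have := hbd h' this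
          omega
        · intro a ha b hb hab
          exact finalMatch_left_unique hM (hab ▸ hFm a ha) (hFm b hb)
      have hcard2 : Bd.card ≤ (univ.erase h).card := by
        apply Finset.card_le_card
        intro h' hh'
        simp only [hBd, Finset.mem_filter, Finset.mem_univ, true_and] at hh'
        refine Finset.mem_erase.mpr ⟨?_, Finset.mem_univ _⟩
        intro he; rw [he] at hh'; omega
      rw [Finset.card_erase_of_mem (Finset.mem_univ _), Finset.card_univ] at hcard
      rw [Finset.card_erase_of_mem (Finset.mem_univ _), Finset.card_univ] at hcard2
      have := hκ d
      have h2 : 0 < Fintype.card D := Fintype.card_pos_iff.mpr ⟨d⟩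
      have h3 : 0 < Fintype.card H := Fintype.card_pos_iff.mpr ⟨h⟩
      omega
    · set Bh := univ.filter fun d' => (h, d') ∈ V ∧ M.rankHD h d' < M.rankHD h d with hBh
      have hmap : ∀ d' ∈ Bh, ∃ h', (d', h') ∈ μ := by
        intro d' hd'
        simp only [hBh, Finset.mem_filter, Finset.mem_univ, true_and] at hd'
        have hnm : (d', h) ∉ μ := fun hc => by have := hbh d' hc; omega
        rcases finalMatch_stable hM hd'.1 hnm with ⟨h'', hh'', _⟩ | ⟨d'', hd'', hlt⟩
        · exact ⟨h'', hh''⟩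
        · have := hbh d'' hd''; omega
      classical
      set F : D → H := fun d' => if hc : ∃ h', (d', h') ∈ μ then hc.choose else h with hF
      have hFm : ∀ d' ∈ Bh, (d', F d') ∈ μ := by
        intro d' hd'
        have := hmap d' hd'
        simp only [hF, dif_pos this]
        exact this.choose_spec
      have hcard : Bh.card ≤ (univ.erase h).card := by
        apply Finset.card_le_card_of_injOn F
        · intro d' hd'
          refine Finset.mem_erase.mpr ⟨?_, Finset.mem_univ _⟩
          intro he
          have h5 := hFm d' hd'
          rw [he] at h5
          simp only [hBh, Finset.mem_coe, Finset.mem_filter, Finset.mem_univ, true_and] at hd'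
          have := hbh d' h5
          omega
        · intro a ha b hb hab
          exact finalMatch_right_unique hM (hab ▸ hFm a ha) (hFm b hb)
      have hcard2 : Bh.card ≤ (univ.erase d).card := by
        apply Finset.card_le_card
        intro d' hd'
        simp only [hBh, Finset.mem_filter, Finset.mem_univ, true_and] at hd'
        refine Finset.mem_erase.mpr ⟨?_, Finset.mem_univ _⟩
        intro he; rw [he] at hd'; omega
      rw [Finset.card_erase_of_mem (Finset.mem_univ _), Finset.card_univ] at hcard
      rw [Finset.card_erase_of_mem (Finset.mem_univ _), Finset.card_univ] at hcard2
      have := hι h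
      have h2 : 0 < Fintype.card D := Fintype.card_pos_iff.mpr ⟨d⟩
      have h3 : 0 < Fintype.card H := Fintype.card_pos_iff.mpr ⟨h⟩
      omega

end Easy
namespace topN
variable {α : Type*} [DecidableEq α] {rank : α → ℕ} {n : ℕ} {s : Finset α}

theorem not_mem_zero {x : α} : x ∉ topN rank 0 s := by
  rw [mem_iff]; simp

theorem empty : topN rank n (∅ : Finset α) = ∅ :=
  Finset.subset_empty.mp subset

end topN

section Helpers

/-- An injective rank function whose `m` smallest values are `g 0 < g 1 < ⋯`. -/
noncomputable def presRank {α : Type*} [DecidableEq α] (m : ℕ) (g : Fin m → α) (e : α → ℕ) : α → ℕ :=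
  fun x => if h : ∃ j : Fin m, g j = x then (h.choose : ℕ) else m + e x

variable {α : Type*} [DecidableEq α] {m : ℕ} {g : Fin m → α} {e : α → ℕ}

lemma presRank_apply (hg : Function.Injective g) (j : Fin m) : presRank m g e (g j) = j := by
  have h : ∃ j' : Fin m, g j' = g j := ⟨j, rfl⟩
  rw [presRank, dif_pos h]
  exact congrArg _ (hg h.choose_spec)

lemma presRank_lt (hg : Function.Injective g) (j : Fin m) : presRank m g e (g j) < m := by
  rw [presRank_apply hg]; exact j.isLt

lemma presRank_not_mem {x : α} (hx : ∀ j : Fin m, g j ≠ x) : presRank m g e x = m + e x := by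
  rw [presRank, dif_neg]; push_neg; exact hx

lemma presRank_injective (hg : Function.Injective g) (he : Function.Injective e) :
    Function.Injective (presRank m g e) := by
  intro a b hab
  by_cases ha : ∃ j : Fin m, g j = a
  · obtain ⟨j, rfl⟩ := ha
    by_cases hb : ∃ j' : Fin m, g j' = b
    · obtain ⟨j', rfl⟩ := hb
      rw [presRank_apply hg, presRank_apply hg] at hab
      exact congrArg g (Fin.ext hab)
    · push_neg at hb
      rw [presRank_apply hg, presRank_not_mem hb] at hab
      have := j.isLt; omega
  · push_neg at ha
    by_cases hb : ∃ j' : Fin m, g j' = b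
    · obtain ⟨j', rfl⟩ := hb
      rw [presRank_apply hg, presRank_not_mem ha] at hab
      have := j'.isLt; omega
    · push_neg at hb
      rw [presRank_not_mem ha, presRank_not_mem hb] at hab
      exact he (by omega)

lemma inj2 {a b : α} (h : a ≠ b) : Function.Injective ![a, b] := by
  intro i j hij
  fin_cases i <;> fin_cases j <;> simp_all

end Helpers

section NatRank
variable {α : Type*} [Fintype α] [DecidableEq α]

noncomputable def natRank : α → ℕ := fun a => ((Fintype.equivFin α) a : ℕ)

lemma natRank_injective : Function.Injective (natRank (α := α)) := by
  intro a b hab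
  exact (Fintype.equivFin α).injective (Fin.ext hab)

end NatRank

section ZeroCase

variable {D H : Type*} [Fintype D] [Fintype H] [DecidableEq D] [DecidableEq H]
variable {ι : H → ℕ} {κ : D → ℕ}

theorem not_adequate_zero (y : D) (h0 : H) (hz : κ y = 0 ∨ ι h0 = 0) :
    ∃ M : Market D H, M.Strict ∧ ¬ Adequate M ι κ := by
  classical
  refine ⟨⟨fun _ => natRank, fun d h => decide (d = y ∧ h = h0),
    fun _ => natRank, fun h d => decide (h = h0 ∧ d = y)⟩,
    ⟨fun _ => natRank_injective, fun _ => natRank_injective⟩, ?_⟩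
  set M : Market D H := ⟨fun _ => natRank, fun d h => decide (d = y ∧ h = h0),
    fun _ => natRank, fun h d => decide (h = h0 ∧ d = y)⟩ with hM
  intro hst
  have hno : ∀ h d, (h, d) ∉ interviews M ι κ := by
    intro h d hmem
    have hacc := (interviews_acc hmem).2
    have : h = h0 ∧ d = y := by simpa [hM] using hacc
    obtain ⟨rfl, rfl⟩ := this
    rcases hz with h1 | h1
    · have := mem_dKeeps_of_interviews hmem
      rw [dKeeps, h1] at this
      exact topN.not_mem_zero this
    · have := mem_interviews_iff.mp hmem
      rw [hProps, h1] at this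
      exact topN.not_mem_zero this
  have hnomatch : ∀ d h, (d, h) ∉ ikMatching M ι κ := by
    intro d h hmem
    exact hno h d (finalMatch_mem_V hmem)
  exact hst y h0 ⟨by simp [hM], by simp [hM], hnomatch y h0,
    fun h' hmem => absurd hmem (hnomatch y h'),
    fun d' hmem => absurd hmem (hnomatch d' h0)⟩

end ZeroCase
section MoreHelpers

lemma card_fin_lt {n : ℕ} {i : ℕ} (hi : i ≤ n) :
    (((Finset.univ : Finset (Fin n))).filter (fun j : Fin n => (j : ℕ) < i)).card = i := by
  have h1 : ((Finset.univ : Finset (Fin n)).image Fin.val) = Finset.range n := by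
    ext x
    simp only [Finset.mem_image, Finset.mem_univ, true_and, Finset.mem_range]
    exact ⟨fun ⟨j, hj⟩ => hj ▸ j.isLt, fun hx => ⟨⟨x, hx⟩, rfl⟩⟩
  have h2 : ((Finset.univ : Finset (Fin n)).image Fin.val).filter (fun v => v < i)
      = ((Finset.univ : Finset (Fin n)).filter (fun j : Fin n => (j : ℕ) < i)).image Fin.val :=
    Finset.filter_image
  have h3 : (Finset.range n).filter (fun v => v < i) = Finset.range i := by
    ext x
    simp only [Finset.mem_filter, Finset.mem_range]
    omega
  have := congrArg Finset.card h2
  rw [h1, h3, Finset.card_range, Finset.card_image_of_injective _ Fin.val_injective] at this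
  omega

variable {D H : Type*} [Fintype D] [Fintype H] [DecidableEq D] [DecidableEq H]

lemma mem_dProps_sub {M : Market D H} {V : Finset (H × D)} {S : Finset (D × H)} {d : D} {h : H}
    (hm : h ∈ dProps M V S d) : (h, d) ∈ V ∧ (d, h) ∉ S := by
  have := topN.subset hm
  simpa using this

lemma finalMatch_mem_dProps {M : Market D H} {V : Finset (H × D)} {d : D} {h : H}
    (hm : (d, h) ∈ finalMatch M V) : h ∈ dProps M V (mRej M V) d := by
  simp only [finalMatch, Finset.mem_filter] at hm
  exact hm.2.1

end MoreHelpers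

section ConsA

variable {D H : Type*} [Fintype D] [Fintype H] [DecidableEq D] [DecidableEq H]
variable {ι : H → ℕ} {κ : D → ℕ}

/-- Counterexample market: hospital `hh (last k)` has interview capacity exactly `k`,
wastes all `k` interviews on doctors `dd i` (`i < k`) who prefer `hh i`, and ends up
blocking with `dd (last k)`. -/
noncomputable def MA (k : ℕ) (dd : Fin (k+1) → D) (hh : Fin (k+1) → H) : Market D H where
  rankDH := fun d => if hc : ∃ i : Fin (k+1), (i : ℕ) < k ∧ dd i = d
    then presRank 2 ![hh hc.choose, hh (Fin.last k)] natRank else natRank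
  accD := fun d h => decide ((∃ i : Fin (k+1), (i : ℕ) < k ∧ d = dd i ∧
      (h = hh i ∨ h = hh (Fin.last k))) ∨ (d = dd (Fin.last k) ∧ h = hh (Fin.last k)))
  rankHD := fun h => if h = hh (Fin.last k)
    then presRank (k+1) dd natRank else natRank
  accH := fun h d => decide ((∃ i : Fin (k+1), (i : ℕ) < k ∧ h = hh i ∧ d = dd i) ∨
      (h = hh (Fin.last k) ∧ ∃ i : Fin (k+1), d = dd i))

variable {k : ℕ} {dd : Fin (k+1) → D} {hh : Fin (k+1) → H}
variable (hdd : Function.Injective dd) (hhh : Function.Injective hh)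

lemma fin_ne_last {i : Fin (k+1)} (hi : (i : ℕ) < k) : i ≠ Fin.last k := by
  intro he; rw [he, Fin.val_last] at hi; omega

include hhh in
lemma hh_ne_last {i : Fin (k+1)} (hi : (i : ℕ) < k) : hh i ≠ hh (Fin.last k) :=
  fun he => fin_ne_last hi (hhh he)

include hdd in
lemma dd_ne_last {i : Fin (k+1)} (hi : (i : ℕ) < k) : dd i ≠ dd (Fin.last k) :=
  fun he => fin_ne_last hi (hdd he)

include hdd hhh in
lemma MA_strict : (MA k dd hh).Strict := by
  constructor
  · intro d
    simp only [MA]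
    split
    · next hc =>
      exact presRank_injective (inj2 (hh_ne_last hhh hc.choose_spec.1)) natRank_injective
    · exact natRank_injective
  · intro h
    simp only [MA]
    split
    · exact presRank_injective hdd natRank_injective
    · exact natRank_injective

include hdd hhh in
lemma MA_rankDH_u {i : Fin (k+1)} (hi : (i : ℕ) < k) :
    (MA k dd hh).rankDH (dd i) (hh i) = 0 ∧
    (MA k dd hh).rankDH (dd i) (hh (Fin.last k)) = 1 := by
  have hc : ∃ i' : Fin (k+1), (i' : ℕ) < k ∧ dd i' = dd i := ⟨i, hi, rfl⟩
  have hch : hc.choose = i := hdd hc.choose_spec.2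
  have hne : hh i ≠ hh (Fin.last k) := hh_ne_last hhh hi
  simp only [MA, dif_pos hc, hch]
  constructor
  · have := presRank_apply (e := natRank) (inj2 hne) 0
    simpa using this
  · have := presRank_apply (e := natRank) (inj2 hne) 1
    simpa using this

include hdd in
lemma MA_rankHD_w (j : Fin (k+1)) :
    (MA k dd hh).rankHD (hh (Fin.last k)) (dd j) = (j : ℕ) := by
  simp only [MA, if_pos rfl]
  exact presRank_apply hdd j

-- candidates of hospitals at the empty rejection set
include hhh in
lemma MA_cand_i {i : Fin (k+1)} (hi : (i : ℕ) < k) :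
    (Finset.univ.filter fun d : D => (MA k dd hh).accH (hh i) d ∧ (hh i, d) ∉ (∅ : Finset (H × D)))
      = {dd i} := by
  ext d
  simp only [Finset.mem_filter, Finset.mem_univ, true_and, Finset.notMem_empty,
    not_false_iff, and_true, Finset.mem_singleton, MA, decide_eq_true_eq]
  constructor
  · rintro (⟨i', hi', he, rfl⟩ | ⟨he, _⟩)
    · rw [hhh he]
    · exact absurd he (hh_ne_last hhh hi)
  · rintro rfl
    exact Or.inl ⟨i, hi, rfl, rfl⟩

include hhh in
lemma MA_cand_w :
    (Finset.univ.filter fun d : D =>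
        (MA k dd hh).accH (hh (Fin.last k)) d ∧ (hh (Fin.last k), d) ∉ (∅ : Finset (H × D)))
      = Finset.univ.image dd := by
  ext d
  simp only [Finset.mem_filter, Finset.mem_univ, true_and, Finset.notMem_empty,
    not_false_iff, and_true, Finset.mem_image, MA, decide_eq_true_eq]
  constructor
  · rintro (⟨i', hi', he, rfl⟩ | ⟨i, rfl⟩)
    · exact absurd he.symm (hh_ne_last hhh hi')
    · exact ⟨i, rfl⟩
  · rintro ⟨i, rfl⟩
    exact Or.inr ⟨i, rfl⟩

variable (hι1 : ∀ i, 1 ≤ ι (hh i)) (hιw : ι (hh (Fin.last k)) = k)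

include hhh hι1 in
lemma MA_hProps_i {i : Fin (k+1)} (hi : (i : ℕ) < k) :
    hProps (MA k dd hh) ι (∅ : Finset (H × D)) (hh i) = {dd i} := by
  rw [hProps, MA_cand_i hhh hi, topN.eq_self (by simpa using hι1 i)]

include hdd hhh hιw in
lemma MA_hProps_w {d : D} :
    d ∈ hProps (MA k dd hh) ι (∅ : Finset (H × D)) (hh (Fin.last k)) ↔
      ∃ i : Fin (k+1), (i : ℕ) < k ∧ d = dd i := by
  rw [hProps, MA_cand_w hhh, hιw]
  constructor
  · intro hm
    have hsub := topN.subset hm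
    simp only [Finset.mem_image, Finset.mem_univ, true_and] at hsub
    obtain ⟨j, rfl⟩ := hsub
    refine ⟨j, ?_, rfl⟩
    rw [topN.mem_iff] at hm
    have hfil : ((Finset.univ.image dd).filter
        fun y => (MA k dd hh).rankHD (hh (Fin.last k)) y <
          (MA k dd hh).rankHD (hh (Fin.last k)) (dd j))
        = (Finset.univ.filter fun j' : Fin (k+1) => (j' : ℕ) < (j : ℕ)).image dd := by
      rw [Finset.filter_image]
      congr 1
      apply Finset.filter_congr
      intro j' _
      rw [MA_rankHD_w hdd, MA_rankHD_w hdd]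
    rw [hfil, Finset.card_image_of_injective _ hdd, card_fin_lt (le_of_lt j.isLt)] at hm
    have := hm.2
    omega
  · rintro ⟨i, hi, rfl⟩
    rw [topN.mem_iff]
    refine ⟨by simp, ?_⟩
    have hfil : ((Finset.univ.image dd).filter
        fun y => (MA k dd hh).rankHD (hh (Fin.last k)) y <
          (MA k dd hh).rankHD (hh (Fin.last k)) (dd i))
        = (Finset.univ.filter fun j' : Fin (k+1) => (j' : ℕ) < (i : ℕ)).image dd := by
      rw [Finset.filter_image]
      congr 1
      apply Finset.filter_congr
      intro j' _
      rw [MA_rankHD_w hdd, MA_rankHD_w hdd]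
    rw [hfil, Finset.card_image_of_injective _ hdd, card_fin_lt (le_of_lt i.isLt)]
    exact hi

include hdd hhh hι1 hιw in
lemma MA_pool_u {i : Fin (k+1)} (hi : (i : ℕ) < k) :
    pool (MA k dd hh) ι (∅ : Finset (H × D)) (dd i) = {hh i, hh (Fin.last k)} := by
  ext h
  simp only [pool, Finset.mem_filter, Finset.mem_univ, true_and, Finset.mem_insert,
    Finset.mem_singleton]
  constructor
  · rintro ⟨hacc, _⟩
    simp only [MA, decide_eq_true_eq] at hacc
    rcases hacc with ⟨i', hi', he, hor⟩ | ⟨he, _⟩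
    · rcases hor with rfl | rfl
      · left; rw [hdd he]
      · right; rfl
    · exact absurd he (dd_ne_last hdd hi)
  · rintro (rfl | rfl)
    · refine ⟨by simp only [MA, decide_eq_true_eq]; exact Or.inl ⟨i, hi, rfl, Or.inl rfl⟩, ?_⟩
      rw [MA_hProps_i hhh hι1 hi]
      simp
    · refine ⟨by simp only [MA, decide_eq_true_eq]; exact Or.inl ⟨i, hi, rfl, Or.inr trivial⟩, ?_⟩
      rw [MA_hProps_w hdd hhh hιw]
      exact ⟨i, hi, rfl⟩

variable (hκ2 : ∀ i : Fin (k+1), (i : ℕ) < k → 2 ≤ κ (dd i))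

include hdd hhh hι1 hιw hκ2 in
lemma MA_dKeeps_u {i : Fin (k+1)} (hi : (i : ℕ) < k) :
    dKeeps (MA k dd hh) ι κ (∅ : Finset (H × D)) (dd i) = {hh i, hh (Fin.last k)} := by
  rw [dKeeps_eq_topN, MA_pool_u hdd hhh hι1 hιw hi, topN.eq_self]
  rw [Finset.card_insert_of_notMem (by simp [hh_ne_last hhh hi]), Finset.card_singleton]
  exact hκ2 i hi

include hdd hhh hι1 hιw hκ2 in
lemma MA_iStep_empty : iStep (MA k dd hh) ι κ (∅ : Finset (H × D)) = ∅ := by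
  rw [iStep, Finset.empty_union, Finset.filter_eq_empty_iff]
  rintro ⟨h, d⟩ _
  simp only [not_and, not_not]
  intro hprop
  have hacc := (mem_candidates_of_hProps hprop).1
  simp only [MA, decide_eq_true_eq] at hacc
  rcases hacc with ⟨i, hi, rfl, rfl⟩ | ⟨rfl, _⟩
  · rw [MA_hProps_i hhh hι1 hi] at hprop
    rw [MA_dKeeps_u hdd hhh hι1 hιw hκ2 hi]
    simp
  · rw [MA_hProps_w hdd hhh hιw] at hprop
    obtain ⟨i, hi, rfl⟩ := hprop
    rw [MA_dKeeps_u hdd hhh hι1 hιw hκ2 hi]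
    simp

include hdd hhh hι1 hιw hκ2 in
lemma MA_iRej : iRej (MA k dd hh) ι κ = ∅ := by
  rw [iRej]
  exact iterate_eq_of_fixed (k := 0) rfl (MA_iStep_empty hdd hhh hι1 hιw hκ2) (Nat.zero_le _)

include hdd hhh hι1 hιw hκ2 in
lemma MA_mem_interviews {h : H} {d : D} :
    (h, d) ∈ interviews (MA k dd hh) ι κ ↔
      d ∈ hProps (MA k dd hh) ι (∅ : Finset (H × D)) h := by
  rw [mem_interviews_iff, MA_iRej hdd hhh hι1 hιw hκ2]

include hdd hhh hι1 hιw hκ2 in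
lemma MA_dProps_u {i : Fin (k+1)} (hi : (i : ℕ) < k) (S : Finset (D × H))
    (hS : ∀ h, (dd i, h) ∉ S) :
    dProps (MA k dd hh) (interviews (MA k dd hh) ι κ) S (dd i) = {hh i} := by
  have hset : (Finset.univ.filter fun h : H =>
      (h, dd i) ∈ interviews (MA k dd hh) ι κ ∧ (dd i, h) ∉ S) = {hh i, hh (Fin.last k)} := by
    ext h
    simp only [Finset.mem_filter, Finset.mem_univ, true_and, Finset.mem_insert,
      Finset.mem_singleton]
    rw [MA_mem_interviews hdd hhh hι1 hιw hκ2]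
    constructor
    · rintro ⟨hm, _⟩
      have hacc := (mem_candidates_of_hProps hm).1
      simp only [MA, decide_eq_true_eq] at hacc
      rcases hacc with ⟨i', hi', rfl, he⟩ | ⟨rfl, he⟩
      · rw [MA_hProps_i hhh hι1 hi', Finset.mem_singleton] at hm
        left; rw [hdd hm]
      · right; rfl
    · rintro (rfl | rfl)
      · rw [MA_hProps_i hhh hι1 hi]
        exact ⟨by simp, hS _⟩
      · rw [MA_hProps_w hdd hhh hιw]
        exact ⟨⟨i, hi, rfl⟩, hS _⟩
  rw [dProps, hset]
  ext h
  rw [topN.mem_iff]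
  obtain ⟨hr0, hr1⟩ := MA_rankDH_u hdd hhh hi
  simp only [Finset.mem_insert, Finset.mem_singleton]
  constructor
  · rintro ⟨rfl | rfl, hcard⟩
    · rfl
    · exfalso
      have hmem : hh i ∈ ({hh i, hh (Fin.last k)} : Finset H).filter
          fun y => (MA k dd hh).rankDH (dd i) y < (MA k dd hh).rankDH (dd i) (hh (Fin.last k)) := by
        rw [Finset.mem_filter]
        exact ⟨by simp, by rw [hr0, hr1]; omega⟩
      have := Finset.card_pos.mpr ⟨hh i, hmem⟩
      omega
  · rintro rfl
    refine ⟨Or.inl rfl, ?_⟩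
    have : (({hh i, hh (Fin.last k)} : Finset H).filter
        fun y => (MA k dd hh).rankDH (dd i) y < (MA k dd hh).rankDH (dd i) (hh i)) = ∅ := by
      rw [Finset.filter_eq_empty_iff]
      intro h hmem
      simp only [Finset.mem_insert, Finset.mem_singleton] at hmem
      rcases hmem with rfl | rfl <;> rw [hr0] <;> [omega; (rw [hr1]; omega)]
    rw [this]
    simp

include hdd hhh hι1 hιw hκ2 in
lemma MA_dProps_z (S : Finset (D × H)) {d : D}
    (hd : ∀ i : Fin (k+1), (i : ℕ) < k → d ≠ dd i) :
    dProps (MA k dd hh) (interviews (MA k dd hh) ι κ) S d = ∅ := by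
  have hset : (Finset.univ.filter fun h : H =>
      (h, d) ∈ interviews (MA k dd hh) ι κ ∧ (d, h) ∉ S) = ∅ := by
    rw [Finset.filter_eq_empty_iff]
    intro h _
    rintro ⟨hm, -⟩
    rw [MA_mem_interviews hdd hhh hι1 hιw hκ2] at hm
    have hacc := (mem_candidates_of_hProps hm).1
    simp only [MA, decide_eq_true_eq] at hacc
    rcases hacc with ⟨i', hi', rfl, rfl⟩ | ⟨rfl, _⟩
    · exact hd i' hi' rfl
    · rw [MA_hProps_w hdd hhh hιw] at hm
      obtain ⟨i, hi, he⟩ := hm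
      exact hd i hi he

  rw [dProps, hset, topN.empty]

include hdd hhh hι1 hιw hκ2 in
lemma MA_mStep_empty : mStep (MA k dd hh) (interviews (MA k dd hh) ι κ) ∅ = ∅ := by
  rw [mStep, Finset.empty_union, Finset.filter_eq_empty_iff]
  rintro ⟨d, h⟩ _
  simp only [not_and, not_not]
  intro hprop
  by_cases hd : ∃ i : Fin (k+1), (i : ℕ) < k ∧ d = dd i
  · obtain ⟨i, hi, rfl⟩ := hd
    rw [MA_dProps_u hdd hhh hι1 hιw hκ2 hi ∅ (by simp), Finset.mem_singleton] at hprop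
    subst hprop
    have hpropers : (Finset.univ.filter fun d' : D =>
        hh i ∈ dProps (MA k dd hh) (interviews (MA k dd hh) ι κ) ∅ d') = {dd i} := by
      ext d'
      simp only [Finset.mem_filter, Finset.mem_univ, true_and, Finset.mem_singleton]
      constructor
      · intro hm
        by_cases hd' : ∃ i' : Fin (k+1), (i' : ℕ) < k ∧ d' = dd i'
        · obtain ⟨i', hi', rfl⟩ := hd'
          rw [MA_dProps_u hdd hhh hι1 hιw hκ2 hi' ∅ (by simp), Finset.mem_singleton] at hm
          exact congrArg dd (hhh hm).symm
        · push_neg at hd'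
          rw [MA_dProps_z hdd hhh hι1 hιw hκ2 ∅ hd'] at hm
          simp at hm
      · rintro rfl
        rw [MA_dProps_u hdd hhh hι1 hιw hκ2 hi ∅ (by simp)]
        simp
    rw [hKeeps, hpropers, topN.eq_self (by simp)]
    simp
  · push_neg at hd
    rw [MA_dProps_z hdd hhh hι1 hιw hκ2 ∅ hd] at hprop
    simp at hprop

include hdd hhh hι1 hιw hκ2 in
lemma MA_mRej : mRej (MA k dd hh) (interviews (MA k dd hh) ι κ) = ∅ := by
  rw [mRej]
  exact iterate_eq_of_fixed (k := 0) rfl (MA_mStep_empty hdd hhh hι1 hιw hκ2) (Nat.zero_le _)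

include hdd hhh hι1 hιw hκ2 in
theorem MA_not_adequate (hk : 1 ≤ k) : ¬ Adequate (MA k dd hh) ι κ := by
  intro hst
  have hz : ∀ h', (dd (Fin.last k), h') ∉ ikMatching (MA k dd hh) ι κ := by
    intro h' hmem
    have hp := finalMatch_mem_dProps hmem
    rw [MA_mRej hdd hhh hι1 hιw hκ2, MA_dProps_z hdd hhh hι1 hιw hκ2 ∅
      (fun i hi he => fin_ne_last hi (hdd he).symm)] at hp
    simp at hp
  have hw : ∀ d', (d', hh (Fin.last k)) ∉ ikMatching (MA k dd hh) ι κ := by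
    intro d' hmem
    have hp := finalMatch_mem_dProps hmem
    rw [MA_mRej hdd hhh hι1 hιw hκ2] at hp
    by_cases hd' : ∃ i : Fin (k+1), (i : ℕ) < k ∧ d' = dd i
    · obtain ⟨i, hi, rfl⟩ := hd'
      rw [MA_dProps_u hdd hhh hι1 hιw hκ2 hi ∅ (by simp), Finset.mem_singleton] at hp
      exact hh_ne_last hhh hi hp.symm
    · push_neg at hd'
      rw [MA_dProps_z hdd hhh hι1 hιw hκ2 ∅ hd'] at hp
      simp at hp
  refine hst (dd (Fin.last k)) (hh (Fin.last k)) ⟨?_, ?_, hz _, fun h' hm => absurd hm (hz h'),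
    fun d' hm => absurd hm (hw d')⟩
  · simp [MA]
  · simp [MA]

end ConsA
section ConsB

variable {D H : Type*} [Fintype D] [Fintype H] [DecidableEq D] [DecidableEq H]
variable {ι : H → ℕ} {κ : D → ℕ}

/-- Counterexample market: doctor `dd (last k)` has interview capacity exactly `k`, wastes
all `k` interviews on hospitals `hh i` (`i < k`) who prefer `dd i`, rejecting `hh (last k)`,
and ends up blocking with it. -/
noncomputable def MB (k : ℕ) (dd : Fin (k+1) → D) (hh : Fin (k+1) → H) : Market D H where
  rankDH := fun d => if d = dd (Fin.last k) then presRank (k+1) hh natRank else natRank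
  accD := fun d h => decide ((∃ i : Fin (k+1), (i : ℕ) < k ∧ d = dd i ∧ h = hh i) ∨
      (d = dd (Fin.last k) ∧ ∃ j : Fin (k+1), h = hh j))
  rankHD := fun h => if hc : ∃ i : Fin (k+1), (i : ℕ) < k ∧ hh i = h
    then presRank 2 ![dd hc.choose, dd (Fin.last k)] natRank else natRank
  accH := fun h d => decide ((∃ i : Fin (k+1), (i : ℕ) < k ∧ h = hh i ∧
      (d = dd i ∨ d = dd (Fin.last k))) ∨ (h = hh (Fin.last k) ∧ d = dd (Fin.last k)))

variable {k : ℕ} {dd : Fin (k+1) → D} {hh : Fin (k+1) → H}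
variable (hdd : Function.Injective dd) (hhh : Function.Injective hh)

lemma MB_accD {d : D} {h : H} (hp : (∃ i : Fin (k+1), (i : ℕ) < k ∧ d = dd i ∧ h = hh i) ∨
    (d = dd (Fin.last k) ∧ ∃ j : Fin (k+1), h = hh j)) :
    (MB k dd hh).accD d h = true := decide_eq_true hp

lemma MB_accD' {d : D} {h : H} (hp : (MB k dd hh).accD d h = true) :
    (∃ i : Fin (k+1), (i : ℕ) < k ∧ d = dd i ∧ h = hh i) ∨
    (d = dd (Fin.last k) ∧ ∃ j : Fin (k+1), h = hh j) := of_decide_eq_true hp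

lemma MB_accH {h : H} {d : D} (hp : (∃ i : Fin (k+1), (i : ℕ) < k ∧ h = hh i ∧
    (d = dd i ∨ d = dd (Fin.last k))) ∨ (h = hh (Fin.last k) ∧ d = dd (Fin.last k))) :
    (MB k dd hh).accH h d = true := decide_eq_true hp

lemma MB_accH' {h : H} {d : D} (hp : (MB k dd hh).accH h d = true) :
    (∃ i : Fin (k+1), (i : ℕ) < k ∧ h = hh i ∧ (d = dd i ∨ d = dd (Fin.last k))) ∨
    (h = hh (Fin.last k) ∧ d = dd (Fin.last k)) := of_decide_eq_true hp

include hdd hhh in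
lemma MB_strict : (MB k dd hh).Strict := by
  constructor
  · intro d
    simp only [MB]
    split
    · exact presRank_injective hhh natRank_injective
    · exact natRank_injective
  · intro h
    simp only [MB]
    split
    · next hc =>
      exact presRank_injective (inj2 (dd_ne_last hdd hc.choose_spec.1)) natRank_injective
    · exact natRank_injective

include hhh in
lemma MB_rankDH_y (j : Fin (k+1)) :
    (MB k dd hh).rankDH (dd (Fin.last k)) (hh j) = (j : ℕ) := by
  simp only [MB, if_pos rfl]
  exact presRank_apply hhh j

include hdd hhh in
lemma MB_rankHD_g {i : Fin (k+1)} (hi : (i : ℕ) < k) :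
    (MB k dd hh).rankHD (hh i) (dd i) = 0 ∧
    (MB k dd hh).rankHD (hh i) (dd (Fin.last k)) = 1 := by
  have hc : ∃ i' : Fin (k+1), (i' : ℕ) < k ∧ hh i' = hh i := ⟨i, hi, rfl⟩
  have hch : hc.choose = i := hhh hc.choose_spec.2
  have hne : dd i ≠ dd (Fin.last k) := dd_ne_last hdd hi
  simp only [MB, dif_pos hc, hch]
  constructor
  · have := presRank_apply (e := natRank) (inj2 hne) 0
    simpa using this
  · have := presRank_apply (e := natRank) (inj2 hne) 1
    simpa using this

variable (hι1 : ∀ i, 1 ≤ ι (hh i)) (hκ1 : ∀ i, 1 ≤ κ (dd i))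
variable (hι2 : ∀ i : Fin (k+1), (i : ℕ) < k → 2 ≤ ι (hh i))
variable (hκy : κ (dd (Fin.last k)) = k)

/-- The rejection set after Step 1. -/
def RB (k : ℕ) (dd : Fin (k+1) → D) (hh : Fin (k+1) → H) : Finset (H × D) :=
  {(hh (Fin.last k), dd (Fin.last k))}

lemma RB_not_g {i : Fin (k+1)} (hne : hh i ≠ hh (Fin.last k)) (d : D) :
    (hh i, d) ∉ RB k dd hh := by
  simp only [RB, Finset.mem_singleton, Prod.mk.injEq, not_and]
  intro he
  exact absurd he hne

include hdd hhh hι1 hκ1 hι2 hκy in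
lemma MB_hProps_g {i : Fin (k+1)} (hi : (i : ℕ) < k) {R : Finset (H × D)}
    (hR : ∀ d, (hh i, d) ∉ R) :
    hProps (MB k dd hh) ι R (hh i) = {dd i, dd (Fin.last k)} := by
  have hset : (Finset.univ.filter fun d : D =>
      (MB k dd hh).accH (hh i) d ∧ (hh i, d) ∉ R) = {dd i, dd (Fin.last k)} := by
    ext d
    simp only [Finset.mem_filter, Finset.mem_univ, true_and, Finset.mem_insert,
      Finset.mem_singleton]
    constructor
    · rintro ⟨hacc, -⟩
      rcases MB_accH' hacc with ⟨i', hi', he, hor⟩ | ⟨he, -⟩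
      · rcases hor with rfl | rfl
        · left; rw [hhh he]
        · right; rfl
      · exact absurd he (hh_ne_last hhh hi)
    · rintro (rfl | rfl)
      · exact ⟨MB_accH (Or.inl ⟨i, hi, rfl, Or.inl rfl⟩), hR _⟩
      · exact ⟨MB_accH (Or.inl ⟨i, hi, rfl, Or.inr rfl⟩), hR _⟩
  rw [hProps, hset, topN.eq_self]
  rw [Finset.card_insert_of_notMem (by simp [dd_ne_last hdd hi]), Finset.card_singleton]
  exact hι2 i hi

include hdd hhh hι1 hκ1 hι2 hκy in
lemma MB_hProps_hstar_empty :
    hProps (MB k dd hh) ι (∅ : Finset (H × D)) (hh (Fin.last k)) = {dd (Fin.last k)} := by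
  have hset : (Finset.univ.filter fun d : D =>
      (MB k dd hh).accH (hh (Fin.last k)) d ∧ (hh (Fin.last k), d) ∉ (∅ : Finset (H × D)))
      = {dd (Fin.last k)} := by
    ext d
    simp only [Finset.mem_filter, Finset.mem_univ, true_and, Finset.notMem_empty,
      not_false_iff, and_true, Finset.mem_singleton]
    constructor
    · intro hacc
      rcases MB_accH' hacc with ⟨i', hi', he, -⟩ | ⟨-, rfl⟩
      · exact absurd he.symm (hh_ne_last hhh hi')
      · rfl
    · rintro rfl
      exact MB_accH (Or.inr ⟨rfl, rfl⟩)
  rw [hProps, hset, topN.eq_self (by simpa using hι1 (Fin.last k))]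

include hdd hhh hι1 hκ1 hι2 hκy in
lemma MB_hProps_hstar_R1 :
    hProps (MB k dd hh) ι (RB k dd hh) (hh (Fin.last k)) = ∅ := by
  have hset : (Finset.univ.filter fun d : D =>
      (MB k dd hh).accH (hh (Fin.last k)) d ∧ (hh (Fin.last k), d) ∉ RB k dd hh) = ∅ := by
    rw [Finset.filter_eq_empty_iff]
    intro d _
    rintro ⟨hacc, hne⟩
    rcases MB_accH' hacc with ⟨i', hi', he, -⟩ | ⟨-, rfl⟩
    · exact (hh_ne_last hhh hi') he.symm
    · exact hne (by simp [RB])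
  rw [hProps, hset, topN.empty]

include hdd hhh hι1 hκ1 hι2 hκy in
lemma MB_pool_t {i : Fin (k+1)} (hi : (i : ℕ) < k) {R : Finset (H × D)}
    (hR : ∀ i' : Fin (k+1), (i' : ℕ) < k → ∀ d, (hh i', d) ∉ R) :
    pool (MB k dd hh) ι R (dd i) = {hh i} := by
  ext h
  simp only [pool, Finset.mem_filter, Finset.mem_univ, true_and, Finset.mem_singleton]
  constructor
  · rintro ⟨hacc, -⟩
    rcases MB_accD' hacc with ⟨i', hi', he, rfl⟩ | ⟨he, -⟩
    · rw [hdd he]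
    · exact absurd he (dd_ne_last hdd hi)
  · rintro rfl
    refine ⟨MB_accD (Or.inl ⟨i, hi, rfl, rfl⟩), ?_⟩
    rw [MB_hProps_g hdd hhh hι1 hκ1 hι2 hκy hi (hR i hi)]
    simp

include hdd hhh hι1 hκ1 hι2 hκy in
lemma MB_dKeeps_t {i : Fin (k+1)} (hi : (i : ℕ) < k) {R : Finset (H × D)}
    (hR : ∀ i' : Fin (k+1), (i' : ℕ) < k → ∀ d, (hh i', d) ∉ R) :
    dKeeps (MB k dd hh) ι κ R (dd i) = {hh i} := by
  rw [dKeeps_eq_topN, MB_pool_t hdd hhh hι1 hκ1 hι2 hκy hi hR,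
    topN.eq_self (by simpa using hκ1 i)]

include hdd hhh hι1 hκ1 hι2 hκy in
lemma MB_pool_y_empty :
    pool (MB k dd hh) ι (∅ : Finset (H × D)) (dd (Fin.last k)) = Finset.univ.image hh := by
  ext h
  simp only [pool, Finset.mem_filter, Finset.mem_univ, true_and, Finset.mem_image]
  constructor
  · rintro ⟨hacc, -⟩
    rcases MB_accD' hacc with ⟨i', hi', he, rfl⟩ | ⟨-, j, rfl⟩
    · exact absurd he.symm (dd_ne_last hdd hi')
    · exact ⟨j, rfl⟩
  · rintro ⟨j, rfl⟩
    refine ⟨MB_accD (Or.inr ⟨rfl, j, rfl⟩), ?_⟩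
    by_cases hj : (j : ℕ) < k
    · rw [MB_hProps_g hdd hhh hι1 hκ1 hι2 hκy hj (fun d => Finset.notMem_empty _)]
      simp
    · have hj' : j = Fin.last k := by
        have := j.isLt; apply Fin.ext; rw [Fin.val_last]; omega
      subst hj'
      rw [MB_hProps_hstar_empty hdd hhh hι1 hκ1 hι2 hκy]
      simp

include hdd hhh hι1 hκ1 hι2 hκy in
lemma MB_dKeeps_y_empty_mem {h : H} :
    h ∈ dKeeps (MB k dd hh) ι κ (∅ : Finset (H × D)) (dd (Fin.last k)) ↔
      ∃ i : Fin (k+1), (i : ℕ) < k ∧ h = hh i := by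
  rw [dKeeps_eq_topN, MB_pool_y_empty hdd hhh hι1 hκ1 hι2 hκy, hκy]
  constructor
  · intro hm
    have hsub := topN.subset hm
    simp only [Finset.mem_image, Finset.mem_univ, true_and] at hsub
    obtain ⟨j, rfl⟩ := hsub
    refine ⟨j, ?_, rfl⟩
    rw [topN.mem_iff] at hm
    have hfil : ((Finset.univ.image hh).filter
        fun y => (MB k dd hh).rankDH (dd (Fin.last k)) y <
          (MB k dd hh).rankDH (dd (Fin.last k)) (hh j))
        = (Finset.univ.filter fun j' : Fin (k+1) => (j' : ℕ) < (j : ℕ)).image hh := by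
      rw [Finset.filter_image]
      congr 1
      apply Finset.filter_congr
      intro j' _
      rw [MB_rankDH_y hhh, MB_rankDH_y hhh]
    rw [hfil, Finset.card_image_of_injective _ hhh, card_fin_lt (le_of_lt j.isLt)] at hm
    have := hm.2
    omega
  · rintro ⟨i, hi, rfl⟩
    rw [topN.mem_iff]
    refine ⟨by simp, ?_⟩
    have hfil : ((Finset.univ.image hh).filter
        fun y => (MB k dd hh).rankDH (dd (Fin.last k)) y <
          (MB k dd hh).rankDH (dd (Fin.last k)) (hh i))
        = (Finset.univ.filter fun j' : Fin (k+1) => (j' : ℕ) < (i : ℕ)).image hh := by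
      rw [Finset.filter_image]
      congr 1
      apply Finset.filter_congr
      intro j' _
      rw [MB_rankDH_y hhh, MB_rankDH_y hhh]
    rw [hfil, Finset.card_image_of_injective _ hhh, card_fin_lt (le_of_lt i.isLt)]
    exact hi

include hdd hhh hι1 hκ1 hι2 hκy in
lemma MB_iStep_empty : iStep (MB k dd hh) ι κ (∅ : Finset (H × D)) = RB k dd hh := by
  rw [iStep, Finset.empty_union]
  ext ⟨h, d⟩
  simp only [Finset.mem_filter, Finset.mem_univ, true_and, RB, Finset.mem_singleton,
    Prod.mk.injEq]
  constructor
  · rintro ⟨hprop, hnk⟩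
    have hacc := (mem_candidates_of_hProps hprop).1
    rcases MB_accH' hacc with ⟨i, hi, rfl, hor⟩ | ⟨rfl, rfl⟩
    · exfalso
      rw [MB_hProps_g hdd hhh hι1 hκ1 hι2 hκy hi (fun d => Finset.notMem_empty _)] at hprop
      simp only [Finset.mem_insert, Finset.mem_singleton] at hprop
      rcases hprop with rfl | rfl
      · rw [MB_dKeeps_t hdd hhh hι1 hκ1 hι2 hκy hi
          (fun i' hi' d => Finset.notMem_empty _)] at hnk
        simp at hnk
      · rw [MB_dKeeps_y_empty_mem hdd hhh hι1 hκ1 hι2 hκy] at hnk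
        exact hnk ⟨i, hi, rfl⟩
    · exact ⟨rfl, rfl⟩
  · rintro ⟨rfl, rfl⟩
    constructor
    · rw [MB_hProps_hstar_empty hdd hhh hι1 hκ1 hι2 hκy]
      simp
    · rw [MB_dKeeps_y_empty_mem hdd hhh hι1 hκ1 hι2 hκy]
      rintro ⟨i, hi, he⟩
      exact hh_ne_last hhh hi he.symm

include hdd hhh hι1 hκ1 hι2 hκy in
lemma MB_pool_y_R1 :
    pool (MB k dd hh) ι (RB k dd hh) (dd (Fin.last k))
      = (Finset.univ.filter fun i : Fin (k+1) => (i : ℕ) < k).image hh := by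
  ext h
  simp only [pool, Finset.mem_filter, Finset.mem_univ, true_and, Finset.mem_image]
  constructor
  · rintro ⟨hacc, hprop⟩
    have hran : ∃ j : Fin (k+1), h = hh j := by
      rcases MB_accD' hacc with ⟨i', hi', he, rfl⟩ | ⟨-, j, rfl⟩
      · exact ⟨i', rfl⟩
      · exact ⟨j, rfl⟩
    obtain ⟨j, rfl⟩ := hran
    by_cases hj : (j : ℕ) < k
    · exact ⟨j, hj, rfl⟩
    · exfalso
      have hj' : j = Fin.last k := by
        have := j.isLt; apply Fin.ext; rw [Fin.val_last]; omega
      subst hj'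
      rw [MB_hProps_hstar_R1 hdd hhh hι1 hκ1 hι2 hκy] at hprop
      simp at hprop
  · rintro ⟨j, hj, rfl⟩
    refine ⟨MB_accD (Or.inr ⟨rfl, j, rfl⟩), ?_⟩
    rw [MB_hProps_g hdd hhh hι1 hκ1 hι2 hκy hj (RB_not_g (hh_ne_last hhh hj))]
    simp

include hdd hhh hι1 hκ1 hι2 hκy in
lemma MB_dKeeps_y_R1 :
    dKeeps (MB k dd hh) ι κ (RB k dd hh) (dd (Fin.last k))
      = (Finset.univ.filter fun i : Fin (k+1) => (i : ℕ) < k).image hh := by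
  have hcard : ((Finset.univ.filter fun i : Fin (k+1) => (i : ℕ) < k).image hh).card = k := by
    rw [Finset.card_image_of_injective _ hhh, card_fin_lt (Nat.le_succ k)]
  rw [dKeeps_eq_topN, MB_pool_y_R1 hdd hhh hι1 hκ1 hι2 hκy, hκy,
    topN.eq_self (le_of_eq hcard)]

include hdd hhh hι1 hκ1 hι2 hκy in
lemma MB_iStep_R1 : iStep (MB k dd hh) ι κ (RB k dd hh) = RB k dd hh := by
  rw [iStep, Finset.union_eq_left]
  intro ⟨h, d⟩ hp
  simp only [Finset.mem_filter, Finset.mem_univ, true_and] at hp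
  obtain ⟨hprop, hnk⟩ := hp
  exfalso
  have hacc := (mem_candidates_of_hProps hprop).1
  rcases MB_accH' hacc with ⟨i, hi, rfl, hor⟩ | ⟨rfl, rfl⟩
  · rw [MB_hProps_g hdd hhh hι1 hκ1 hι2 hκy hi (RB_not_g (hh_ne_last hhh hi))] at hprop
    simp only [Finset.mem_insert, Finset.mem_singleton] at hprop
    rcases hprop with rfl | rfl
    · rw [MB_dKeeps_t hdd hhh hι1 hκ1 hι2 hκy hi (fun i' hi' d =>
        RB_not_g (hh_ne_last hhh hi') d)] at hnk
      simp at hnk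
    · rw [MB_dKeeps_y_R1 hdd hhh hι1 hκ1 hι2 hκy] at hnk
      refine hnk ?_
      simp only [Finset.mem_image, Finset.mem_filter, Finset.mem_univ, true_and]
      exact ⟨i, hi, rfl⟩
  · rw [MB_hProps_hstar_R1 hdd hhh hι1 hκ1 hι2 hκy] at hprop
    simp at hprop

include hdd hhh hι1 hκ1 hι2 hκy in
lemma MB_iRej : iRej (MB k dd hh) ι κ = RB k dd hh := by
  rw [iRej]
  have h1 : 0 < Fintype.card D := Fintype.card_pos_iff.mpr ⟨dd (Fin.last k)⟩
  have h2 : 0 < Fintype.card H := Fintype.card_pos_iff.mpr ⟨hh (Fin.last k)⟩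
  refine iterate_eq_of_fixed (k := 1) ?_ (MB_iStep_R1 hdd hhh hι1 hκ1 hι2 hκy) ?_
  · rw [Function.iterate_one]
    exact MB_iStep_empty hdd hhh hι1 hκ1 hι2 hκy
  · exact Nat.one_le_iff_ne_zero.mpr (Nat.mul_ne_zero (by omega) (by omega))

include hdd hhh hι1 hκ1 hι2 hκy in
lemma MB_mem_interviews {h : H} {d : D} :
    (h, d) ∈ interviews (MB k dd hh) ι κ ↔
      ∃ i : Fin (k+1), (i : ℕ) < k ∧ h = hh i ∧ (d = dd i ∨ d = dd (Fin.last k)) := by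
  rw [mem_interviews_iff, MB_iRej hdd hhh hι1 hκ1 hι2 hκy]
  constructor
  · intro hm
    have hacc := (mem_candidates_of_hProps hm).1
    rcases MB_accH' hacc with ⟨i, hi, rfl, hor⟩ | ⟨rfl, rfl⟩
    · rw [MB_hProps_g hdd hhh hι1 hκ1 hι2 hκy hi (RB_not_g (hh_ne_last hhh hi))] at hm
      simp only [Finset.mem_insert, Finset.mem_singleton] at hm
      exact ⟨i, hi, rfl, hm⟩
    · rw [MB_hProps_hstar_R1 hdd hhh hι1 hκ1 hι2 hκy] at hm
      simp at hm
  · rintro ⟨i, hi, rfl, hor⟩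
    rw [MB_hProps_g hdd hhh hι1 hκ1 hι2 hκy hi (RB_not_g (hh_ne_last hhh hi))]
    simp only [Finset.mem_insert, Finset.mem_singleton]
    exact hor

end ConsB
namespace topN
variable {α : Type*} [DecidableEq α] {rank : α → ℕ} {n : ℕ} {s : Finset α} {x : α}

theorem mem_of_min (hx : x ∈ s) (hn : 1 ≤ n) (hmin : ∀ y ∈ s, ¬ rank y < rank x) :
    x ∈ topN rank n s := by
  rw [mem_iff]
  refine ⟨hx, ?_⟩
  have : (s.filter fun y => rank y < rank x) = ∅ := by
    rw [Finset.filter_eq_empty_iff]; exact hmin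
  rw [this]; simp; omega

end topN

section ConsB2

variable {D H : Type*} [Fintype D] [Fintype H] [DecidableEq D] [DecidableEq H]
variable {ι : H → ℕ} {κ : D → ℕ}
variable {k : ℕ} {dd : Fin (k+1) → D} {hh : Fin (k+1) → H}

/-- Step-2 rejection set after `n` rounds. -/
def SB (k : ℕ) (dd : Fin (k+1) → D) (hh : Fin (k+1) → H) (n : ℕ) : Finset (D × H) :=
  Finset.univ.filter fun p : D × H =>
    ∃ j : Fin (k+1), (j : ℕ) < min n k ∧ p = (dd (Fin.last k), hh j)

lemma SB_zero : SB k dd hh 0 = ∅ := by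
  rw [SB, Finset.filter_eq_empty_iff]
  rintro p - ⟨j, hj, -⟩
  omega

lemma mem_SB {p : D × H} {n : ℕ} :
    p ∈ SB k dd hh n ↔ ∃ j : Fin (k+1), (j : ℕ) < min n k ∧ p = (dd (Fin.last k), hh j) := by
  simp [SB]

variable (hdd : Function.Injective dd) (hhh : Function.Injective hh)
variable (hι1 : ∀ i, 1 ≤ ι (hh i)) (hκ1 : ∀ i, 1 ≤ κ (dd i))
variable (hι2 : ∀ i : Fin (k+1), (i : ℕ) < k → 2 ≤ ι (hh i))
variable (hκy : κ (dd (Fin.last k)) = k)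

include hdd hhh hι1 hκ1 hι2 hκy in
lemma MB_dProps_t {i : Fin (k+1)} (hi : (i : ℕ) < k) (S : Finset (D × H))
    (hS : ∀ h, (dd i, h) ∉ S) :
    dProps (MB k dd hh) (interviews (MB k dd hh) ι κ) S (dd i) = {hh i} := by
  have hset : (Finset.univ.filter fun h : H =>
      (h, dd i) ∈ interviews (MB k dd hh) ι κ ∧ (dd i, h) ∉ S) = {hh i} := by
    ext h
    simp only [Finset.mem_filter, Finset.mem_univ, true_and, Finset.mem_singleton]
    constructor
    · rintro ⟨hν, -⟩
      rw [MB_mem_interviews hdd hhh hι1 hκ1 hι2 hκy] at hν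
      obtain ⟨i', hi', rfl, hor⟩ := hν
      rcases hor with he | he
      · rw [hdd he]
      · exact absurd he (dd_ne_last hdd hi)
    · rintro rfl
      refine ⟨?_, hS _⟩
      rw [MB_mem_interviews hdd hhh hι1 hκ1 hι2 hκy]
      exact ⟨i, hi, rfl, Or.inl rfl⟩
  rw [dProps, hset, topN.eq_self (by simp)]

include hdd hhh hι1 hκ1 hι2 hκy in
lemma MB_dProps_out {d : D} (hd : ∀ i : Fin (k+1), d ≠ dd i) (S : Finset (D × H)) :
    dProps (MB k dd hh) (interviews (MB k dd hh) ι κ) S d = ∅ := by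
  have hset : (Finset.univ.filter fun h : H =>
      (h, d) ∈ interviews (MB k dd hh) ι κ ∧ (d, h) ∉ S) = ∅ := by
    rw [Finset.filter_eq_empty_iff]
    rintro h - ⟨hν, -⟩
    rw [MB_mem_interviews hdd hhh hι1 hκ1 hι2 hκy] at hν
    obtain ⟨i', hi', rfl, hor⟩ := hν
    rcases hor with he | he
    · exact hd i' he
    · exact hd (Fin.last k) he
  rw [dProps, hset, topN.empty]

include hdd hhh hι1 hκ1 hι2 hκy in
lemma MB_Vy (n : ℕ) :
    (Finset.univ.filter fun h : H =>
        (h, dd (Fin.last k)) ∈ interviews (MB k dd hh) ι κ ∧ (dd (Fin.last k), h) ∉ SB k dd hh n)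
      = Finset.univ.filter fun h : H =>
        ∃ j : Fin (k+1), min n k ≤ (j : ℕ) ∧ (j : ℕ) < k ∧ h = hh j := by
  ext h
  simp only [Finset.mem_filter, Finset.mem_univ, true_and]
  rw [MB_mem_interviews hdd hhh hι1 hκ1 hι2 hκy, mem_SB]
  constructor
  · rintro ⟨⟨i, hi, rfl, -⟩, hnS⟩
    refine ⟨i, ?_, hi, rfl⟩
    by_contra hlt
    push_neg at hlt
    exact hnS ⟨i, hlt, rfl⟩
  · rintro ⟨j, hj1, hj2, rfl⟩
    refine ⟨⟨j, hj2, rfl, Or.inr rfl⟩, ?_⟩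
    rintro ⟨j', hj', he⟩
    rw [Prod.mk.injEq] at he
    have := hhh he.2
    subst this
    omega

include hdd hhh hι1 hκ1 hι2 hκy in
lemma MB_dProps_y_lt {n : ℕ} (hm : min n k < k) :
    dProps (MB k dd hh) (interviews (MB k dd hh) ι κ) (SB k dd hh n) (dd (Fin.last k))
      = {hh ⟨min n k, by omega⟩} := by
  set J : Fin (k+1) := ⟨min n k, by omega⟩ with hJ
  have hJval : (J : ℕ) = min n k := rfl
  rw [dProps, MB_Vy hdd hhh hι1 hκ1 hι2 hκy]
  have hJmem : hh J ∈ Finset.univ.filter fun h : H =>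
      ∃ j : Fin (k+1), min n k ≤ (j : ℕ) ∧ (j : ℕ) < k ∧ h = hh j := by
    simp only [Finset.mem_filter, Finset.mem_univ, true_and]
    exact ⟨J, le_refl _, hm, rfl⟩
  apply Finset.Subset.antisymm
  · intro h hmem
    have hsub := topN.subset hmem
    simp only [Finset.mem_filter, Finset.mem_univ, true_and] at hsub
    obtain ⟨j, hj1, hj2, rfl⟩ := hsub
    rw [Finset.mem_singleton]
    by_contra hne
    have hjm : min n k < (j : ℕ) := by
      rcases Nat.lt_or_ge (min n k) (j : ℕ) with h1 | h1
      · exact h1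
      · exact absurd (congrArg hh (Fin.ext (by omega) : J = j)) (fun he => hne he.symm)
    refine absurd hmem ?_
    apply topN.not_mem_of_dominated (T := {hh J}) (by simpa using hJmem) (by simp)
    intro t ht
    rw [Finset.mem_singleton] at ht
    subst ht
    rw [MB_rankDH_y hhh, MB_rankDH_y hhh]
    omega
  · intro h hmem
    rw [Finset.mem_singleton] at hmem
    subst hmem
    apply topN.mem_of_min hJmem (le_refl _)
    intro h' hh'
    simp only [Finset.mem_filter, Finset.mem_univ, true_and] at hh'
    obtain ⟨j, hj1, hj2, rfl⟩ := hh'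
    rw [MB_rankDH_y hhh, MB_rankDH_y hhh]
    omega

include hdd hhh hι1 hκ1 hι2 hκy in
lemma MB_dProps_y_ge {n : ℕ} (hm : min n k = k) :
    dProps (MB k dd hh) (interviews (MB k dd hh) ι κ) (SB k dd hh n) (dd (Fin.last k)) = ∅ := by
  rw [dProps, MB_Vy hdd hhh hι1 hκ1 hι2 hκy]
  have : (Finset.univ.filter fun h : H =>
      ∃ j : Fin (k+1), min n k ≤ (j : ℕ) ∧ (j : ℕ) < k ∧ h = hh j) = ∅ := by
    rw [Finset.filter_eq_empty_iff]
    rintro h - ⟨j, hj1, hj2, -⟩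
    omega
  rw [this, topN.empty]

include hdd hhh hι1 hκ1 hι2 hκy in
lemma MB_kept_t {i : Fin (k+1)} (hi : (i : ℕ) < k) (n : ℕ) :
    dd i ∈ hKeeps (MB k dd hh) (interviews (MB k dd hh) ι κ) (SB k dd hh n) (hh i) := by
  have hmem : dd i ∈ Finset.univ.filter fun d : D =>
      hh i ∈ dProps (MB k dd hh) (interviews (MB k dd hh) ι κ) (SB k dd hh n) d := by
    simp only [Finset.mem_filter, Finset.mem_univ, true_and]
    rw [MB_dProps_t hdd hhh hι1 hκ1 hι2 hκy hi _ (fun h hc => by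
      rw [mem_SB] at hc
      obtain ⟨j, -, he⟩ := hc
      rw [Prod.mk.injEq] at he
      exact dd_ne_last hdd hi he.1)]
    simp
  apply topN.mem_of_min hmem (le_refl _)
  intro d' _
  rw [(MB_rankHD_g hdd hhh hi).1]
  omega

include hdd hhh hι1 hκ1 hι2 hκy in
lemma MB_mStep (n : ℕ) :
    mStep (MB k dd hh) (interviews (MB k dd hh) ι κ) (SB k dd hh n) = SB k dd hh (n+1) := by
  by_cases hm : min n k < k
  · have hnk : n < k := by omega
    have hmn : min n k = n := by omega
    set J : Fin (k+1) := ⟨min n k, by omega⟩ with hJ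
    have hJval : (J : ℕ) = min n k := rfl
    have hfil : (Finset.univ.filter fun p : D × H =>
        p.2 ∈ dProps (MB k dd hh) (interviews (MB k dd hh) ι κ) (SB k dd hh n) p.1 ∧
        p.1 ∉ hKeeps (MB k dd hh) (interviews (MB k dd hh) ι κ) (SB k dd hh n) p.2)
        = {(dd (Fin.last k), hh J)} := by
      ext ⟨d, h⟩
      simp only [Finset.mem_filter, Finset.mem_univ, true_and, Finset.mem_singleton,
        Prod.mk.injEq]
      constructor
      · rintro ⟨hdp, hnk2⟩
        by_cases hd : ∃ i : Fin (k+1), (i : ℕ) < k ∧ d = dd i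
        · obtain ⟨i, hi, rfl⟩ := hd
          rw [MB_dProps_t hdd hhh hι1 hκ1 hι2 hκy hi _ (fun h' hc => by
            rw [mem_SB] at hc
            obtain ⟨j, -, he⟩ := hc
            rw [Prod.mk.injEq] at he
            exact dd_ne_last hdd hi he.1), Finset.mem_singleton] at hdp
          subst hdp
          exact absurd (MB_kept_t hdd hhh hι1 hκ1 hι2 hκy hi n) hnk2
        · by_cases hy : d = dd (Fin.last k)
          · subst hy
            rw [MB_dProps_y_lt hdd hhh hι1 hκ1 hι2 hκy hm, Finset.mem_singleton] at hdp
            exact ⟨rfl, hdp⟩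
          · rw [MB_dProps_out hdd hhh hι1 hκ1 hι2 hκy (fun i he => by
              by_cases hik : (i : ℕ) < k
              · exact hd ⟨i, hik, he⟩
              · exact hy (he.trans (congrArg dd (Fin.ext (by have := i.isLt; rw [Fin.val_last]; omega))))) _] at hdp
            simp at hdp
      · rintro ⟨rfl, rfl⟩
        constructor
        · rw [MB_dProps_y_lt hdd hhh hι1 hκ1 hι2 hκy hm]
          simp
          exact congrArg hh hJ
        · intro hkept
          have hJk : (J : ℕ) < k := by omega
          have hdm : dd J ∈ Finset.univ.filter fun d : D =>
              hh J ∈ dProps (MB k dd hh) (interviews (MB k dd hh) ι κ) (SB k dd hh n) d := by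
            simp only [Finset.mem_filter, Finset.mem_univ, true_and]
            rw [MB_dProps_t hdd hhh hι1 hκ1 hι2 hκy hJk _ (fun h' hc => by
              rw [mem_SB] at hc
              obtain ⟨j, -, he⟩ := hc
              rw [Prod.mk.injEq] at he
              exact dd_ne_last hdd hJk he.1)]
            simp
          refine absurd hkept (topN.not_mem_of_dominated (T := {dd J})
            (by simpa using hdm) (by simp) ?_)
          intro t ht
          rw [Finset.mem_singleton] at ht
          subst ht
          rw [(MB_rankHD_g hdd hhh hJk).1, (MB_rankHD_g hdd hhh hJk).2]
          omega
    rw [mStep, hfil]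
    ext p
    simp only [Finset.mem_union, mem_SB, Finset.mem_singleton]
    constructor
    · rintro (⟨j, hj, rfl⟩ | rfl)
      · exact ⟨j, by omega, rfl⟩
      · exact ⟨J, by omega, rfl⟩
    · rintro ⟨j, hj, rfl⟩
      by_cases hjm : (j : ℕ) < min n k
      · exact Or.inl ⟨j, hjm, rfl⟩
      · right
        have : j = J := by
          apply Fin.ext
          omega
        rw [this]
  · push_neg at hm
    have hmk : min n k = k := le_antisymm (min_le_right _ _) hm
    have hfil : (Finset.univ.filter fun p : D × H =>
        p.2 ∈ dProps (MB k dd hh) (interviews (MB k dd hh) ι κ) (SB k dd hh n) p.1 ∧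
        p.1 ∉ hKeeps (MB k dd hh) (interviews (MB k dd hh) ι κ) (SB k dd hh n) p.2)
        = ∅ := by
      rw [Finset.filter_eq_empty_iff]
      rintro ⟨d, h⟩ - ⟨hdp, hnk2⟩
      by_cases hd : ∃ i : Fin (k+1), (i : ℕ) < k ∧ d = dd i
      · obtain ⟨i, hi, rfl⟩ := hd
        rw [MB_dProps_t hdd hhh hι1 hκ1 hι2 hκy hi _ (fun h' hc => by
          rw [mem_SB] at hc
          obtain ⟨j, -, he⟩ := hc
          rw [Prod.mk.injEq] at he
          exact dd_ne_last hdd hi he.1), Finset.mem_singleton] at hdp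
        subst hdp
        exact hnk2 (MB_kept_t hdd hhh hι1 hκ1 hι2 hκy hi n)
      · by_cases hy : d = dd (Fin.last k)
        · subst hy
          rw [MB_dProps_y_ge hdd hhh hι1 hκ1 hι2 hκy hmk] at hdp
          simp at hdp
        · rw [MB_dProps_out hdd hhh hι1 hκ1 hι2 hκy (fun i he => by
            by_cases hik : (i : ℕ) < k
            · exact hd ⟨i, hik, he⟩
            · exact hy (he.trans (congrArg dd (Fin.ext (by have := i.isLt; rw [Fin.val_last]; omega))))) _] at hdp
          simp at hdp
    rw [mStep, hfil, Finset.union_empty]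
    ext p
    rw [mem_SB, mem_SB]
    constructor
    · rintro ⟨j, hj, rfl⟩
      exact ⟨j, by omega, rfl⟩
    · rintro ⟨j, hj, rfl⟩
      refine ⟨j, by omega, rfl⟩

include hdd hhh hι1 hκ1 hι2 hκy in
lemma MB_mRej :
    mRej (MB k dd hh) (interviews (MB k dd hh) ι κ)
      = SB k dd hh (Fintype.card D * Fintype.card H) := by
  rw [mRej]
  generalize Fintype.card D * Fintype.card H = n
  induction n with
  | zero => rw [Function.iterate_zero_apply, SB_zero]
  | succ n ih =>
    rw [Function.iterate_succ_apply', ih, MB_mStep hdd hhh hι1 hκ1 hι2 hκy]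

include hdd hhh hι1 hκ1 hι2 hκy in
theorem MB_not_adequate : ¬ Adequate (MB k dd hh) ι κ := by
  intro hst
  have hcd : k + 1 ≤ Fintype.card D := by
    have := Fintype.card_le_of_injective dd hdd
    simpa using this
  have hch : k + 1 ≤ Fintype.card H := by
    have := Fintype.card_le_of_injective hh hhh
    simpa using this
  have hkN : min (Fintype.card D * Fintype.card H) k = k := by
    have h1 : k + 1 ≤ Fintype.card D * Fintype.card H := by
      calc k + 1 = (k+1) * 1 := by omega
        _ ≤ Fintype.card D * Fintype.card H := Nat.mul_le_mul hcd (by omega)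
    omega
  have hy : ∀ h', (dd (Fin.last k), h') ∉ ikMatching (MB k dd hh) ι κ := by
    intro h' hmem
    have hp := finalMatch_mem_dProps hmem
    rw [MB_mRej hdd hhh hι1 hκ1 hι2 hκy,
      MB_dProps_y_ge hdd hhh hι1 hκ1 hι2 hκy hkN] at hp
    simp at hp
  have hw : ∀ d', (d', hh (Fin.last k)) ∉ ikMatching (MB k dd hh) ι κ := by
    intro d' hmem
    have hp := finalMatch_mem_dProps hmem
    have hν := (mem_dProps_sub hp).1
    rw [MB_mem_interviews hdd hhh hι1 hκ1 hι2 hκy] at hν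
    obtain ⟨i, hi, he, -⟩ := hν
    exact hh_ne_last hhh hi he.symm
  refine hst (dd (Fin.last k)) (hh (Fin.last k)) ⟨?_, ?_, hy _, fun h' hm => absurd hm (hy h'),
    fun d' hm => absurd hm (hw d')⟩
  · exact MB_accD (Or.inr ⟨rfl, Fin.last k, rfl⟩)
  · exact MB_accH (Or.inr ⟨rfl, rfl⟩)

end ConsB2
section Assemble

lemma exists_fun_last {α : Type*} [Fintype α] [DecidableEq α] (k : ℕ)
    (hk : k + 1 ≤ Fintype.card α) (a : α) :
    ∃ f : Fin (k+1) → α, Function.Injective f ∧ f (Fin.last k) = a := by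
  classical
  have hcard : k ≤ Fintype.card {x : α // x ≠ a} := by
    have h1 : Fintype.card {x : α // x ≠ a} = Fintype.card α - 1 := by
      rw [Fintype.card_subtype_compl, Fintype.card_subtype_eq]
    omega
  obtain ⟨e⟩ := Function.Embedding.nonempty_of_card_le
    (by rwa [Fintype.card_fin] : Fintype.card (Fin k) ≤ Fintype.card {x : α // x ≠ a})
  refine ⟨fun i => if h : (i : ℕ) < k then (e ⟨(i : ℕ), h⟩ : α) else a, ?_, ?_⟩
  · intro i j hij
    dsimp only at hij
    by_cases hi : (i : ℕ) < k <;> by_cases hj : (j : ℕ) < k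
    · rw [dif_pos hi, dif_pos hj] at hij
      have := e.injective (Subtype.ext hij)
      apply Fin.ext
      simpa using congrArg Fin.val this
    · rw [dif_pos hi, dif_neg hj] at hij
      exact absurd hij (e ⟨(i : ℕ), hi⟩).2
    · rw [dif_neg hi, dif_pos hj] at hij
      exact absurd hij.symm (e ⟨(j : ℕ), hj⟩).2
    · apply Fin.ext
      have := i.isLt
      have := j.isLt
      omega
  · show (if h : ((Fin.last k : Fin (k+1)) : ℕ) < k then (e ⟨_, h⟩ : α) else a) = a
    rw [dif_neg (by rw [Fin.val_last]; omega)]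

variable {D H : Type*} [Fintype D] [Fintype H] [DecidableEq D] [DecidableEq H]
variable {ι : H → ℕ} {κ : D → ℕ}

lemma exists_bad (hD : 2 ≤ Fintype.card D) (hH : 2 ≤ Fintype.card H)
    (hnA : ¬((∀ d : D, κ d = 1) ∧ (∀ h : H, ι h = 1)))
    (hnB : ¬((∀ d : D, min (Fintype.card D) (Fintype.card H) ≤ κ d) ∧
        (∀ h : H, min (Fintype.card D) (Fintype.card H) ≤ ι h))) :
    ∃ M : Market D H, M.Strict ∧ ¬ Adequate M ι κ := by
  classical
  have hntD : Nontrivial D := Fintype.one_lt_card_iff_nontrivial.mp (by omega)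
  have hntH : Nontrivial H := Fintype.one_lt_card_iff_nontrivial.mp (by omega)
  have hneD : Nonempty D := ⟨Classical.arbitrary D⟩
  have hneH : Nonempty H := ⟨Classical.arbitrary H⟩
  by_cases hz : (∃ d, κ d = 0) ∨ (∃ h, ι h = 0)
  · rcases hz with ⟨y, hy⟩ | ⟨h0, hh0⟩
    · exact not_adequate_zero y (Classical.arbitrary H) (Or.inl hy)
    · exact not_adequate_zero (Classical.arbitrary D) h0 (Or.inr hh0)
  push_neg at hz
  have hκpos : ∀ d, 1 ≤ κ d := fun d => Nat.one_le_iff_ne_zero.mpr (hz.1 d)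
  have hιpos : ∀ h, 1 ≤ ι h := fun h => Nat.one_le_iff_ne_zero.mpr (hz.2 h)
  by_cases hc1 : (∃ d, κ d = 1) ∧ (∃ h, 2 ≤ ι h)
  · obtain ⟨⟨y, hy⟩, ⟨x, hx⟩⟩ := hc1
    obtain ⟨t, ht⟩ := exists_ne y
    obtain ⟨g, hg⟩ := exists_ne x
    have hddinj : Function.Injective (![t, y] : Fin 2 → D) := inj2 ht
    have hhhinj : Function.Injective (![x, g] : Fin 2 → H) := inj2 (Ne.symm hg)
    refine ⟨MB 1 ![t, y] ![x, g], MB_strict hddinj hhhinj,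
      MB_not_adequate hddinj hhhinj (fun i => hιpos _) (fun i => hκpos _) ?_ ?_⟩
    · intro i hi
      have h0 : (i : ℕ) = 0 := by omega
      have : i = 0 := Fin.ext (by simp [h0])
      subst this
      exact hx
    · exact hy
  by_cases hc2 : (∃ h, ι h = 1) ∧ (∃ d, 2 ≤ κ d)
  · obtain ⟨⟨w, hw⟩, ⟨u, hu⟩⟩ := hc2
    obtain ⟨g, hg⟩ := exists_ne w
    obtain ⟨z, hz'⟩ := exists_ne u
    have hddinj : Function.Injective (![u, z] : Fin 2 → D) := inj2 (Ne.symm hz')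
    have hhhinj : Function.Injective (![g, w] : Fin 2 → H) := inj2 hg
    refine ⟨MA 1 ![u, z] ![g, w], MA_strict hddinj hhhinj,
      MA_not_adequate hddinj hhhinj (fun i => hιpos _) hw ?_ (le_refl 1)⟩
    intro i hi
    have h0 : (i : ℕ) = 0 := by omega
    have : i = 0 := Fin.ext (by simp [h0])
    subst this
    exact hu
  push_neg at hc1 hc2
  have hκ2all : ∀ d, 2 ≤ κ d := by
    intro d
    by_contra hcon
    have hd1 : κ d = 1 := by have := hκpos d; omega
    have hι1' : ∀ h, ι h = 1 := by
      intro h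
      have := hc1 ⟨d, hd1⟩ h
      have := hιpos h
      omega
    have hκ1' : ∀ d', κ d' = 1 := by
      intro d'
      have := hc2 ⟨Classical.arbitrary H, hι1' _⟩ d'
      have := hκpos d'
      omega
    exact hnA ⟨hκ1', hι1'⟩
  have hι2all : ∀ h, 2 ≤ ι h := by
    intro h
    by_contra hcon
    have hh1 : ι h = 1 := by have := hιpos h; omega
    have := hc2 ⟨h, hh1⟩ (Classical.arbitrary D)
    have := hκ2all (Classical.arbitrary D)
    omega
  rw [not_and_or] at hnB
  rcases hnB with hsmall | hsmall
  · push_neg at hsmall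
    obtain ⟨y, hy⟩ := hsmall
    have hk2 : 2 ≤ κ y := hκ2all y
    have hkD : κ y + 1 ≤ Fintype.card D := by omega
    have hkH : κ y + 1 ≤ Fintype.card H := by omega
    obtain ⟨dd, hdd, hlast⟩ := exists_fun_last (κ y) hkD y
    obtain ⟨hh, hhh, -⟩ := exists_fun_last (κ y) hkH (Classical.arbitrary H)
    exact ⟨MB (κ y) dd hh, MB_strict hdd hhh,
      MB_not_adequate hdd hhh (fun i => hιpos _) (fun i => hκpos _)
        (fun i _ => hι2all _) (by rw [hlast])⟩
  · push_neg at hsmall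
    obtain ⟨w, hw⟩ := hsmall
    have hk2 : 2 ≤ ι w := hι2all w
    have hkD : ι w + 1 ≤ Fintype.card D := by omega
    have hkH : ι w + 1 ≤ Fintype.card H := by omega
    obtain ⟨dd, hdd, -⟩ := exists_fun_last (ι w) hkD (Classical.arbitrary D)
    obtain ⟨hh, hhh, hlast⟩ := exists_fun_last (ι w) hkH w
    exact ⟨MA (ι w) dd hh, MA_strict hdd hhh,
      MA_not_adequate hdd hhh (fun i => hιpos _) (by rw [hlast])
        (fun i _ => hκ2all _) (by omega)⟩

end Assemble


/-- `(ι,κ)` is globally adequate if and only if either every agent has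
interview capacity exactly one, or every agent has interview capacity at least
`min {|D|, |H|}`. -/
theorem globally_adequate_characterization
    (hD : 2 ≤ Fintype.card D) (hH : 2 ≤ Fintype.card H)
    (ι : H → ℕ) (κ : D → ℕ) :
    GloballyAdequate D H ι κ ↔
      ((∀ d : D, κ d = 1) ∧ (∀ h : H, ι h = 1)) ∨
      ((∀ d : D, min (Fintype.card D) (Fintype.card H) ≤ κ d) ∧
        (∀ h : H, min (Fintype.card D) (Fintype.card H) ≤ ι h)) := by
  constructor
  · intro hGA
    by_contra hrhs
    rw [not_or] at hrhs
    obtain ⟨M, hstrict, hbad⟩ := exists_bad hD hH hrhs.1 hrhs.2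
    exact hbad (hGA M hstrict)
  · rintro (⟨h1, h2⟩ | ⟨h1, h2⟩) M hM
    · exact adequate_of_one hM h1 h2
    · exact adequate_of_min hM h1 h2
end

section
/- Under common preferences with homogeneous arrangement (l,k): if l ≠ k and min{l,k} < min{|D|,|H|}, then the (l,k)-matching is not stable; hence (l,k) is not adequate at any common-preference profile. -/
/- Formal model of the two-step interview-then-match process of
Echenique-et-al-style markets: Step 1 computes the interview matching by
hospital-proposing deferred acceptance (with responsive, capacity-constrained
choice functions); Step 2 computes the final one-to-one matching by
doctor-proposing deferred acceptance on preferences restricted to interview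
partners. -/

open Finset

variable {D H : Type*} [Fintype D] [Fintype H] [DecidableEq D] [DecidableEq H]

namespace UHNAaux
open Finset

section Generic
variable {α : Type*} [Fintype α] [DecidableEq α]

lemma iterate_fixed (f : Finset α → Finset α) (hf : ∀ s, s ⊆ f s) :
    f (f^[Fintype.card α] ∅) = f^[Fintype.card α] ∅ := by
  have key : ∀ i : ℕ, f (f^[i] (∅ : Finset α)) = f^[i] ∅ ∨ i ≤ (f^[i] (∅ : Finset α)).card := by
    intro i
    induction i with
    | zero => right; simp
    | succ n ih =>
      by_cases hfix : f (f^[n] (∅ : Finset α)) = f^[n] ∅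
      · left; rw [Function.iterate_succ_apply', hfix, hfix]
      · right
        rcases ih with h | h
        · exact absurd h hfix
        · rw [Function.iterate_succ_apply']
          have hss : f^[n] (∅ : Finset α) ⊂ f (f^[n] ∅) :=
            ssubset_of_subset_of_ne (hf _) (fun he => hfix he.symm)
          have := Finset.card_lt_card hss
          omega
  rcases key (Fintype.card α) with h | h
  · exact h
  · have hcard : (f^[Fintype.card α] (∅ : Finset α)).card = Fintype.card α :=
      le_antisymm (Finset.card_le_univ _) h
    have huniv : f^[Fintype.card α] (∅ : Finset α) = univ := Finset.eq_univ_of_card _ hcard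
    rw [huniv]
    exact Finset.Subset.antisymm (Finset.subset_univ _) (huniv ▸ hf (f^[Fintype.card α] (∅ : Finset α)))

def pos (f : α → ℕ) (x : α) : ℕ := (univ.filter fun y => f y < f x).card

lemma pos_lt_card (f : α → ℕ) (x : α) : pos f x < Fintype.card α := by
  have hsub : (univ.filter fun y => f y < f x) ⊆ univ.erase x := by
    intro y hy
    rw [Finset.mem_filter] at hy
    refine Finset.mem_erase.2 ⟨?_, Finset.mem_univ y⟩
    rintro rfl
    exact absurd hy.2 (lt_irrefl _)
  have h1 := Finset.card_le_card hsub
  have h2 : (univ.erase x).card = Fintype.card α - 1 := by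
    rw [Finset.card_erase_of_mem (Finset.mem_univ x), Finset.card_univ]
  have h3 : 0 < Fintype.card α := Fintype.card_pos_iff.2 ⟨x⟩
  unfold pos
  omega

lemma pos_lt_pos_of (f : α → ℕ) {x y : α} (h : f x < f y) : pos f x < pos f y := by
  apply Finset.card_lt_card
  rw [Finset.ssubset_def]
  constructor
  · intro z hz
    simp only [Finset.mem_filter, Finset.mem_univ, true_and] at hz ⊢
    omega
  · intro hsub
    have hx : x ∈ univ.filter fun z => f z < f y := by
      simp only [Finset.mem_filter, Finset.mem_univ, true_and]; exact h
    have := hsub hx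
    simp only [Finset.mem_filter, Finset.mem_univ, true_and] at this
    exact absurd this (lt_irrefl _)

lemma pos_lt_pos (f : α → ℕ) (hf : Function.Injective f) (x y : α) :
    pos f x < pos f y ↔ f x < f y := by
  constructor
  · intro h
    rcases lt_trichotomy (f x) (f y) with h' | h' | h'
    · exact h'
    · exact absurd h (by rw [hf h']; exact lt_irrefl _)
    · exact absurd h (by have := pos_lt_pos_of f h'; omega)
  · exact pos_lt_pos_of f

lemma pos_inj (f : α → ℕ) (hf : Function.Injective f) : Function.Injective (pos f) := by
  intro x y h
  by_contra hne
  rcases lt_trichotomy (f x) (f y) with h' | h' | h'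
  · have := pos_lt_pos_of f h'; omega
  · exact hne (hf h')
  · have := pos_lt_pos_of f h'; omega

lemma pos_surj (f : α → ℕ) (hf : Function.Injective f) {i : ℕ} (hi : i < Fintype.card α) :
    ∃ x, pos f x = i := by
  let g : α → Fin (Fintype.card α) := fun x => ⟨pos f x, pos_lt_card f x⟩
  have hg : Function.Injective g := fun x y h => pos_inj f hf (congrArg Fin.val h)
  have hbij : Function.Bijective g :=
    (Fintype.bijective_iff_injective_and_card g).2 ⟨hg, by simp⟩
  obtain ⟨x, hx⟩ := hbij.2 ⟨i, hi⟩
  exact ⟨x, congrArg Fin.val hx⟩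

lemma card_pos_Ico (f : α → ℕ) (hf : Function.Injective f) {a b : ℕ}
    (hb : b ≤ Fintype.card α) :
    (univ.filter fun y => a ≤ pos f y ∧ pos f y < b).card = b - a := by
  rw [← Nat.card_Ico a b]
  apply Finset.card_bij (fun y _ => pos f y)
  · intro y hy
    simp only [Finset.mem_filter, Finset.mem_univ, true_and] at hy
    exact Finset.mem_Ico.2 hy
  · intro y hy y' hy' h
    exact pos_inj f hf h
  · intro j hj
    rw [Finset.mem_Ico] at hj
    obtain ⟨y, hy⟩ := pos_surj f hf (lt_of_lt_of_le hj.2 hb)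
    refine ⟨y, ?_, hy⟩
    simp only [Finset.mem_filter, Finset.mem_univ, true_and, hy]
    exact ⟨hj.1, hj.2⟩

lemma mem_topN {r : α → ℕ} {n : ℕ} {s : Finset α} {x : α} :
    x ∈ topN r n s ↔ x ∈ s ∧ (s.filter fun y => r y < r x).card < n := by
  unfold topN
  rw [Finset.mem_filter]

lemma topN_zero (r : α → ℕ) (s : Finset α) : topN r 0 s = ∅ := by
  ext x
  simp [mem_topN]

end Generic

lemma div_mod_decomp (a b : ℕ) (hb : 1 ≤ b) :
    ∃ q r, a = q * b + r ∧ r < b ∧ a / b = q ∧ a % b = r :=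
  ⟨a / b, a % b, (Nat.div_add_mod' a b).symm, Nat.mod_lt a hb, rfl, rfl⟩

lemma div_eq_iff' {a b c : ℕ} (hb : 1 ≤ b) : a / b = c ↔ c * b ≤ a ∧ a < c * b + b := by
  constructor
  · rintro rfl
    refine ⟨Nat.div_mul_le_self a b, ?_⟩
    obtain ⟨q, r, he, hr, hq, hm⟩ := div_mod_decomp a b hb
    rw [hq]
    omega
  · rintro ⟨h1, h2⟩
    obtain ⟨q, r, he, hr, hq, hm⟩ := div_mod_decomp a b hb
    rw [hq]
    by_contra hne
    rcases Nat.lt_or_ge q c with hlt | hge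
    · have : (q + 1) * b ≤ c * b := Nat.mul_le_mul_right b hlt
      have h4 : (q + 1) * b = q * b + b := by ring
      omega
    · have hgt : c < q := lt_of_le_of_ne hge (fun he' => hne he'.symm)
      have : (c + 1) * b ≤ q * b := Nat.mul_le_mul_right b hgt
      have h4 : (c + 1) * b = c * b + b := by ring
      omega

section Stage
variable {D H : Type*} [Fintype D] [Fintype H] [DecidableEq D] [DecidableEq H]

structure CP (M : Market D H) (rD : H → ℕ) (rH : D → ℕ) (l k : ℕ) : Prop where
  hrD : ∀ d, M.rankDH d = rD
  hrH : ∀ h, M.rankHD h = rH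
  injD : Function.Injective rD
  injH : Function.Injective rH
  accD : ∀ d h, M.accD d h
  accH : ∀ d h, M.accH h d
  hl : 1 ≤ l
  hk : 1 ≤ k

variable {M : Market D H} {rD : H → ℕ} {rH : D → ℕ} {l k : ℕ}

def Rstar (rD : H → ℕ) (rH : D → ℕ) (l k : ℕ) : Finset (H × D) :=
  univ.filter fun p => pos rH p.2 / l < pos rD p.1 / k

def Sstar (rD : H → ℕ) (rH : D → ℕ) (l k : ℕ) : Finset (D × H) :=
  univ.filter fun p => pos rH p.1 / l = pos rD p.2 / k ∧ pos rD p.2 % k < pos rH p.1 % l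

lemma hProps_eq (hcp : CP M rD rH l k) (R : Finset (H × D)) (h : H) :
    hProps M (fun _ => l) R h = topN rH l (univ.filter fun d => (h, d) ∉ R) := by
  unfold hProps
  rw [hcp.hrH h]
  congr 1
  ext d
  simp [hcp.accH d h]

lemma dKeeps_eq (hcp : CP M rD rH l k) (R : Finset (H × D)) (d : D) :
    dKeeps M (fun _ => l) (fun _ => k) R d
      = topN rD k (univ.filter fun h => d ∈ hProps M (fun _ => l) R h) := by
  unfold dKeeps
  rw [show (fun h => M.rankDH d h) = rD from hcp.hrD d]
  congr 1
  ext h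
  simp [hcp.accD d h]

lemma dProps_eq (hcp : CP M rD rH l k) (V : Finset (H × D)) (S : Finset (D × H)) (d : D) :
    dProps M V S d = topN rD 1 (univ.filter fun h => (h, d) ∈ V ∧ (d, h) ∉ S) := by
  unfold dProps
  rw [hcp.hrD d]

lemma hKeeps_eq (hcp : CP M rD rH l k) (V : Finset (H × D)) (S : Finset (D × H)) (h : H) :
    hKeeps M V S h = topN rH 1 (univ.filter fun d => h ∈ dProps M V S d) := by
  unfold hKeeps
  rw [hcp.hrH h]

lemma propose_block (hcp : CP M rD rH l k) {R : Finset (H × D)}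
    (hR : R ⊆ Rstar rD rH l k) {h : H} {d : D}
    (hd : d ∈ hProps M (fun _ => l) R h) :
    pos rH d / l ≤ pos rD h / k := by
  by_contra hlt
  push_neg at hlt
  obtain ⟨bh, rh', heh, hrh, hqh, hmh⟩ := div_mod_decomp (pos rD h) k hcp.hk
  obtain ⟨bd, rd', hed, hrd, hqd, hmd⟩ := div_mod_decomp (pos rH d) l hcp.hl
  rw [hqh, hqd] at hlt
  have hsucc : (bh + 1) * l ≤ bd * l := Nat.mul_le_mul_right l (by omega)
  have hsm : (bh + 1) * l = bh * l + l := by ring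
  have hbound : bh * l + l ≤ Fintype.card D := by
    have h4 := pos_lt_card rH d
    omega
  have hT : (univ.filter fun y => bh * l ≤ pos rH y ∧ pos rH y < bh * l + l).card = l := by
    rw [card_pos_Ico rH hcp.injH hbound]
    omega
  have hsub : (univ.filter fun y => bh * l ≤ pos rH y ∧ pos rH y < bh * l + l)
      ⊆ (univ.filter fun d' => (h, d') ∉ R).filter fun y => rH y < rH d := by
    intro y hy
    simp only [Finset.mem_filter, Finset.mem_univ, true_and] at hy ⊢
    constructor
    · intro hmem
      have hst := hR hmem
      simp only [Rstar, Finset.mem_filter, Finset.mem_univ, true_and] at hst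
      have hyd : pos rH y / l = bh := (div_eq_iff' hcp.hl).2 ⟨hy.1, hy.2⟩
      rw [hyd, hqh] at hst
      omega
    · exact (pos_lt_pos rH hcp.injH y d).1 (by omega)
  rw [hProps_eq hcp, mem_topN] at hd
  have hcl := Finset.card_le_card hsub
  omega

lemma keep_lemma (hcp : CP M rD rH l k) {R : Finset (H × D)}
    (hR : R ⊆ Rstar rD rH l k) {h : H} {d : D}
    (hd : d ∈ hProps M (fun _ => l) R h)
    (hle : pos rD h / k ≤ pos rH d / l) :
    h ∈ dKeeps M (fun _ => l) (fun _ => k) R d := by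
  rw [dKeeps_eq hcp, mem_topN]
  refine ⟨by simp only [Finset.mem_filter, Finset.mem_univ, true_and]; exact hd, ?_⟩
  obtain ⟨b, rb, heh, hrb, hqh, hmh⟩ := div_mod_decomp (pos rD h) k hcp.hk
  have hsub : ((univ.filter fun h' => d ∈ hProps M (fun _ => l) R h').filter
        fun h' => rD h' < rD h)
      ⊆ univ.filter fun h' => b * k ≤ pos rD h' ∧ pos rD h' < pos rD h := by
    intro h' hh'
    simp only [Finset.mem_filter, Finset.mem_univ, true_and] at hh' ⊢
    obtain ⟨hp, hltr⟩ := hh'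
    have h5 : pos rD h' < pos rD h := (pos_lt_pos rD hcp.injD h' h).2 hltr
    refine ⟨?_, h5⟩
    have h6 : pos rH d / l ≤ pos rD h' / k := propose_block hcp hR hp
    have h7 : b ≤ pos rD h' / k := by rw [← hqh]; exact le_trans hle h6
    have h8 : b * k ≤ (pos rD h' / k) * k := Nat.mul_le_mul_right k h7
    have h9 : (pos rD h' / k) * k ≤ pos rD h' := Nat.div_mul_le_self _ _
    exact le_trans h8 h9
  have hIco : (univ.filter fun h' => b * k ≤ pos rD h' ∧ pos rD h' < pos rD h).card
      = pos rD h - b * k := card_pos_Ico rD hcp.injD (le_of_lt (pos_lt_card rD h))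
  have hcl := Finset.card_le_card hsub
  rw [hIco] at hcl
  omega

lemma iRej_subset (hcp : CP M rD rH l k) :
    iRej M (fun _ => l) (fun _ => k) ⊆ Rstar rD rH l k := by
  unfold iRej
  generalize Fintype.card D * Fintype.card H = N
  induction N with
  | zero => simp
  | succ n ih =>
    rw [Function.iterate_succ_apply']
    intro p hp
    unfold iStep at hp
    rw [Finset.mem_union] at hp
    rcases hp with hp | hp
    · exact ih hp
    · simp only [Finset.mem_filter, Finset.mem_univ, true_and] at hp
      obtain ⟨h1, h2⟩ := hp
      simp only [Rstar, Finset.mem_filter, Finset.mem_univ, true_and]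
      by_contra hcon
      push_neg at hcon
      exact h2 (keep_lemma hcp ih h1 hcon)

lemma iRej_fix (M : Market D H) (l k : ℕ) :
    iStep M (fun _ => l) (fun _ => k) (iRej M (fun _ => l) (fun _ => k))
      = iRej M (fun _ => l) (fun _ => k) := by
  unfold iRej
  have h := iterate_fixed (α := H × D) (iStep M (fun _ => l) (fun _ => k))
    (fun s => Finset.subset_union_left)
  rwa [Fintype.card_prod, Nat.mul_comm] at h

lemma fix_keep {h : H} {d : D}
    (hd : d ∈ hProps M (fun _ => l) (iRej M (fun _ => l) (fun _ => k)) h) :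
    h ∈ dKeeps M (fun _ => l) (fun _ => k) (iRej M (fun _ => l) (fun _ => k)) d := by
  by_contra hno
  have hmem : (h, d) ∈ iStep M (fun _ => l) (fun _ => k) (iRej M (fun _ => l) (fun _ => k)) :=
    Finset.mem_union_right _
      (by simp only [Finset.mem_filter, Finset.mem_univ, true_and]; exact ⟨hd, hno⟩)
  rw [iRej_fix] at hmem
  unfold hProps at hd
  rw [mem_topN] at hd
  simp only [Finset.mem_filter, Finset.mem_univ, true_and] at hd
  exact hd.1.2 hmem

lemma hProps_char (hcp : CP M rD rH l k) :
    ∀ b : ℕ, ∀ h : H, pos rD h / k = b → ∀ d : D,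
      (d ∈ hProps M (fun _ => l) (iRej M (fun _ => l) (fun _ => k)) h ↔ pos rH d / l = b) := by
  intro b
  induction b using Nat.strong_induction_on with
  | _ b IH =>
  intro h hbh d
  have hR : iRej M (fun _ => l) (fun _ => k) ⊆ Rstar rD rH l k := iRej_subset hcp
  have fwd : ∀ d' : D, d' ∈ hProps M (fun _ => l) (iRej M (fun _ => l) (fun _ => k)) h →
      pos rH d' / l = b := by
    intro d' hd'
    have hle : pos rH d' / l ≤ b := hbh ▸ propose_block hcp hR hd'
    by_cases heq : pos rH d' / l = b
    · exact heq
    · exfalso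
      have hlt : pos rH d' / l < b := lt_of_le_of_ne hle heq
      obtain ⟨q', r', he', hr', hq', hm'⟩ := div_mod_decomp (pos rH d') l hcp.hl
      rw [hq'] at hlt
      obtain ⟨qh, rh', heh, hrh, hqh, hmh⟩ := div_mod_decomp (pos rD h) k hcp.hk
      have hqb : qh = b := by rw [← hbh, hqh]
      subst hqb
      have hsucc : (q' + 1) * k ≤ qh * k := Nat.mul_le_mul_right k (by omega)
      have hsm : (q' + 1) * k = q' * k + k := by ring
      have hbound : q' * k + k ≤ Fintype.card H := by
        have h4 := pos_lt_card rD h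
        omega
      have hT : (univ.filter fun h'' => q' * k ≤ pos rD h'' ∧ pos rD h'' < q' * k + k).card
          = k := by
        rw [card_pos_Ico rD hcp.injD hbound]
        omega
      have hsub : (univ.filter fun h'' => q' * k ≤ pos rD h'' ∧ pos rD h'' < q' * k + k)
          ⊆ (univ.filter fun h'' =>
              d' ∈ hProps M (fun _ => l) (iRej M (fun _ => l) (fun _ => k)) h'').filter
            fun h'' => rD h'' < rD h := by
        intro h'' hh''
        simp only [Finset.mem_filter, Finset.mem_univ, true_and] at hh'' ⊢
        have hdiv : pos rD h'' / k = q' := (div_eq_iff' hcp.hk).2 ⟨hh''.1, hh''.2⟩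
        constructor
        · exact (IH q' hlt h'' hdiv d').2 hq'
        · exact (pos_lt_pos rD hcp.injD h'' h).1 (by omega)
      have hkeep := fix_keep hd'
      rw [dKeeps_eq hcp, mem_topN] at hkeep
      have hcl := Finset.card_le_card hsub
      omega
  constructor
  · exact fwd d
  · intro hd
    have havail : (univ.filter fun y => (h, y) ∉ iRej M (fun _ => l) (fun _ => k))
        = univ.filter fun y => b * l ≤ pos rH y := by
      apply Finset.Subset.antisymm
      · intro y hy
        simp only [Finset.mem_filter, Finset.mem_univ, true_and] at hy ⊢
        by_contra hlt
        push_neg at hlt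
        have hne : (univ.filter fun z => (h, z) ∉ iRej M (fun _ => l) (fun _ => k)).Nonempty :=
          ⟨y, by simp only [Finset.mem_filter, Finset.mem_univ, true_and]; exact hy⟩
        obtain ⟨z, hz, hzmin⟩ := Finset.exists_min_image _ rH hne
        have hzprop : z ∈ hProps M (fun _ => l) (iRej M (fun _ => l) (fun _ => k)) h := by
          rw [hProps_eq hcp, mem_topN]
          refine ⟨hz, ?_⟩
          have hemp : (univ.filter fun w => (h, w) ∉ iRej M (fun _ => l) (fun _ => k)).filter
              (fun w => rH w < rH z) = ∅ := by
            rw [Finset.filter_eq_empty_iff]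
            intro w hw
            exact not_lt.2 (hzmin w hw)
          rw [hemp]
          rw [Finset.card_empty]; exact hcp.hl
        have hzb : pos rH z / l = b := fwd z hzprop
        have hzge : b * l ≤ pos rH z := ((div_eq_iff' hcp.hl).1 hzb).1
        have hyz : rH y < rH z := (pos_lt_pos rH hcp.injH y z).1 (by omega)
        have hmin' := hzmin y (by simp only [Finset.mem_filter, Finset.mem_univ, true_and]; exact hy)
        omega
      · intro y hy
        simp only [Finset.mem_filter, Finset.mem_univ, true_and] at hy ⊢
        intro hmem
        have hst := hR hmem
        simp only [Rstar, Finset.mem_filter, Finset.mem_univ, true_and] at hst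
        rw [hbh] at hst
        have hgeb : b ≤ pos rH y / l := (Nat.le_div_iff_mul_le hcp.hl).2 hy
        exact absurd hst (not_lt.2 hgeb)
    rw [hProps_eq hcp, havail, mem_topN]
    constructor
    · simp only [Finset.mem_filter, Finset.mem_univ, true_and]
      exact ((div_eq_iff' hcp.hl).1 hd).1
    · have hsub : (univ.filter fun y => b * l ≤ pos rH y).filter (fun y => rH y < rH d)
          ⊆ univ.filter fun y => b * l ≤ pos rH y ∧ pos rH y < pos rH d := by
        intro y hy
        simp only [Finset.mem_filter, Finset.mem_univ, true_and] at hy ⊢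
        exact ⟨hy.1, (pos_lt_pos rH hcp.injH y d).2 hy.2⟩
      have hIco : (univ.filter fun y => b * l ≤ pos rH y ∧ pos rH y < pos rH d).card
          = pos rH d - b * l := card_pos_Ico rH hcp.injH (le_of_lt (pos_lt_card rH d))
      have hcl := Finset.card_le_card hsub
      rw [hIco] at hcl
      have hub : pos rH d < b * l + l := ((div_eq_iff' hcp.hl).1 hd).2
      have hl1 := hcp.hl
      omega

lemma interviews_char (hcp : CP M rD rH l k) (h : H) (d : D) :
    (h, d) ∈ interviews M (fun _ => l) (fun _ => k) ↔ pos rH d / l = pos rD h / k := by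
  unfold interviews
  simp only [Finset.mem_filter, Finset.mem_univ, true_and]
  constructor
  · rintro ⟨h1, -⟩
    exact (hProps_char hcp (pos rD h / k) h rfl d).1 h1
  · intro hb
    have h1 := (hProps_char hcp (pos rD h / k) h rfl d).2 hb
    exact ⟨h1, fix_keep h1⟩

lemma propose2 (hcp : CP M rD rH l k) {S : Finset (D × H)}
    (hS : S ⊆ Sstar rD rH l k) {d : D} {h : H}
    (hd : h ∈ dProps M (interviews M (fun _ => l) (fun _ => k)) S d) :
    pos rH d / l = pos rD h / k ∧ pos rD h % k ≤ pos rH d % l := by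
  rw [dProps_eq hcp, mem_topN] at hd
  obtain ⟨hbase, hcard⟩ := hd
  simp only [Finset.mem_filter, Finset.mem_univ, true_and] at hbase
  obtain ⟨hV, hnS⟩ := hbase
  have hblock := (interviews_char hcp h d).1 hV
  refine ⟨hblock, ?_⟩
  by_contra hgt
  push_neg at hgt
  obtain ⟨q, r, he, hr, hq, hm⟩ := div_mod_decomp (pos rD h) k hcp.hk
  obtain ⟨qd, rd, hed, hrd, hqd, hmd⟩ := div_mod_decomp (pos rH d) l hcp.hl
  rw [hm, hmd] at hgt
  have hex : q * k + rd < Fintype.card H := by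
    have := pos_lt_card rD h
    omega
  obtain ⟨h2, hh2⟩ := pos_surj rD hcp.injD hex
  have hdm : pos rD h2 / k = q ∧ pos rD h2 % k = rd :=
    (Nat.div_mod_unique hcp.hk).2 ⟨by rw [hh2]; ring, by omega⟩
  have hV2 : (h2, d) ∈ interviews M (fun _ => l) (fun _ => k) :=
    (interviews_char hcp h2 d).2 (by rw [hdm.1, ← hq]; exact hblock)
  have hnS2 : (d, h2) ∉ S := by
    intro hmem
    have hst := hS hmem
    simp only [Sstar, Finset.mem_filter, Finset.mem_univ, true_and] at hst
    rw [hdm.2, hmd] at hst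
    omega
  have hlt2 : rD h2 < rD h := (pos_lt_pos rD hcp.injD h2 h).1 (by rw [hh2]; omega)
  have hmem2 : h2 ∈ (univ.filter fun h' =>
      (h', d) ∈ interviews M (fun _ => l) (fun _ => k) ∧ (d, h') ∉ S).filter
      fun h' => rD h' < rD h := by
    simp only [Finset.mem_filter, Finset.mem_univ, true_and]
    exact ⟨⟨hV2, hnS2⟩, hlt2⟩
  have := Finset.card_pos.2 ⟨h2, hmem2⟩
  omega

lemma keep2 (hcp : CP M rD rH l k) {S : Finset (D × H)}
    (hS : S ⊆ Sstar rD rH l k) {d : D} {h : H}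
    (hd : h ∈ dProps M (interviews M (fun _ => l) (fun _ => k)) S d)
    (hle : pos rH d % l ≤ pos rD h % k) :
    d ∈ hKeeps M (interviews M (fun _ => l) (fun _ => k)) S h := by
  rw [hKeeps_eq hcp, mem_topN]
  refine ⟨by simp only [Finset.mem_filter, Finset.mem_univ, true_and]; exact hd, ?_⟩
  rw [Nat.lt_one_iff, Finset.card_eq_zero, Finset.filter_eq_empty_iff]
  intro d' hd'
  simp only [Finset.mem_filter, Finset.mem_univ, true_and] at hd'
  intro hlt
  obtain ⟨hbl', hle'⟩ := propose2 hcp hS hd'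
  obtain ⟨hbl, -⟩ := propose2 hcp hS hd
  have hpp : pos rH d' < pos rH d := (pos_lt_pos rH hcp.injH d' d).2 hlt
  obtain ⟨q1, r1, he1, hr1, hq1, hm1⟩ := div_mod_decomp (pos rH d') l hcp.hl
  obtain ⟨q2, r2, he2, hr2, hq2, hm2⟩ := div_mod_decomp (pos rH d) l hcp.hl
  obtain ⟨qh, rh, heh, hrh, hqh, hmh⟩ := div_mod_decomp (pos rD h) k hcp.hk
  rw [hq1, hqh] at hbl'
  rw [hq2, hqh] at hbl
  rw [hm1, hmh] at hle'
  rw [hm2, hmh] at hle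
  have hqq : q1 = q2 := by rw [hbl', hbl]
  subst hqq
  omega

lemma mRej_fix (M : Market D H) (V : Finset (H × D)) :
    mStep M V (mRej M V) = mRej M V := by
  unfold mRej
  have h := iterate_fixed (α := D × H) (mStep M V) (fun s => Finset.subset_union_left)
  rwa [Fintype.card_prod] at h

lemma fix2 (M : Market D H) (V : Finset (H × D)) {d : D} {h : H}
    (hd : h ∈ dProps M V (mRej M V) d) :
    d ∈ hKeeps M V (mRej M V) h := by
  by_contra hno
  have hmem : (d, h) ∈ mStep M V (mRej M V) :=
    Finset.mem_union_right _
      (by simp only [Finset.mem_filter, Finset.mem_univ, true_and]; exact ⟨hd, hno⟩)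
  rw [mRej_fix] at hmem
  unfold dProps at hd
  rw [mem_topN] at hd
  simp only [Finset.mem_filter, Finset.mem_univ, true_and] at hd
  exact hd.1.2 hmem

lemma mRej_subset (hcp : CP M rD rH l k) :
    mRej M (interviews M (fun _ => l) (fun _ => k)) ⊆ Sstar rD rH l k := by
  unfold mRej
  generalize Fintype.card D * Fintype.card H = N
  induction N with
  | zero => simp
  | succ n ih =>
    rw [Function.iterate_succ_apply']
    intro p hp
    unfold mStep at hp
    rw [Finset.mem_union] at hp
    rcases hp with hp | hp
    · exact ih hp
    · simp only [Finset.mem_filter, Finset.mem_univ, true_and] at hp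
      obtain ⟨h1, h2⟩ := hp
      simp only [Sstar, Finset.mem_filter, Finset.mem_univ, true_and]
      refine ⟨(propose2 hcp ih h1).1, ?_⟩
      by_contra hcon
      push_neg at hcon
      exact h2 (keep2 hcp ih h1 hcon)

lemma dProps_char (hcp : CP M rD rH l k) :
    ∀ i : ℕ, ∀ d : D, pos rH d % l = i → ∀ h : H,
      (h ∈ dProps M (interviews M (fun _ => l) (fun _ => k))
          (mRej M (interviews M (fun _ => l) (fun _ => k))) d
        ↔ ((h, d) ∈ interviews M (fun _ => l) (fun _ => k) ∧ pos rD h % k = i)) := by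
  intro i
  induction i using Nat.strong_induction_on with
  | _ i IH =>
  intro d hdi h
  have hS := mRej_subset hcp
  have fwd : ∀ h' : H, h' ∈ dProps M (interviews M (fun _ => l) (fun _ => k))
      (mRej M (interviews M (fun _ => l) (fun _ => k))) d →
      ((h', d) ∈ interviews M (fun _ => l) (fun _ => k) ∧ pos rD h' % k = i) := by
    intro h' hd'
    obtain ⟨hbl, hle⟩ := propose2 hcp hS hd'
    have hVm : (h', d) ∈ interviews M (fun _ => l) (fun _ => k) :=
      (interviews_char hcp h' d).2 hbl
    refine ⟨hVm, ?_⟩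
    rw [hdi] at hle
    by_contra hne
    have hj : pos rD h' % k < i := lt_of_le_of_ne hle hne
    obtain ⟨q, r, he, hr, hq, hm⟩ := div_mod_decomp (pos rH d) l hcp.hl
    have hir : r = i := by rw [← hm, hdi]
    have hjl : pos rD h' % k < l := by omega
    have hex : q * l + pos rD h' % k < Fintype.card D := by
      have := pos_lt_card rH d
      omega
    obtain ⟨d2, hd2⟩ := pos_surj rH hcp.injH hex
    have hdm : pos rH d2 / l = q ∧ pos rH d2 % l = pos rD h' % k :=
      (Nat.div_mod_unique hcp.hl).2 ⟨by rw [hd2]; ring, hjl⟩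
    have hV2 : (h', d2) ∈ interviews M (fun _ => l) (fun _ => k) :=
      (interviews_char hcp h' d2).2 (by rw [hdm.1, ← hq]; exact hbl)
    have hprop2 : h' ∈ dProps M (interviews M (fun _ => l) (fun _ => k))
        (mRej M (interviews M (fun _ => l) (fun _ => k))) d2 :=
      (IH (pos rD h' % k) hj d2 hdm.2 h').2 ⟨hV2, rfl⟩
    have hlt : rH d2 < rH d := (pos_lt_pos rH hcp.injH d2 d).1 (by rw [hd2]; omega)
    have hkeep := fix2 M (interviews M (fun _ => l) (fun _ => k)) hd'
    rw [hKeeps_eq hcp, mem_topN] at hkeep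
    have hmem2 : d2 ∈ (univ.filter fun d'' => h' ∈ dProps M
        (interviews M (fun _ => l) (fun _ => k))
        (mRej M (interviews M (fun _ => l) (fun _ => k))) d'').filter
        fun d'' => rH d'' < rH d := by
      simp only [Finset.mem_filter, Finset.mem_univ, true_and]
      exact ⟨hprop2, hlt⟩
    have := Finset.card_pos.2 ⟨d2, hmem2⟩
    omega
  constructor
  · exact fwd h
  · rintro ⟨hV, hmod⟩
    rw [dProps_eq hcp, mem_topN]
    have hbase : h ∈ univ.filter fun h' => (h', d) ∈ interviews M (fun _ => l) (fun _ => k)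
        ∧ (d, h') ∉ mRej M (interviews M (fun _ => l) (fun _ => k)) := by
      simp only [Finset.mem_filter, Finset.mem_univ, true_and]
      refine ⟨hV, ?_⟩
      intro hmem
      have hst := hS hmem
      simp only [Sstar, Finset.mem_filter, Finset.mem_univ, true_and] at hst
      rw [hmod, hdi] at hst
      exact lt_irrefl _ hst.2
    refine ⟨hbase, ?_⟩
    rw [Nat.lt_one_iff, Finset.card_eq_zero, Finset.filter_eq_empty_iff]
    intro h' hh'
    intro hlt
    have hne : (univ.filter fun h'' => (h'', d) ∈ interviews M (fun _ => l) (fun _ => k)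
        ∧ (d, h'') ∉ mRej M (interviews M (fun _ => l) (fun _ => k))).Nonempty := ⟨h', hh'⟩
    obtain ⟨z, hz, hzmin⟩ := Finset.exists_min_image _ rD hne
    have hzprop : z ∈ dProps M (interviews M (fun _ => l) (fun _ => k))
        (mRej M (interviews M (fun _ => l) (fun _ => k))) d := by
      rw [dProps_eq hcp, mem_topN]
      refine ⟨hz, ?_⟩
      rw [Nat.lt_one_iff, Finset.card_eq_zero, Finset.filter_eq_empty_iff]
      intro w hw hwlt
      exact absurd (hzmin w hw) (not_le.2 hwlt)
    obtain ⟨hzV, hzi⟩ := fwd z hzprop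
    have hbz : pos rH d / l = pos rD z / k := (interviews_char hcp z d).1 hzV
    have hbh2 : pos rH d / l = pos rD h / k := (interviews_char hcp h d).1 hV
    have hzh : pos rD z = pos rD h := by
      obtain ⟨qz, rz, hez, hrz, hqz, hmz⟩ := div_mod_decomp (pos rD z) k hcp.hk
      obtain ⟨qh2, rh2, heh, hrh, hqh, hmh⟩ := div_mod_decomp (pos rD h) k hcp.hk
      have h1 : qz = qh2 := by rw [← hqz, ← hqh, ← hbz, ← hbh2]
      have h2 : rz = rh2 := by rw [← hmz, ← hmh, hzi, hmod]
      subst h1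
      subst h2
      omega
    have hzh' : z = h := pos_inj rD hcp.injD hzh
    have hle := hzmin h' hh'
    rw [hzh'] at hle
    exact absurd hlt (not_lt.2 hle)

lemma ikMatching_char (hcp : CP M rD rH l k) (d : D) (h : H) :
    (d, h) ∈ ikMatching M (fun _ => l) (fun _ => k)
      ↔ (pos rH d / l = pos rD h / k ∧ pos rH d % l = pos rD h % k) := by
  unfold ikMatching finalMatch
  simp only [Finset.mem_filter, Finset.mem_univ, true_and]
  constructor
  · rintro ⟨h1, -⟩
    obtain ⟨hV, hmod⟩ := (dProps_char hcp (pos rH d % l) d rfl h).1 h1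
    exact ⟨(interviews_char hcp h d).1 hV, hmod.symm⟩
  · rintro ⟨h1, h2⟩
    have hV : (h, d) ∈ interviews M (fun _ => l) (fun _ => k) :=
      (interviews_char hcp h d).2 h1
    have hp := (dProps_char hcp (pos rH d % l) d rfl h).2 ⟨hV, h2.symm⟩
    exact ⟨hp, fix2 M (interviews M (fun _ => l) (fun _ => k)) hp⟩

lemma interviews_l0 (M : Market D H) (k : ℕ) :
    interviews M (fun _ => (0 : ℕ)) (fun _ => k) = ∅ := by
  ext p
  simp only [interviews, Finset.mem_filter, Finset.mem_univ, true_and, Finset.notMem_empty,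
    iff_false, not_and]
  intro hp
  exact absurd hp (by unfold hProps; rw [topN_zero]; exact Finset.notMem_empty _)

lemma interviews_k0 (M : Market D H) (l : ℕ) :
    interviews M (fun _ => l) (fun _ => (0 : ℕ)) = ∅ := by
  ext p
  simp only [interviews, Finset.mem_filter, Finset.mem_univ, true_and, Finset.notMem_empty,
    iff_false, not_and]
  intro _
  unfold dKeeps
  rw [topN_zero]
  exact Finset.notMem_empty _

lemma finalMatch_emptyV (M : Market D H) : finalMatch M ∅ = ∅ := by
  ext p
  simp only [finalMatch, Finset.mem_filter, Finset.mem_univ, true_and, Finset.notMem_empty,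
    iff_false, not_and]
  intro hp
  exfalso
  unfold dProps at hp
  rw [mem_topN] at hp
  simp only [Finset.mem_filter, Finset.mem_univ, true_and, Finset.notMem_empty, false_and] at hp

end Stage

end UHNAaux


/-- Under common preferences, a homogeneous arrangement `(l,k)` with
`l ≠ k` and `min {l,k} < min {|D|, |H|}` is not adequate: the `(l,k)`-matching is
not stable. -/
theorem unequal_homogeneous_not_adequate
    (M : Market D H) (hM : CommonPrefs M) (l k : ℕ) (hlk : l ≠ k)
    (hmin : min l k < min (Fintype.card D) (Fintype.card H)) :
    ¬ Adequate M (fun _ => l) (fun _ => k) := by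
  obtain ⟨⟨hinjD0, hinjH0⟩, hcDH, hcHD, hacc⟩ := hM
  have hDpos : 0 < Fintype.card D :=
    lt_of_le_of_lt (Nat.zero_le _) (lt_of_lt_of_le hmin (min_le_left _ _))
  have hHpos : 0 < Fintype.card H :=
    lt_of_le_of_lt (Nat.zero_le _) (lt_of_lt_of_le hmin (min_le_right _ _))
  obtain ⟨d0⟩ := Fintype.card_pos_iff.1 hDpos
  obtain ⟨h0⟩ := Fintype.card_pos_iff.1 hHpos
  intro hA
  have hA' : ∀ d h, ¬ Blocks M (ikMatching M (fun _ => l) (fun _ => k)) d h := hA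
  by_cases hl0 : l = 0
  · subst hl0
    have hμ : ikMatching M (fun _ => 0) (fun _ => k) = ∅ := by
      unfold ikMatching
      rw [UHNAaux.interviews_l0, UHNAaux.finalMatch_emptyV]
    refine hA' d0 h0 ⟨(hacc d0 h0).1, (hacc d0 h0).2, ?_, ?_, ?_⟩ <;> rw [hμ] <;> simp
  by_cases hk0 : k = 0
  · subst hk0
    have hμ : ikMatching M (fun _ => l) (fun _ => 0) = ∅ := by
      unfold ikMatching
      rw [UHNAaux.interviews_k0, UHNAaux.finalMatch_emptyV]
    refine hA' d0 h0 ⟨(hacc d0 h0).1, (hacc d0 h0).2, ?_, ?_, ?_⟩ <;> rw [hμ] <;> simp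
  have hl : 1 ≤ l := Nat.one_le_iff_ne_zero.2 hl0
  have hk : 1 ≤ k := Nat.one_le_iff_ne_zero.2 hk0
  set rD := M.rankDH d0 with hrDdef
  set rH := M.rankHD h0 with hrHdef
  have hcp : UHNAaux.CP M rD rH l k :=
    ⟨fun d => hcDH d d0, fun h => hcHD h h0, hinjD0 d0, hinjH0 h0,
      fun d h => (hacc d h).1, fun d h => (hacc d h).2, hl, hk⟩
  have hmD : min l k < Fintype.card D := lt_of_lt_of_le hmin (min_le_left _ _)
  have hmH : min l k < Fintype.card H := lt_of_lt_of_le hmin (min_le_right _ _)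
  obtain ⟨ds, hds⟩ := UHNAaux.pos_surj rH hcp.injH hmD
  obtain ⟨hs, hhs⟩ := UHNAaux.pos_surj rD hcp.injD hmH
  apply hA' ds hs
  rcases Nat.lt_or_ge l k with hlk' | hge
  · -- l < k, min = l
    have hminl : min l k = l := min_eq_left (le_of_lt hlk')
    rw [hminl] at hds hhs
    refine ⟨(hacc ds hs).1, (hacc ds hs).2, ?_, ?_, ?_⟩
    · intro hmem
      obtain ⟨ha, hb⟩ := (UHNAaux.ikMatching_char hcp ds hs).1 hmem
      rw [hds, hhs, Nat.div_self hl, Nat.div_eq_of_lt hlk'] at ha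
      exact one_ne_zero ha
    · intro h' hmem
      obtain ⟨ha, hb⟩ := (UHNAaux.ikMatching_char hcp ds h').1 hmem
      rw [hds, Nat.div_self hl] at ha
      rw [hds, Nat.mod_self] at hb
      have hph : UHNAaux.pos rD h' = k := by
        obtain ⟨q, r, he, hr, hq, hm⟩ := UHNAaux.div_mod_decomp (UHNAaux.pos rD h') k hk
        rw [hq] at ha
        rw [hm] at hb
        rw [he, ← ha, ← hb]
        ring
      rw [hcp.hrD ds]
      exact (UHNAaux.pos_lt_pos rD hcp.injD hs h').1 (by rw [hhs, hph]; exact hlk')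
    · intro d' hmem
      obtain ⟨ha, hb⟩ := (UHNAaux.ikMatching_char hcp d' hs).1 hmem
      rw [hhs, Nat.mod_eq_of_lt hlk'] at hb
      have hlt := Nat.mod_lt (UHNAaux.pos rH d') hl
      exact absurd hb (Nat.ne_of_lt hlt)
  · -- k < l
    have hlk'' : k < l := lt_of_le_of_ne hge (Ne.symm hlk)
    have hminl : min l k = k := min_eq_right (le_of_lt hlk'')
    rw [hminl] at hds hhs
    refine ⟨(hacc ds hs).1, (hacc ds hs).2, ?_, ?_, ?_⟩
    · intro hmem
      obtain ⟨ha, hb⟩ := (UHNAaux.ikMatching_char hcp ds hs).1 hmem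
      rw [hds, hhs, Nat.div_eq_of_lt hlk'', Nat.div_self hk] at ha
      exact absurd ha (by omega)
    · intro h' hmem
      obtain ⟨ha, hb⟩ := (UHNAaux.ikMatching_char hcp ds h').1 hmem
      rw [hds, Nat.mod_eq_of_lt hlk''] at hb
      have hlt := Nat.mod_lt (UHNAaux.pos rD h') hk
      exact absurd hb.symm (Nat.ne_of_lt hlt)
    · intro d' hmem
      obtain ⟨ha, hb⟩ := (UHNAaux.ikMatching_char hcp d' hs).1 hmem
      rw [hhs, Nat.div_self hk] at ha
      rw [hhs, Nat.mod_self] at hb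
      have hpd : UHNAaux.pos rH d' = l := by
        obtain ⟨q, r, he, hr, hq, hm⟩ := UHNAaux.div_mod_decomp (UHNAaux.pos rH d') l hl
        rw [hq] at ha
        rw [hm] at hb
        rw [he, ha, hb]
        ring
      rw [hcp.hrH hs]
      exact (UHNAaux.pos_lt_pos rH hcp.injH ds d').1 (by rw [hds, hpd]; exact hlk'')
end

section
/- Under common preferences, a homogeneous arrangement (l,k) with l = k ≤ min{|D|,|H|} is adequate: the (l,l)-matching matches d_t with h_t for every t = 1,…,min{|D|,|H|}, which is the unique stable matching. -/
/- Formal model of the two-step interview-then-match process of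
Echenique-et-al-style markets: Step 1 computes the interview matching by
hospital-proposing deferred acceptance (with responsive, capacity-constrained
choice functions); Step 2 computes the final one-to-one matching by
doctor-proposing deferred acceptance on preferences restricted to interview
partners. -/

open Finset

section Aux
variable {D H : Type*} [Fintype D] [Fintype H] [DecidableEq D] [DecidableEq H]

/-- generic fixed point lemma -/
lemma iter_fixed {α : Type*} [Fintype α] [DecidableEq α] (f : Finset α → Finset α)
    (hf : ∀ s, s ⊆ f s) (n : ℕ) (hn : Fintype.card α ≤ n) :
    f (f^[n] ∅) = f^[n] ∅ := by
  have key : ∀ k, k ≤ (f^[k] (∅ : Finset α)).card ∨ f (f^[k] (∅ : Finset α)) = f^[k] ∅ := by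
    intro k
    induction k with
    | zero => left; omega
    | succ k ih =>
      rcases ih with ih | ih
      · by_cases he : f (f^[k] (∅ : Finset α)) = f^[k] ∅
        · right
          rw [Function.iterate_succ_apply', he]
          exact he
        · left
          rw [Function.iterate_succ_apply']
          have h1 : (f^[k] (∅ : Finset α)).card < (f (f^[k] ∅)).card :=
            Finset.card_lt_card (Finset.ssubset_iff_subset_ne.mpr ⟨hf _, Ne.symm he⟩)
          omega
      · right
        rw [Function.iterate_succ_apply', ih, ih]
  rcases key n with h | h
  · have hcard : (f^[n] (∅ : Finset α)).card = Fintype.card α :=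
      le_antisymm (Finset.card_le_univ _) (hn.trans h)
    rw [Finset.eq_univ_of_card _ hcard]
    exact Finset.univ_subset_iff.mp (hf univ)
  · exact h

/-- counting via an equivalence to Fin n -/
lemma card_coe_filter {α : Type*} [Fintype α] [DecidableEq α] {n : ℕ} (e : α ≃ Fin n)
    (a c : ℕ) (hc : c ≤ n) :
    (univ.filter fun x => a ≤ (e x : ℕ) ∧ (e x : ℕ) < c).card = c - a := by
  rw [← Nat.card_Ico a c]
  apply Finset.card_bij (fun x _ => (e x : ℕ))
  · intro x hx
    simp only [mem_filter, mem_univ, true_and] at hx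
    simp [Finset.mem_Ico, hx.1, hx.2]
  · intro x hx y hy hxy
    exact e.injective (Fin.val_injective hxy)
  · intro b hb
    simp only [Finset.mem_Ico] at hb
    refine ⟨e.symm ⟨b, lt_of_lt_of_le hb.2 hc⟩, ?_, ?_⟩
    · simp [hb.1, hb.2]
    · simp

lemma div_eq_block {a l q : ℕ} (h1 : l * q ≤ a) (h2 : a < l * q + l) : a / l = q := by
  apply Nat.div_eq_of_lt_le
  · rwa [mul_comm]
  · rw [add_mul, one_mul, mul_comm]; omega

end Aux

section Step1
variable {D H : Type*} [Fintype D] [Fintype H] [DecidableEq D] [DecidableEq H]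
variable (M : Market D H) (eD : D ≃ Fin (Fintype.card D)) (eH : H ≃ Fin (Fintype.card H))
variable (l : ℕ)

lemma mem_hProps_iff (hrh : ∀ (h : H) (d : D), M.rankHD h d = (eD d : ℕ))
    (haccH : ∀ (h : H) (d : D), M.accH h d = true)
    (R : Finset (H × D)) (h : H) (d : D) :
    d ∈ hProps M (fun _ => l) R h ↔ (h, d) ∉ R ∧
      (univ.filter fun d' => (h, d') ∉ R ∧ (eD d' : ℕ) < (eD d : ℕ)).card < l := by
  simp only [hProps, topN, Finset.filter_filter, Finset.mem_filter, Finset.mem_univ, true_and,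
    haccH, hrh]

lemma mem_dKeeps_iff (hrd : ∀ (d : D) (h : H), M.rankDH d h = (eH h : ℕ))
    (haccD : ∀ (d : D) (h : H), M.accD d h = true)
    (R : Finset (H × D)) (d : D) (h : H) :
    h ∈ dKeeps M (fun _ => l) (fun _ => l) R d ↔ d ∈ hProps M (fun _ => l) R h ∧
      (univ.filter fun h' => d ∈ hProps M (fun _ => l) R h' ∧ (eH h' : ℕ) < (eH h : ℕ)).card < l := by
  simp only [dKeeps, topN, Finset.filter_filter, Finset.mem_filter, Finset.mem_univ, true_and,
    haccD, hrd]

set_option linter.unusedSectionVars false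

/-- Fact A: under the invariant, a hospital only proposes to doctors of its own block or better-blocked. -/
lemma hProps_block_le (hrh : ∀ (h : H) (d : D), M.rankHD h d = (eD d : ℕ))
    (haccH : ∀ (h : H) (d : D), M.accH h d = true) (hl : 1 ≤ l)
    {R : Finset (H × D)} (hR : ∀ p ∈ R, (eD p.2 : ℕ) / l < (eH p.1 : ℕ) / l)
    {h : H} {d : D} (hd : d ∈ hProps M (fun _ => l) R h) :
    (eD d : ℕ) / l ≤ (eH h : ℕ) / l := by
  rw [mem_hProps_iff M eD l hrh haccH] at hd
  by_contra hlt
  push_neg at hlt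
  have hsub : (univ.filter fun d' : D => l * ((eH h : ℕ) / l) ≤ (eD d' : ℕ) ∧ (eD d' : ℕ) < (eD d : ℕ)) ⊆
      (univ.filter fun d' => (h, d') ∉ R ∧ (eD d' : ℕ) < (eD d : ℕ)) := by
    intro x hx
    simp only [mem_filter, mem_univ, true_and] at hx ⊢
    refine ⟨fun hmem => ?_, hx.2⟩
    have h1 := hR _ hmem
    simp only at h1
    have h2 : (l * ((eH h : ℕ) / l)) / l ≤ (eD x : ℕ) / l := Nat.div_le_div_right hx.1
    rw [Nat.mul_div_cancel_left _ hl] at h2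
    omega
  have hcard := Finset.card_le_card hsub
  rw [card_coe_filter eD _ _ (le_of_lt (eD d).isLt)] at hcard
  have h3 : (eH h : ℕ) / l + 1 ≤ (eD d : ℕ) / l := hlt
  have h4 := Nat.mul_le_mul_left l h3
  rw [Nat.mul_add, mul_one] at h4
  have h5 : ((eD d : ℕ) / l) * l ≤ (eD d : ℕ) := Nat.div_mul_le_self _ _
  rw [mul_comm] at h5
  rcases hd with ⟨-, hd2⟩
  omega

/-- the invariant is preserved by `iStep`. -/
lemma iStep_sub (hrh : ∀ (h : H) (d : D), M.rankHD h d = (eD d : ℕ))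
    (hrd : ∀ (d : D) (h : H), M.rankDH d h = (eH h : ℕ))
    (haccH : ∀ (h : H) (d : D), M.accH h d = true)
    (haccD : ∀ (d : D) (h : H), M.accD d h = true) (hl : 1 ≤ l)
    {R : Finset (H × D)} (hR : ∀ p ∈ R, (eD p.2 : ℕ) / l < (eH p.1 : ℕ) / l) :
    ∀ p ∈ iStep M (fun _ => l) (fun _ => l) R, (eD p.2 : ℕ) / l < (eH p.1 : ℕ) / l := by
  intro p hp
  rw [iStep, Finset.mem_union] at hp
  rcases hp with hp | hp
  · exact hR p hp
  obtain ⟨h, d⟩ := p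
  simp only [mem_filter, mem_univ, true_and] at hp
  obtain ⟨hprop, hkeep⟩ := hp
  have hle := hProps_block_le M eD eH l hrh haccH hl hR hprop
  rcases lt_or_eq_of_le hle with h1 | h1
  · exact h1
  exfalso
  apply hkeep
  rw [mem_dKeeps_iff M eH l hrd haccD]
  refine ⟨hprop, ?_⟩
  have hsub : (univ.filter fun h' => d ∈ hProps M (fun _ => l) R h' ∧ (eH h' : ℕ) < (eH h : ℕ)) ⊆
      univ.filter fun h' : H => l * ((eH h : ℕ) / l) ≤ (eH h' : ℕ) ∧ (eH h' : ℕ) < (eH h : ℕ) := by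
    intro x hx
    simp only [mem_filter, mem_univ, true_and] at hx ⊢
    refine ⟨?_, hx.2⟩
    have hbx : (eD d : ℕ) / l ≤ (eH x : ℕ) / l := hProps_block_le M eD eH l hrh haccH hl hR hx.1
    have hbx2 : (eH x : ℕ) / l ≤ (eH h : ℕ) / l := Nat.div_le_div_right (le_of_lt hx.2)
    have heq : (eH x : ℕ) / l = (eH h : ℕ) / l := by omega
    have h5 : ((eH x : ℕ) / l) * l ≤ (eH x : ℕ) := Nat.div_mul_le_self _ _
    rw [mul_comm] at h5
    rw [← heq]
    exact h5
  have hcard := Finset.card_le_card hsub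
  rw [card_coe_filter eH _ _ (le_of_lt (eH h).isLt)] at hcard
  have hmod := Nat.mod_add_div (eH h : ℕ) l
  have hml : (eH h : ℕ) % l < l := Nat.mod_lt _ hl
  omega

lemma Rs_sub_fixed (hrh : ∀ (h : H) (d : D), M.rankHD h d = (eD d : ℕ))
    (hrd : ∀ (d : D) (h : H), M.rankDH d h = (eH h : ℕ))
    (haccH : ∀ (h : H) (d : D), M.accH h d = true)
    (haccD : ∀ (d : D) (h : H), M.accD d h = true) (hl : 1 ≤ l)
    {R : Finset (H × D)} (hfix : iStep M (fun _ => l) (fun _ => l) R = R)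
    (hR : ∀ p ∈ R, (eD p.2 : ℕ) / l < (eH p.1 : ℕ) / l) :
    ∀ (h : H) (d : D), (eD d : ℕ) / l < (eH h : ℕ) / l → (h, d) ∈ R := by
  suffices key : ∀ n, ∀ d : D, (eD d : ℕ) = n → ∀ m, ∀ h : H, (eH h : ℕ) = m →
      (eD d : ℕ) / l < (eH h : ℕ) / l → (h, d) ∈ R by
    intro h d hb; exact key _ d rfl _ h rfl hb
  intro n
  induction n using Nat.strong_induction_on with
  | _ n IHd =>
  intro d hd m
  induction m using Nat.strong_induction_on with
  | _ m IHh =>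
  intro h hh hb
  by_contra hnot
  have hprop : d ∈ hProps M (fun _ => l) R h := by
    rw [mem_hProps_iff M eD l hrh haccH]
    refine ⟨hnot, ?_⟩
    have hemp : (univ.filter fun d' => (h, d') ∉ R ∧ (eD d' : ℕ) < (eD d : ℕ)) = ∅ := by
      rw [Finset.eq_empty_iff_forall_notMem]
      intro x hx
      simp only [mem_filter, mem_univ, true_and] at hx
      rcases lt_or_ge ((eD x : ℕ) / l) ((eH h : ℕ) / l) with h2 | h2
      · exact hx.1 (IHd (eD x) (by omega) x rfl _ h rfl h2)
      · have h3 : (eD x : ℕ) / l ≤ (eD d : ℕ) / l := Nat.div_le_div_right (le_of_lt hx.2)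
        omega
    rw [hemp]
    simp; omega
  have hkeep : h ∉ dKeeps M (fun _ => l) (fun _ => l) R d := by
    rw [mem_dKeeps_iff M eH l hrd haccD]
    rintro ⟨-, hcard⟩
    have hsub : (univ.filter fun h' : H =>
          l * ((eD d : ℕ) / l) ≤ (eH h' : ℕ) ∧ (eH h' : ℕ) < l * ((eD d : ℕ) / l) + l)
        ⊆ univ.filter fun h' => d ∈ hProps M (fun _ => l) R h' ∧ (eH h' : ℕ) < (eH h : ℕ) := by
      intro x hx
      simp only [mem_filter, mem_univ, true_and] at hx ⊢
      have hbx : (eH x : ℕ) / l = (eD d : ℕ) / l := div_eq_block hx.1 hx.2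
      have hxlt : (eH x : ℕ) < (eH h : ℕ) := by
        by_contra hc
        push_neg at hc
        have := Nat.div_le_div_right (c := l) hc
        omega
      refine ⟨?_, hxlt⟩
      rw [mem_hProps_iff M eD l hrh haccH]
      constructor
      · intro hmem2
        have := hR _ hmem2
        simp only at this
        omega
      · have hsub2 : (univ.filter fun d' => (x, d') ∉ R ∧ (eD d' : ℕ) < (eD d : ℕ)) ⊆
            univ.filter fun d' : D => l * ((eD d : ℕ) / l) ≤ (eD d' : ℕ) ∧ (eD d' : ℕ) < (eD d : ℕ) := by
          intro y hy
          simp only [mem_filter, mem_univ, true_and] at hy ⊢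
          refine ⟨?_, hy.2⟩
          rcases lt_or_ge ((eD y : ℕ) / l) ((eH x : ℕ) / l) with h3 | h3
          · exact absurd (IHd (eD y) (by omega) y rfl _ x rfl h3) hy.1
          · have h4 : l * ((eD d : ℕ) / l) ≤ l * ((eD y : ℕ) / l) :=
              Nat.mul_le_mul_left l (by omega)
            have h5 : ((eD y : ℕ) / l) * l ≤ (eD y : ℕ) := Nat.div_mul_le_self _ _
            rw [mul_comm] at h5
            omega
        have h6 := Finset.card_le_card hsub2
        rw [card_coe_filter eD _ _ (le_of_lt (eD d).isLt)] at h6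
        have hmod := Nat.mod_add_div (eD d : ℕ) l
        have hml : (eD d : ℕ) % l < l := Nat.mod_lt _ hl
        omega
    have h7 := Finset.card_le_card hsub
    have hc2 : l * ((eD d : ℕ) / l) + l ≤ Fintype.card H := by
      have h8 : (eD d : ℕ) / l + 1 ≤ (eH h : ℕ) / l := hb
      have h9 := Nat.mul_le_mul_left l h8
      rw [Nat.mul_add, mul_one] at h9
      have h10 : ((eH h : ℕ) / l) * l ≤ (eH h : ℕ) := Nat.div_mul_le_self _ _
      rw [mul_comm] at h10
      have := (eH h).isLt
      omega
    rw [card_coe_filter eH _ _ hc2] at h7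
    omega
  have hmem : (h, d) ∈ iStep M (fun _ => l) (fun _ => l) R := by
    rw [iStep, Finset.mem_union]
    right
    simp only [mem_filter, mem_univ, true_and]
    exact ⟨hprop, hkeep⟩
  rw [hfix] at hmem
  exact hnot hmem

def Rs : Finset (H × D) := univ.filter fun p => (eD p.2 : ℕ) / l < (eH p.1 : ℕ) / l

lemma iRej_fixed_s11 : iStep M (fun _ => l) (fun _ => l) (iRej M (fun _ => l) (fun _ => l))
    = iRej M (fun _ => l) (fun _ => l) := by
  apply iter_fixed
  · intro s
    exact Finset.subset_union_left
  · exact le_of_eq (by simp [Fintype.card_prod, mul_comm])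

lemma iRej_sub (hrh : ∀ (h : H) (d : D), M.rankHD h d = (eD d : ℕ))
    (hrd : ∀ (d : D) (h : H), M.rankDH d h = (eH h : ℕ))
    (haccH : ∀ (h : H) (d : D), M.accH h d = true)
    (haccD : ∀ (d : D) (h : H), M.accD d h = true) (hl : 1 ≤ l) :
    ∀ p ∈ iRej M (fun _ => l) (fun _ => l), (eD p.2 : ℕ) / l < (eH p.1 : ℕ) / l := by
  rw [iRej]
  generalize Fintype.card D * Fintype.card H = n
  induction n with
  | zero => simp
  | succ n ih =>
    rw [Function.iterate_succ_apply']
    exact iStep_sub M eD eH l hrh hrd haccH haccD hl ih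

lemma iRej_eq (hrh : ∀ (h : H) (d : D), M.rankHD h d = (eD d : ℕ))
    (hrd : ∀ (d : D) (h : H), M.rankDH d h = (eH h : ℕ))
    (haccH : ∀ (h : H) (d : D), M.accH h d = true)
    (haccD : ∀ (d : D) (h : H), M.accD d h = true) (hl : 1 ≤ l) :
    iRej M (fun _ => l) (fun _ => l) = Rs eD eH l := by
  apply Finset.Subset.antisymm
  · intro p hp
    simp only [Rs, mem_filter, mem_univ, true_and]
    exact iRej_sub M eD eH l hrh hrd haccH haccD hl p hp
  · intro p hp
    simp only [Rs, mem_filter, mem_univ, true_and] at hp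
    exact Rs_sub_fixed M eD eH l hrh hrd haccH haccD hl
      (iRej_fixed_s11 M l) (iRej_sub M eD eH l hrh hrd haccH haccD hl) p.1 p.2 hp

lemma mem_hProps_Rs (hrh : ∀ (h : H) (d : D), M.rankHD h d = (eD d : ℕ))
    (haccH : ∀ (h : H) (d : D), M.accH h d = true) (hl : 1 ≤ l) {h : H} {d : D} :
    d ∈ hProps M (fun _ => l) (Rs eD eH l) h ↔ (eH h : ℕ) / l = (eD d : ℕ) / l := by
  have hRs : ∀ p ∈ Rs eD eH l, (eD p.2 : ℕ) / l < (eH p.1 : ℕ) / l := by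
    intro p hp
    simpa [Rs] using hp
  constructor
  · intro hdm
    have h1 := hProps_block_le M eD eH l hrh haccH hl hRs hdm
    rw [mem_hProps_iff M eD l hrh haccH] at hdm
    have h2 : ¬((eD d : ℕ) / l < (eH h : ℕ) / l) := by
      intro hc
      exact hdm.1 (by simp [Rs, hc])
    omega
  · intro hbeq
    rw [mem_hProps_iff M eD l hrh haccH]
    refine ⟨by simp [Rs]; omega, ?_⟩
    have hsub : (univ.filter fun d' => (h, d') ∉ Rs eD eH l ∧ (eD d' : ℕ) < (eD d : ℕ)) ⊆
        univ.filter fun d' : D => l * ((eD d : ℕ) / l) ≤ (eD d' : ℕ) ∧ (eD d' : ℕ) < (eD d : ℕ) := by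
      intro x hx
      simp only [Rs, mem_filter, mem_univ, true_and, not_lt] at hx ⊢
      refine ⟨?_, hx.2⟩
      have h1 : (eH h : ℕ) / l ≤ (eD x : ℕ) / l := by simpa using hx.1
      have h2 : l * ((eD d : ℕ) / l) ≤ l * ((eD x : ℕ) / l) := Nat.mul_le_mul_left l (by omega)
      have h3 : ((eD x : ℕ) / l) * l ≤ (eD x : ℕ) := Nat.div_mul_le_self _ _
      rw [mul_comm] at h3
      omega
    have h6 := Finset.card_le_card hsub
    rw [card_coe_filter eD _ _ (le_of_lt (eD d).isLt)] at h6
    have hmod := Nat.mod_add_div (eD d : ℕ) l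
    have hml : (eD d : ℕ) % l < l := Nat.mod_lt _ hl
    omega

lemma mem_dKeeps_Rs (hrh : ∀ (h : H) (d : D), M.rankHD h d = (eD d : ℕ))
    (hrd : ∀ (d : D) (h : H), M.rankDH d h = (eH h : ℕ))
    (haccH : ∀ (h : H) (d : D), M.accH h d = true)
    (haccD : ∀ (d : D) (h : H), M.accD d h = true) (hl : 1 ≤ l) {d : D} {h : H} :
    h ∈ dKeeps M (fun _ => l) (fun _ => l) (Rs eD eH l) d ↔ (eH h : ℕ) / l = (eD d : ℕ) / l := by
  rw [mem_dKeeps_iff M eH l hrd haccD]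
  constructor
  · rintro ⟨h1, -⟩
    exact (mem_hProps_Rs M eD eH l hrh haccH hl).mp h1
  · intro hbeq
    refine ⟨(mem_hProps_Rs M eD eH l hrh haccH hl).mpr hbeq, ?_⟩
    have hsub : (univ.filter fun h' => d ∈ hProps M (fun _ => l) (Rs eD eH l) h' ∧
          (eH h' : ℕ) < (eH h : ℕ)) ⊆
        univ.filter fun h' : H => l * ((eH h : ℕ) / l) ≤ (eH h' : ℕ) ∧ (eH h' : ℕ) < (eH h : ℕ) := by
      intro x hx
      simp only [mem_filter, mem_univ, true_and] at hx ⊢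
      refine ⟨?_, hx.2⟩
      have h1 := (mem_hProps_Rs M eD eH l hrh haccH hl).mp hx.1
      have h2 : l * ((eH h : ℕ) / l) ≤ l * ((eH x : ℕ) / l) := Nat.mul_le_mul_left l (by omega)
      have h3 : ((eH x : ℕ) / l) * l ≤ (eH x : ℕ) := Nat.div_mul_le_self _ _
      rw [mul_comm] at h3
      omega
    have h6 := Finset.card_le_card hsub
    rw [card_coe_filter eH _ _ (le_of_lt (eH h).isLt)] at h6
    have hmod := Nat.mod_add_div (eH h : ℕ) l
    have hml : (eH h : ℕ) % l < l := Nat.mod_lt _ hl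
    omega

def Vs : Finset (H × D) := univ.filter fun p => (eH p.1 : ℕ) / l = (eD p.2 : ℕ) / l

lemma interviews_eq (hrh : ∀ (h : H) (d : D), M.rankHD h d = (eD d : ℕ))
    (hrd : ∀ (d : D) (h : H), M.rankDH d h = (eH h : ℕ))
    (haccH : ∀ (h : H) (d : D), M.accH h d = true)
    (haccD : ∀ (d : D) (h : H), M.accD d h = true) (hl : 1 ≤ l) :
    interviews M (fun _ => l) (fun _ => l) = Vs eD eH l := by
  rw [interviews, iRej_eq M eD eH l hrh hrd haccH haccD hl]
  ext ⟨h, d⟩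
  simp only [Vs, mem_filter, mem_univ, true_and]
  rw [mem_hProps_Rs M eD eH l hrh haccH hl, mem_dKeeps_Rs M eD eH l hrh hrd haccH haccD hl]
  tauto

end Step1


section Step2
set_option linter.unusedSectionVars false
variable {D H : Type*} [Fintype D] [Fintype H] [DecidableEq D] [DecidableEq H]
variable (M : Market D H) (eD : D ≃ Fin (Fintype.card D)) (eH : H ≃ Fin (Fintype.card H))
variable (l : ℕ)

def Ss : Finset (D × H) :=
  univ.filter fun p => (eD p.1 : ℕ) / l = (eH p.2 : ℕ) / l ∧ (eH p.2 : ℕ) < (eD p.1 : ℕ)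

lemma mem_dProps_iff (hrd : ∀ (d : D) (h : H), M.rankDH d h = (eH h : ℕ))
    (V : Finset (H × D)) (S : Finset (D × H)) (d : D) (h : H) :
    h ∈ dProps M V S d ↔ ((h, d) ∈ V ∧ (d, h) ∉ S) ∧
      (univ.filter fun h' => ((h', d) ∈ V ∧ (d, h') ∉ S) ∧ (eH h' : ℕ) < (eH h : ℕ)).card < 1 := by
  simp only [dProps, topN, Finset.filter_filter, Finset.mem_filter, Finset.mem_univ, true_and, hrd]

lemma mem_hKeeps_iff (hrh : ∀ (h : H) (d : D), M.rankHD h d = (eD d : ℕ))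
    (V : Finset (H × D)) (S : Finset (D × H)) (h : H) (d : D) :
    d ∈ hKeeps M V S h ↔ h ∈ dProps M V S d ∧
      (univ.filter fun d' => h ∈ dProps M V S d' ∧ (eD d' : ℕ) < (eD d : ℕ)).card < 1 := by
  simp only [hKeeps, topN, Finset.filter_filter, Finset.mem_filter, Finset.mem_univ, true_and, hrh]

lemma mStep_sub (hrh : ∀ (h : H) (d : D), M.rankHD h d = (eD d : ℕ))
    (hrd : ∀ (d : D) (h : H), M.rankDH d h = (eH h : ℕ)) (hl : 1 ≤ l)
    {S : Finset (D × H)}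
    (hS : ∀ p ∈ S, (eD p.1 : ℕ) / l = (eH p.2 : ℕ) / l ∧ (eH p.2 : ℕ) < (eD p.1 : ℕ)) :
    ∀ p ∈ mStep M (Vs eD eH l) S,
      (eD p.1 : ℕ) / l = (eH p.2 : ℕ) / l ∧ (eH p.2 : ℕ) < (eD p.1 : ℕ) := by
  intro p hp
  rw [mStep, Finset.mem_union] at hp
  rcases hp with hp | hp
  · exact hS p hp
  obtain ⟨d, h⟩ := p
  show (eD d : ℕ) / l = (eH h : ℕ) / l ∧ (eH h : ℕ) < (eD d : ℕ)
  simp only [mem_filter, mem_univ, true_and] at hp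
  have hprop : h ∈ dProps M (Vs eD eH l) S d := hp.1
  have hkeep : d ∉ hKeeps M (Vs eD eH l) S h := hp.2
  have hprop' := hprop
  rw [mem_dProps_iff M eH hrd] at hprop'
  obtain ⟨⟨hV, hSm⟩, hno⟩ := hprop'
  have hb : (eH h : ℕ) / l = (eD d : ℕ) / l := by simpa [Vs] using hV
  refine ⟨hb.symm, ?_⟩
  by_contra hge
  push_neg at hge
  apply hkeep
  rw [mem_hKeeps_iff M eD hrh]
  refine ⟨hprop, ?_⟩
  have hemp : (univ.filter fun d' => h ∈ dProps M (Vs eD eH l) S d' ∧ (eD d' : ℕ) < (eD d : ℕ)) = ∅ := by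
    rw [Finset.eq_empty_iff_forall_notMem]
    intro x hx
    simp only [mem_filter, mem_univ, true_and] at hx
    obtain ⟨hx1, hx2⟩ := hx
    rw [mem_dProps_iff M eH hrd] at hx1
    obtain ⟨⟨hV', hS'⟩, hno'⟩ := hx1
    have hxH : (eD x : ℕ) < Fintype.card H := by
      have := (eH h).isLt
      omega
    have hval : (eH (eH.symm ⟨(eD x : ℕ), hxH⟩) : ℕ) = (eD x : ℕ) := by simp
    have hmem2 : eH.symm ⟨(eD x : ℕ), hxH⟩ ∈
        univ.filter fun h' => ((h', x) ∈ Vs eD eH l ∧ (x, h') ∉ S) ∧ (eH h' : ℕ) < (eH h : ℕ) := by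
      rw [mem_filter]
      refine ⟨mem_univ _, ⟨?_, ?_⟩, ?_⟩
      · simp only [Vs, mem_filter, mem_univ, true_and]
        rw [hval]
      · intro hmem
        have h2 : (eH (eH.symm ⟨(eD x : ℕ), hxH⟩) : ℕ) < (eD x : ℕ) := (hS _ hmem).2
        rw [hval] at h2
        exact absurd h2 (lt_irrefl _)
      · rw [hval]
        omega
    have := Finset.card_pos.mpr ⟨_, hmem2⟩
    omega
  rw [hemp]
  simp

lemma Ss_sub_fixed (hrh : ∀ (h : H) (d : D), M.rankHD h d = (eD d : ℕ))
    (hrd : ∀ (d : D) (h : H), M.rankDH d h = (eH h : ℕ)) (hl : 1 ≤ l)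
    {S : Finset (D × H)} (hfix : mStep M (Vs eD eH l) S = S)
    (hS : ∀ p ∈ S, (eD p.1 : ℕ) / l = (eH p.2 : ℕ) / l ∧ (eH p.2 : ℕ) < (eD p.1 : ℕ)) :
    ∀ (d : D) (h : H), (eD d : ℕ) / l = (eH h : ℕ) / l → (eH h : ℕ) < (eD d : ℕ) →
      (d, h) ∈ S := by
  suffices key : ∀ n, ∀ d : D, (eD d : ℕ) = n → ∀ m, ∀ h : H, (eH h : ℕ) = m →
      (eD d : ℕ) / l = (eH h : ℕ) / l → (eH h : ℕ) < (eD d : ℕ) → (d, h) ∈ S by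
    intro d h h1 h2; exact key _ d rfl _ h rfl h1 h2
  intro n
  induction n using Nat.strong_induction_on with
  | _ n IHd =>
  intro d hd m
  induction m using Nat.strong_induction_on with
  | _ m IHh =>
  intro h hh hbeq hblt
  by_contra hnot
  have hprop : h ∈ dProps M (Vs eD eH l) S d := by
    rw [mem_dProps_iff M eH hrd]
    refine ⟨⟨by simp only [Vs, mem_filter, mem_univ, true_and]; omega, hnot⟩, ?_⟩
    have hemp : (univ.filter fun h' => ((h', d) ∈ Vs eD eH l ∧ (d, h') ∉ S) ∧
        (eH h' : ℕ) < (eH h : ℕ)) = ∅ := by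
      rw [Finset.eq_empty_iff_forall_notMem]
      intro x hx
      simp only [Vs, mem_filter, mem_univ, true_and] at hx
      exact hx.1.2 (IHh (eH x) (by omega) x rfl (by omega) (by omega))
    rw [hemp]; simp
  have hkeep : d ∉ hKeeps M (Vs eD eH l) S h := by
    rw [mem_hKeeps_iff M eD hrh]
    rintro ⟨-, hcard⟩
    have hhD : (eH h : ℕ) < Fintype.card D := by
      have := (eD d).isLt
      omega
    have hval : (eD (eD.symm ⟨(eH h : ℕ), hhD⟩) : ℕ) = (eH h : ℕ) := by simp
    have hmem2 : eD.symm ⟨(eH h : ℕ), hhD⟩ ∈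
        univ.filter fun d' => h ∈ dProps M (Vs eD eH l) S d' ∧ (eD d' : ℕ) < (eD d : ℕ) := by
      rw [mem_filter]
      refine ⟨mem_univ _, ?_, by rw [hval]; omega⟩
      rw [mem_dProps_iff M eH hrd]
      refine ⟨⟨by simp only [Vs, mem_filter, mem_univ, true_and]; rw [hval], ?_⟩, ?_⟩
      · intro hmem
        have h2 : (eH h : ℕ) < (eD (eD.symm ⟨(eH h : ℕ), hhD⟩) : ℕ) := (hS _ hmem).2
        rw [hval] at h2
        exact absurd h2 (lt_irrefl _)
      · have hemp : (univ.filter fun h' => ((h', eD.symm ⟨(eH h : ℕ), hhD⟩) ∈ Vs eD eH l ∧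
            (eD.symm ⟨(eH h : ℕ), hhD⟩, h') ∉ S) ∧ (eH h' : ℕ) < (eH h : ℕ)) = ∅ := by
          rw [Finset.eq_empty_iff_forall_notMem]
          intro x hx
          simp only [Vs, mem_filter, mem_univ, true_and] at hx
          rw [hval] at hx
          refine hx.1.2 (IHd (eH h) (by omega) _ hval (eH x) x rfl (by rw [hval]; omega) (by rw [hval]; omega))
        rw [hemp]; simp
    have := Finset.card_pos.mpr ⟨_, hmem2⟩
    omega
  have hmem : (d, h) ∈ mStep M (Vs eD eH l) S := by
    rw [mStep, Finset.mem_union]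
    right
    simp only [mem_filter, mem_univ, true_and]
    exact ⟨hprop, hkeep⟩
  rw [hfix] at hmem
  exact hnot hmem

lemma mRej_fixed : mStep M (Vs eD eH l) (mRej M (Vs eD eH l)) = mRej M (Vs eD eH l) := by
  apply iter_fixed
  · intro s
    exact Finset.subset_union_left
  · exact le_of_eq (by simp [Fintype.card_prod])

lemma mRej_sub (hrh : ∀ (h : H) (d : D), M.rankHD h d = (eD d : ℕ))
    (hrd : ∀ (d : D) (h : H), M.rankDH d h = (eH h : ℕ)) (hl : 1 ≤ l) :
    ∀ p ∈ mRej M (Vs eD eH l),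
      (eD p.1 : ℕ) / l = (eH p.2 : ℕ) / l ∧ (eH p.2 : ℕ) < (eD p.1 : ℕ) := by
  rw [mRej]
  generalize Fintype.card D * Fintype.card H = n
  induction n with
  | zero => simp
  | succ n ih =>
    rw [Function.iterate_succ_apply']
    exact mStep_sub M eD eH l hrh hrd hl ih

lemma mRej_eq (hrh : ∀ (h : H) (d : D), M.rankHD h d = (eD d : ℕ))
    (hrd : ∀ (d : D) (h : H), M.rankDH d h = (eH h : ℕ)) (hl : 1 ≤ l) :
    mRej M (Vs eD eH l) = Ss eD eH l := by
  apply Finset.Subset.antisymm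
  · intro p hp
    simp only [Ss, mem_filter, mem_univ, true_and]
    exact mRej_sub M eD eH l hrh hrd hl p hp
  · intro p hp
    simp only [Ss, mem_filter, mem_univ, true_and] at hp
    exact Ss_sub_fixed M eD eH l hrh hrd hl (mRej_fixed M eD eH l)
      (mRej_sub M eD eH l hrh hrd hl) p.1 p.2 hp.1 hp.2

lemma mem_dProps_Ss (hrd : ∀ (d : D) (h : H), M.rankDH d h = (eH h : ℕ)) (hl : 1 ≤ l)
    {d : D} {h : H} :
    h ∈ dProps M (Vs eD eH l) (Ss eD eH l) d ↔ (eH h : ℕ) = (eD d : ℕ) := by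
  rw [mem_dProps_iff M eH hrd]
  constructor
  · rintro ⟨⟨hV, hS⟩, hno⟩
    have hb : (eH h : ℕ) / l = (eD d : ℕ) / l := by simpa [Vs] using hV
    have h1 : ¬((eD d : ℕ) / l = (eH h : ℕ) / l ∧ (eH h : ℕ) < (eD d : ℕ)) := by
      simpa [Ss] using hS
    have hge : (eD d : ℕ) ≤ (eH h : ℕ) := by
      rcases lt_or_ge ((eH h : ℕ)) ((eD d : ℕ)) with hc | hc
      · exact absurd ⟨hb.symm, hc⟩ h1
      · exact hc
    by_contra hne
    have hgt : (eD d : ℕ) < (eH h : ℕ) := by omega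
    have hdH : (eD d : ℕ) < Fintype.card H := lt_trans hgt (eH h).isLt
    have hval : (eH (eH.symm ⟨(eD d : ℕ), hdH⟩) : ℕ) = (eD d : ℕ) := by simp
    have hmem2 : eH.symm ⟨(eD d : ℕ), hdH⟩ ∈
        univ.filter fun h' => ((h', d) ∈ Vs eD eH l ∧ (d, h') ∉ Ss eD eH l) ∧
          (eH h' : ℕ) < (eH h : ℕ) := by
      rw [mem_filter]
      refine ⟨mem_univ _, ⟨?_, ?_⟩, by rw [hval]; omega⟩
      · simp only [Vs, mem_filter, mem_univ, true_and]
        rw [hval]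
      · simp only [Ss, mem_filter, mem_univ, true_and, not_and]
        intro
        rw [hval]
        omega
    have := Finset.card_pos.mpr ⟨_, hmem2⟩
    omega
  · intro he
    refine ⟨⟨by simp only [Vs, mem_filter, mem_univ, true_and]; rw [he],
      by simp only [Ss, mem_filter, mem_univ, true_and, not_and]; omega⟩, ?_⟩
    have hemp : (univ.filter fun h' => ((h', d) ∈ Vs eD eH l ∧ (d, h') ∉ Ss eD eH l) ∧
        (eH h' : ℕ) < (eH h : ℕ)) = ∅ := by
      rw [Finset.eq_empty_iff_forall_notMem]
      intro x hx
      simp only [Vs, Ss, mem_filter, mem_univ, true_and, not_and] at hx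
      exact (hx.1.2 (by omega)) (by omega)
    rw [hemp]; simp

lemma mem_hKeeps_Ss (hrh : ∀ (h : H) (d : D), M.rankHD h d = (eD d : ℕ))
    (hrd : ∀ (d : D) (h : H), M.rankDH d h = (eH h : ℕ)) (hl : 1 ≤ l)
    {h : H} {d : D} :
    d ∈ hKeeps M (Vs eD eH l) (Ss eD eH l) h ↔ (eH h : ℕ) = (eD d : ℕ) := by
  rw [mem_hKeeps_iff M eD hrh]
  constructor
  · rintro ⟨h1, -⟩
    exact (mem_dProps_Ss M eD eH l hrd hl).mp h1
  · intro he
    refine ⟨(mem_dProps_Ss M eD eH l hrd hl).mpr he, ?_⟩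
    have hemp : (univ.filter fun d' => h ∈ dProps M (Vs eD eH l) (Ss eD eH l) d' ∧
        (eD d' : ℕ) < (eD d : ℕ)) = ∅ := by
      rw [Finset.eq_empty_iff_forall_notMem]
      intro x hx
      simp only [mem_filter, mem_univ, true_and] at hx
      have := (mem_dProps_Ss M eD eH l hrd hl).mp hx.1
      omega
    rw [hemp]; simp

lemma finalMatch_eq (hrh : ∀ (h : H) (d : D), M.rankHD h d = (eD d : ℕ))
    (hrd : ∀ (d : D) (h : H), M.rankDH d h = (eH h : ℕ)) (hl : 1 ≤ l) :
    finalMatch M (Vs eD eH l) = univ.filter fun p : D × H => (eD p.1 : ℕ) = (eH p.2 : ℕ) := by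
  rw [finalMatch, mRej_eq M eD eH l hrh hrd hl]
  ext ⟨d, h⟩
  simp only [mem_filter, mem_univ, true_and]
  rw [mem_dProps_Ss M eD eH l hrd hl, mem_hKeeps_Ss M eD eH l hrh hrd hl]
  constructor
  · rintro ⟨a, -⟩
    exact a.symm
  · intro a
    exact ⟨a.symm, a.symm⟩

end Step2

variable {D H : Type*} [Fintype D] [Fintype H] [DecidableEq D] [DecidableEq H]

/-- Under common preferences, a homogeneous arrangement `(l,k)` with
`l = k ≤ min {|D|, |H|}` is adequate: the `(l,l)`-matching matches the `t`-th best
doctor with the `t`-th best hospital for every `t`, and this is the unique stable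
matching. -/
theorem equal_homogeneous_adequate
    (M : Market D H)
    (eD : D ≃ Fin (Fintype.card D)) (eH : H ≃ Fin (Fintype.card H))
    (hrd : ∀ (d : D) (h : H), M.rankDH d h = (eH h : ℕ))
    (hrh : ∀ (h : H) (d : D), M.rankHD h d = (eD d : ℕ))
    (hacc : ∀ (d : D) (h : H), M.accD d h ∧ M.accH h d)
    (l : ℕ) (hl : 1 ≤ l) (hlmin : l ≤ min (Fintype.card D) (Fintype.card H)) :
    Adequate M (fun _ => l) (fun _ => l) ∧
    (∀ (i : Fin (Fintype.card D)) (j : Fin (Fintype.card H)), (i : ℕ) = (j : ℕ) →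
      (eD.symm i, eH.symm j) ∈ ikMatching M (fun _ => l) (fun _ => l)) ∧
    (∀ μ : Finset (D × H), IsMatching μ → Stable M μ →
      μ = ikMatching M (fun _ => l) (fun _ => l)) := by
  have haccD : ∀ (d : D) (h : H), M.accD d h = true := fun d h => (hacc d h).1
  have haccH : ∀ (h : H) (d : D), M.accH h d = true := fun h d => (hacc d h).2
  have hik : ikMatching M (fun _ => l) (fun _ => l) =
      univ.filter fun p : D × H => (eD p.1 : ℕ) = (eH p.2 : ℕ) := by
    rw [ikMatching, interviews_eq M eD eH l hrh hrd haccH haccD hl,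
      finalMatch_eq M eD eH l hrh hrd hl]
  refine ⟨?_, ?_, ?_⟩
  · -- Adequate
    show ∀ d h, ¬ Blocks M (ikMatching M (fun _ => l) (fun _ => l)) d h
    intro d h hb
    have hb' : M.accD d h ∧ M.accH h d ∧ (d, h) ∉ ikMatching M (fun _ => l) (fun _ => l) ∧
        (∀ h', (d, h') ∈ ikMatching M (fun _ => l) (fun _ => l) →
          M.rankDH d h < M.rankDH d h') ∧
        (∀ d', (d', h) ∈ ikMatching M (fun _ => l) (fun _ => l) →
          M.rankHD h d < M.rankHD h d') := hb
    obtain ⟨-, -, -, h4, h5⟩ := hb'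
    rw [hik] at h4 h5
    rcases lt_or_ge ((eD d : ℕ)) (Fintype.card H) with hc | hc
    · have hm1 : (d, eH.symm ⟨(eD d : ℕ), hc⟩) ∈
          univ.filter fun p : D × H => (eD p.1 : ℕ) = (eH p.2 : ℕ) := by simp
      have h6 := h4 _ hm1
      rw [hrd, hrd] at h6
      simp only [Equiv.apply_symm_apply] at h6
      have hD2 : (eH h : ℕ) < Fintype.card D := by
        have := (eD d).isLt
        omega
      have hm2 : (eD.symm ⟨(eH h : ℕ), hD2⟩, h) ∈
          univ.filter fun p : D × H => (eD p.1 : ℕ) = (eH p.2 : ℕ) := by simp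
      have h7 := h5 _ hm2
      rw [hrh, hrh] at h7
      simp only [Equiv.apply_symm_apply] at h7
      omega
    · have hD2 : (eH h : ℕ) < Fintype.card D := by
        have := (eH h).isLt
        have := (eD d).isLt
        omega
      have hm2 : (eD.symm ⟨(eH h : ℕ), hD2⟩, h) ∈
          univ.filter fun p : D × H => (eD p.1 : ℕ) = (eH p.2 : ℕ) := by simp
      have h7 := h5 _ hm2
      rw [hrh, hrh] at h7
      simp only [Equiv.apply_symm_apply] at h7
      have := (eH h).isLt
      omega
  · -- the assortative pairs are matched
    intro i j hij
    rw [hik]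
    simp only [mem_filter, mem_univ, true_and, Equiv.apply_symm_apply]
    exact hij
  · -- uniqueness
    intro μ hμ hst
    have hμ1 : ∀ d h h', (d, h) ∈ μ → (d, h') ∈ μ → h = h' := hμ.1
    have hμ2 : ∀ d d' h, (d, h) ∈ μ → (d', h) ∈ μ → d = d' := hμ.2
    have hst' : ∀ d h, ¬ Blocks M μ d h := hst
    rw [hik]
    have key : ∀ n : ℕ, ∀ (d : D) (h : H), (eD d : ℕ) = n → (eH h : ℕ) = n → (d, h) ∈ μ := by
      intro n
      induction n using Nat.strong_induction_on with
      | _ n IH =>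
      intro d h hd hh
      by_contra hnot
      refine hst' d h ⟨(hacc d h).1, (hacc d h).2, hnot, ?_, ?_⟩
      · intro h' hm'
        rw [hrd, hrd]
        rcases lt_trichotomy ((eH h' : ℕ)) n with h1 | h1 | h1
        · have hlt : (eH h' : ℕ) < Fintype.card D := by
            have := (eD d).isLt
            omega
          have hm2 := IH _ h1 (eD.symm ⟨(eH h' : ℕ), hlt⟩) h' (by simp) rfl
          have heq := hμ2 _ _ _ hm2 hm'
          have h2 : (eD (eD.symm ⟨(eH h' : ℕ), hlt⟩) : ℕ) = (eD d : ℕ) := by rw [heq]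
          simp only [Equiv.apply_symm_apply] at h2
          omega
        · have heq : h' = h := eH.injective (Fin.val_injective (by omega))
          exact absurd (heq ▸ hm') hnot
        · omega
      · intro d' hm'
        rw [hrh, hrh]
        rcases lt_trichotomy ((eD d' : ℕ)) n with h1 | h1 | h1
        · have hlt : (eD d' : ℕ) < Fintype.card H := by
            have := (eH h).isLt
            omega
          have hm2 := IH _ h1 d' (eH.symm ⟨(eD d' : ℕ), hlt⟩) rfl (by simp)
          have heq := hμ1 _ _ _ hm2 hm'
          have h2 : (eH (eH.symm ⟨(eD d' : ℕ), hlt⟩) : ℕ) = (eH h : ℕ) := by rw [heq]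
          simp only [Equiv.apply_symm_apply] at h2
          omega
        · have heq : d' = d := eD.injective (Fin.val_injective (by omega))
          exact absurd (heq ▸ hm') hnot
        · omega
    ext ⟨d, h⟩
    simp only [mem_filter, mem_univ, true_and]
    constructor
    · intro hm
      by_contra hne
      rcases lt_or_ge ((eD d : ℕ)) (Fintype.card H) with hc | hc
      · have hm1 := key (eD d) d (eH.symm ⟨(eD d : ℕ), hc⟩) rfl (by simp)
        have heq := hμ1 _ _ _ hm hm1
        apply hne
        rw [heq]
        simp
      · have hD2 : (eH h : ℕ) < Fintype.card D := by
          have := (eH h).isLt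
          have := (eD d).isLt
          omega
        have hm1 := key (eH h) (eD.symm ⟨(eH h : ℕ), hD2⟩) h (by simp) rfl
        have heq := hμ2 _ _ _ hm hm1
        apply hne
        rw [heq]
        simp
    · intro he
      exact key (eD d) d h rfl he.symm
end
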